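/- arXiv:2212.00976 — 6 statements merged into one kernel-verified Lean document; each statement's English description precedes it below -/
import Mathlib

section
/- Let $B_0 \subset B \subset B_1$ be Banach spaces with continuous linear embeddings, where $B_0$ and $B_1$ are reflexive and the embedding $B_0 \hookrightarrow B$ is compact. Let $T>0$, $p \in (1,\infty)$ and $\alpha \in (0,1)$. Then every sequence $(g_n)$ of measurable functions $g_n : [0,T] \to B_0$ satisfying $\sup_n \int_0^T \|g_n(t)\|_{B_0}^p\,dt < \infty$ and $\sup_n \int_0^T\int_0^T \frac{\|g_n(t)-g_n(s)\|_{B_1}^p}{|t-s|^{1+\alpha p}}\,ds\,dt < \infty$ has a subsequence that converges in $L^p(0,T;B)$, i.e. the space $L^p(0,T;B_0) \cap W^{\alpha,p}(0,T;B_1)$ is compactly embedded in $L^p(0,T;B)$. -/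
open MeasureTheory Filter Topology Set
open scoped ENNReal NNReal

/-- Hölder/Jensen: `(∫⁻ F)^p ≤ (μ univ)^(p-1) * ∫⁻ F^p`. -/
lemma FG_lintegral_rpow_le {X : Type*} [MeasurableSpace X] (μ : Measure X) {F : X → ℝ≥0∞}
    (hF : AEMeasurable F μ) {p : ℝ} (hp : 1 < p) :
    (∫⁻ x, F x ∂μ) ^ p ≤ (μ Set.univ) ^ (p - 1) * ∫⁻ x, F x ^ p ∂μ := by
  have hp0 : (0:ℝ) < p := lt_trans one_pos hp
  have hc : p.HolderConjugate p.conjExponent := Real.HolderConjugate.conjExponent hp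
  have h := ENNReal.lintegral_mul_le_Lp_mul_Lq μ hc hF (aemeasurable_const (b := (1:ℝ≥0∞)))
  simp only [Pi.mul_apply, mul_one, ENNReal.one_rpow, lintegral_one] at h
  have h2 := ENNReal.rpow_le_rpow h hp0.le
  rw [ENNReal.mul_rpow_of_nonneg _ _ hp0.le, ← ENNReal.rpow_mul, ← ENNReal.rpow_mul,
    one_div, inv_mul_cancel₀ (ne_of_gt hp0), ENNReal.rpow_one] at h2
  have : 1 / p.conjExponent * p = p - 1 := by
    rw [Real.conjExponent]; field_simp
  rw [this] at h2
  exact h2.trans_eq (mul_comm _ _)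


lemma FG_const_arith {L : ℝ} (hL : 0 < L) (p : ℝ) :
    (ENNReal.ofReal L⁻¹) ^ p * (ENNReal.ofReal L) ^ (p-1) = (ENNReal.ofReal L)⁻¹ := by
  have h0 : ENNReal.ofReal L ≠ 0 := (ENNReal.ofReal_pos.2 hL).ne'
  have ht : ENNReal.ofReal L ≠ ⊤ := ENNReal.ofReal_ne_top
  rw [ENNReal.ofReal_inv_of_pos hL, ENNReal.inv_rpow, ← ENNReal.rpow_neg,
    ← ENNReal.rpow_add _ _ h0 ht]
  have he : -p + (p - 1) = -1 := by ring
  rw [he, ENNReal.rpow_neg_one]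
/-- Jensen: `‖avg‖₊^p ≤ (b-a)⁻¹ ∫⁻ ‖ψ‖^p`. -/
lemma FG_avg_pow_le {E : Type*} [NormedAddCommGroup E] [NormedSpace ℝ E] [CompleteSpace E]
    {a b : ℝ} (hab : a < b) {ψ : ℝ → E}
    (hm : AEStronglyMeasurable ψ (volume.restrict (Ioc a b)))
    {p : ℝ} (hp : 1 < p) :
    (‖(b - a)⁻¹ • ∫ t in Ioc a b, ψ t‖₊ : ℝ≥0∞) ^ p
      ≤ (ENNReal.ofReal (b - a))⁻¹ * ∫⁻ t in Ioc a b, (‖ψ t‖₊ : ℝ≥0∞) ^ p := by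
  have hL : (0:ℝ) < b - a := sub_pos.2 hab
  have hp0 : (0:ℝ) < p := lt_trans one_pos hp
  have c1 : (‖(b - a)⁻¹ • ∫ t in Ioc a b, ψ t‖₊ : ℝ≥0∞)
      ≤ ENNReal.ofReal (b-a)⁻¹ * ∫⁻ t in Ioc a b, (‖ψ t‖₊ : ℝ≥0∞) := by
    rw [nnnorm_smul, ENNReal.coe_mul, ← enorm_eq_nnnorm, Real.enorm_eq_ofReal (inv_nonneg.2 hL.le)]
    exact mul_le_mul_right (enorm_integral_le_lintegral_enorm _) _
  calc (‖(b - a)⁻¹ • ∫ t in Ioc a b, ψ t‖₊ : ℝ≥0∞) ^ p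
      ≤ (ENNReal.ofReal (b-a)⁻¹ * ∫⁻ t in Ioc a b, (‖ψ t‖₊ : ℝ≥0∞)) ^ p :=
        ENNReal.rpow_le_rpow c1 hp0.le
    _ = (ENNReal.ofReal (b-a)⁻¹) ^ p * (∫⁻ t in Ioc a b, (‖ψ t‖₊ : ℝ≥0∞)) ^ p :=
        ENNReal.mul_rpow_of_nonneg _ _ hp0.le
    _ ≤ (ENNReal.ofReal (b-a)⁻¹) ^ p * ((volume.restrict (Ioc a b)) Set.univ ^ (p-1)
          * ∫⁻ t in Ioc a b, (‖ψ t‖₊ : ℝ≥0∞) ^ p) :=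
        mul_le_mul_right (FG_lintegral_rpow_le _ hm.enorm hp) _
    _ = (ENNReal.ofReal (b - a))⁻¹ * ∫⁻ t in Ioc a b, (‖ψ t‖₊ : ℝ≥0∞) ^ p := by
        rw [Measure.restrict_apply_univ, Real.volume_Ioc, ← mul_assoc, FG_const_arith hL]

/-- Key fractional estimate on one interval. -/
lemma FG_piece_est {E : Type*} [NormedAddCommGroup E] [NormedSpace ℝ E] [CompleteSpace E]
    {a b : ℝ} (hab : a < b) {ψ : ℝ → E}
    (hm : AEStronglyMeasurable ψ (volume.restrict (Ioc a b)))
    (hi : IntegrableOn ψ (Ioc a b))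
    {p β : ℝ} (hp : 1 < p) (hβ : 0 < β) :
    (∫⁻ t in Ioc a b, (‖ψ t - (b-a)⁻¹ • ∫ u in Ioc a b, ψ u‖₊ : ℝ≥0∞) ^ p)
      ≤ ENNReal.ofReal ((b-a) ^ β) *
        ∫⁻ t in Ioc a b, ∫⁻ u in Ioc a b,
          (‖ψ t - ψ u‖₊ : ℝ≥0∞) ^ p / ENNReal.ofReal (|t - u| ^ (1+β)) := by
  have hL : (0:ℝ) < b - a := sub_pos.2 hab
  have hp0 : (0:ℝ) < p := lt_trans one_pos hp
  have hμ : (volume.restrict (Ioc a b)) Set.univ = ENNReal.ofReal (b - a) := by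
    rw [Measure.restrict_apply_univ, Real.volume_Ioc]
  -- step 1: rewrite difference with the average
  have step1 : ∀ t : ℝ, ψ t - (b-a)⁻¹ • ∫ u in Ioc a b, ψ u
      = (b-a)⁻¹ • ∫ u in Ioc a b, (ψ t - ψ u) := by
    intro t
    have hconst : IntegrableOn (fun _ : ℝ => ψ t) (Ioc a b) := by
      refine integrableOn_const ?_
      rw [Real.volume_Ioc]; exact ENNReal.ofReal_ne_top
    rw [integral_sub hconst hi, integral_const, measureReal_def, hμ, ENNReal.toReal_ofReal hL.le,
      smul_sub, smul_smul, inv_mul_cancel₀ hL.ne', one_smul]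
  -- step 2: pointwise estimate
  have key : ∀ t ∈ Ioc a b, (‖ψ t - (b-a)⁻¹ • ∫ u in Ioc a b, ψ u‖₊ : ℝ≥0∞) ^ p
      ≤ ENNReal.ofReal ((b-a) ^ β) *
          ∫⁻ u in Ioc a b, (‖ψ t - ψ u‖₊ : ℝ≥0∞) ^ p / ENNReal.ofReal (|t - u| ^ (1+β)) := by
    intro t ht
    have hmd : AEMeasurable (fun u => (‖ψ t - ψ u‖₊ : ℝ≥0∞)) (volume.restrict (Ioc a b)) :=
      (aestronglyMeasurable_const.sub hm).enorm
    have c1 : (‖ψ t - (b-a)⁻¹ • ∫ u in Ioc a b, ψ u‖₊ : ℝ≥0∞)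
        ≤ ENNReal.ofReal (b-a)⁻¹ * ∫⁻ u in Ioc a b, (‖ψ t - ψ u‖₊ : ℝ≥0∞) := by
      rw [step1 t, nnnorm_smul, ENNReal.coe_mul, ← enorm_eq_nnnorm, Real.enorm_eq_ofReal (inv_nonneg.2 hL.le)]
      exact mul_le_mul_right (enorm_integral_le_lintegral_enorm _) _
    have c2 : (∫⁻ u in Ioc a b, (‖ψ t - ψ u‖₊ : ℝ≥0∞)) ^ p
        ≤ ENNReal.ofReal (b-a) ^ (p-1) * ∫⁻ u in Ioc a b, (‖ψ t - ψ u‖₊ : ℝ≥0∞) ^ p := by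
      have := FG_lintegral_rpow_le (volume.restrict (Ioc a b)) hmd hp
      rwa [hμ] at this
    have c3 : (∫⁻ u in Ioc a b, (‖ψ t - ψ u‖₊ : ℝ≥0∞) ^ p)
        ≤ ENNReal.ofReal ((b-a) ^ (1+β)) *
          ∫⁻ u in Ioc a b, (‖ψ t - ψ u‖₊ : ℝ≥0∞) ^ p / ENNReal.ofReal (|t - u| ^ (1+β)) := by
      rw [← lintegral_const_mul' _ _ ENNReal.ofReal_ne_top]
      apply lintegral_mono_ae ((ae_restrict_iff' measurableSet_Ioc).2 (Eventually.of_forall ?_))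
      intro u hu
      rcases eq_or_ne t u with rfl | htu
      · simp [ENNReal.zero_rpow_of_pos hp0]
      · have habs : 0 < |t - u| := abs_pos.2 (sub_ne_zero.2 htu)
        have hw0 : ENNReal.ofReal (|t - u| ^ (1+β)) ≠ 0 :=
          (ENNReal.ofReal_pos.2 (Real.rpow_pos_of_pos habs _)).ne'
        have hwt : ENNReal.ofReal (|t - u| ^ (1+β)) ≠ ⊤ := ENNReal.ofReal_ne_top
        have hwle : ENNReal.ofReal (|t - u| ^ (1+β)) ≤ ENNReal.ofReal ((b-a) ^ (1+β)) := by
          apply ENNReal.ofReal_le_ofReal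
          apply Real.rpow_le_rpow (abs_nonneg _) _ (by positivity)
          rw [abs_sub_le_iff]
          constructor <;> [skip; skip] <;>
            · obtain ⟨h1, h2⟩ := ht; obtain ⟨h3, h4⟩ := hu; linarith
        calc (‖ψ t - ψ u‖₊ : ℝ≥0∞) ^ p
            = (‖ψ t - ψ u‖₊ : ℝ≥0∞) ^ p / ENNReal.ofReal (|t - u| ^ (1+β))
              * ENNReal.ofReal (|t - u| ^ (1+β)) := (ENNReal.div_mul_cancel hw0 hwt).symm
          _ ≤ (‖ψ t - ψ u‖₊ : ℝ≥0∞) ^ p / ENNReal.ofReal (|t - u| ^ (1+β))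
              * ENNReal.ofReal ((b-a) ^ (1+β)) := mul_le_mul_right hwle _
          _ = ENNReal.ofReal ((b-a) ^ (1+β)) *
              ((‖ψ t - ψ u‖₊ : ℝ≥0∞) ^ p / ENNReal.ofReal (|t - u| ^ (1+β))) := mul_comm _ _
    calc (‖ψ t - (b-a)⁻¹ • ∫ u in Ioc a b, ψ u‖₊ : ℝ≥0∞) ^ p
        ≤ (ENNReal.ofReal (b-a)⁻¹ * ∫⁻ u in Ioc a b, (‖ψ t - ψ u‖₊ : ℝ≥0∞)) ^ p :=
          ENNReal.rpow_le_rpow c1 hp0.le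
      _ = ENNReal.ofReal (b-a)⁻¹ ^ p * (∫⁻ u in Ioc a b, (‖ψ t - ψ u‖₊ : ℝ≥0∞)) ^ p :=
          ENNReal.mul_rpow_of_nonneg _ _ hp0.le
      _ ≤ ENNReal.ofReal (b-a)⁻¹ ^ p * (ENNReal.ofReal (b-a) ^ (p-1) *
            (ENNReal.ofReal ((b-a) ^ (1+β)) *
            ∫⁻ u in Ioc a b, (‖ψ t - ψ u‖₊ : ℝ≥0∞) ^ p / ENNReal.ofReal (|t - u| ^ (1+β)))) := by
          exact mul_le_mul_right (c2.trans (mul_le_mul_right c3 _)) _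
      _ = ENNReal.ofReal ((b-a) ^ β) *
            ∫⁻ u in Ioc a b, (‖ψ t - ψ u‖₊ : ℝ≥0∞) ^ p / ENNReal.ofReal (|t - u| ^ (1+β)) := by
          rw [← mul_assoc, ← mul_assoc, FG_const_arith hL]
          congr 1
          rw [Real.rpow_add hL, Real.rpow_one, ENNReal.ofReal_mul hL.le, ← mul_assoc,
            ENNReal.inv_mul_cancel (ENNReal.ofReal_pos.2 hL).ne' ENNReal.ofReal_ne_top, one_mul]
  -- step 3: integrate
  calc (∫⁻ t in Ioc a b, (‖ψ t - (b-a)⁻¹ • ∫ u in Ioc a b, ψ u‖₊ : ℝ≥0∞) ^ p)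
      ≤ ∫⁻ t in Ioc a b, ENNReal.ofReal ((b-a) ^ β) *
          ∫⁻ u in Ioc a b, (‖ψ t - ψ u‖₊ : ℝ≥0∞) ^ p / ENNReal.ofReal (|t - u| ^ (1+β)) :=
        lintegral_mono_ae ((ae_restrict_iff' measurableSet_Ioc).2 (Eventually.of_forall key))
    _ = ENNReal.ofReal ((b-a) ^ β) * ∫⁻ t in Ioc a b, ∫⁻ u in Ioc a b,
          (‖ψ t - ψ u‖₊ : ℝ≥0∞) ^ p / ENNReal.ofReal (|t - u| ^ (1+β)) :=
        lintegral_const_mul' _ _ ENNReal.ofReal_ne_top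


/-- Ehrling-type lemma from compactness of `i0` and injectivity of `i1`. -/
lemma FG_ehrling {B0 B B1 : Type*}
    [NormedAddCommGroup B0] [NormedSpace ℝ B0]
    [NormedAddCommGroup B] [NormedSpace ℝ B]
    [NormedAddCommGroup B1] [NormedSpace ℝ B1]
    (i0 : B0 →L[ℝ] B) (i1 : B →L[ℝ] B1) (hi1 : Function.Injective i1)
    (hcompact : ∀ s : Set B0, Bornology.IsBounded s → IsCompact (closure (⇑i0 '' s)))
    {ε : ℝ} (hε : 0 < ε) :
    ∃ C : ℝ, 0 ≤ C ∧ ∀ x : B0, ‖i0 x‖ ≤ ε * ‖x‖ + C * ‖i1 (i0 x)‖ := by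
  suffices h : ∃ C : ℝ, ∀ x : B0, ‖i0 x‖ ≤ ε * ‖x‖ + C * ‖i1 (i0 x)‖ by
    obtain ⟨C, hC⟩ := h
    refine ⟨max C 0, le_max_right _ _, fun x => (hC x).trans ?_⟩
    have : C * ‖i1 (i0 x)‖ ≤ max C 0 * ‖i1 (i0 x)‖ :=
      mul_le_mul_of_nonneg_right (le_max_left _ _) (norm_nonneg _)
    linarith
  by_contra h
  push_neg at h
  choose x hx using fun n : ℕ => h n
  have hxne : ∀ n, x n ≠ 0 := by
    intro n hn
    have := hx n
    rw [hn] at this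
    simp at this
  set y : ℕ → B0 := fun n => ‖x n‖⁻¹ • x n with hy
  have hny : ∀ n, ‖y n‖ = 1 := by
    intro n
    rw [hy]
    simp only [norm_smul, norm_inv, norm_norm]
    rw [inv_mul_cancel₀ (norm_ne_zero_iff.2 (hxne n))]
  have hyineq : ∀ n : ℕ, ε + n * ‖i1 (i0 (y n))‖ < ‖i0 (y n)‖ := by
    intro n
    have hxn : ‖x n‖ ≠ 0 := norm_ne_zero_iff.2 (hxne n)
    have hpos : 0 < ‖x n‖⁻¹ := inv_pos.2 (norm_pos_iff.2 (hxne n))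
    have e0 : ‖i0 (y n)‖ = ‖x n‖⁻¹ * ‖i0 (x n)‖ := by
      rw [hy]; simp only [_root_.map_smul, norm_smul, norm_inv, norm_norm]
    have e1 : ‖i1 (i0 (y n))‖ = ‖x n‖⁻¹ * ‖i1 (i0 (x n))‖ := by
      rw [hy]; simp only [_root_.map_smul, norm_smul, norm_inv, norm_norm]
    rw [e0, e1]
    have h2 := mul_lt_mul_of_pos_left (hx n) hpos
    rw [mul_add] at h2
    have e2 : ‖x n‖⁻¹ * (ε * ‖x n‖) = ε := by field_simp
    rw [e2] at h2
    ring_nf at h2 ⊢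
    linarith
  -- `i1 (i0 (y n)) → 0`
  have htend : Tendsto (fun n => ‖i1 (i0 (y n))‖) atTop (𝓝 0) := by
    apply squeeze_zero' (Eventually.of_forall fun n => norm_nonneg _)
      (g := fun n : ℕ => ‖i0‖ * (n:ℝ)⁻¹)
    · filter_upwards [eventually_ge_atTop 1] with n hn
      have h1 := hyineq n
      have h2 : ‖i0 (y n)‖ ≤ ‖i0‖ := by
        calc ‖i0 (y n)‖ ≤ ‖i0‖ * ‖y n‖ := i0.le_opNorm _
          _ = ‖i0‖ := by rw [hny n, mul_one]
      have h3 : (n:ℝ) * ‖i1 (i0 (y n))‖ ≤ ‖i0‖ := by linarith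
      have hn' : (0:ℝ) < n := by exact_mod_cast hn
      rw [mul_comm] at h3
      calc ‖i1 (i0 (y n))‖ ≤ ‖i0‖ / n := (le_div_iff₀ hn').2 h3
        _ = ‖i0‖ * (n:ℝ)⁻¹ := by ring
    · have hinv : Tendsto (fun n : ℕ => (n:ℝ)⁻¹) atTop (𝓝 0) :=
        tendsto_inv_atTop_zero.comp tendsto_natCast_atTop_atTop
      have h7 := hinv.const_mul (‖i0‖)
      rw [mul_zero] at h7
      exact h7
  -- compactness: subsequence of `i0 (y n)` converges
  have hbd : Bornology.IsBounded (Set.range y) := by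
    apply isBounded_iff_forall_norm_le.2 ⟨1, ?_⟩
    rintro z ⟨n, rfl⟩
    exact (hny n).le
  have hK := hcompact _ hbd
  have hmem : ∀ n, i0 (y n) ∈ closure (⇑i0 '' Set.range y) :=
    fun n => subset_closure ⟨y n, ⟨n, rfl⟩, rfl⟩
  obtain ⟨z, -, φ, hφ, hz⟩ := hK.isSeqCompact hmem
  have hz1 : Tendsto (fun k => i1 (i0 (y (φ k)))) atTop (𝓝 (i1 z)) :=
    (i1.continuous.tendsto z).comp hz
  have hz0 : i1 z = 0 := by
    have h4 : Tendsto (fun k => ‖i1 (i0 (y (φ k)))‖) atTop (𝓝 0) :=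
      htend.comp hφ.tendsto_atTop
    have h0 : Tendsto (fun k => i1 (i0 (y (φ k)))) atTop (𝓝 0) := by
      rw [tendsto_zero_iff_norm_tendsto_zero]; exact h4
    exact tendsto_nhds_unique hz1 h0
  have hzz : z = 0 := hi1 (by rw [hz0, map_zero])
  have hfin : ε ≤ ‖z‖ := by
    have h1 : Tendsto (fun k => ‖i0 (y (φ k))‖) atTop (𝓝 ‖z‖) :=
      (continuous_norm.tendsto z).comp hz
    apply le_of_tendsto_of_tendsto' tendsto_const_nhds h1
    intro k
    have h5 := hyineq (φ k)
    have h6 : (0:ℝ) ≤ (φ k : ℝ) * ‖i1 (i0 (y (φ k)))‖ :=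
      mul_nonneg (Nat.cast_nonneg _) (norm_nonneg _)
    linarith
  rw [hzz, norm_zero] at hfin
  linarith

lemma FG_tile' {c : ℝ} (hc : 0 < c) (k : ℕ) :
    (⋃ j ∈ Finset.range k, Ioc ((j:ℝ)*c) (((j:ℝ)+1)*c)) = Ioc 0 ((k:ℝ)*c) := by
  induction k with
  | zero => simp
  | succ k ih =>
    rw [Finset.range_add_one, Finset.set_biUnion_insert, ih, union_comm,
      Set.Ioc_union_Ioc_eq_Ioc (by positivity) (by push_cast; nlinarith)]
    push_cast
    ring_nf

lemma FG_disj {c : ℝ} (hc : 0 < c) (k : ℕ) :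
    (↑(Finset.range k) : Set ℕ).PairwiseDisjoint
      (fun j => Ioc ((j:ℝ)*c) (((j:ℝ)+1)*c)) := by
  intro i _ j _ hij
  apply Set.Ioc_disjoint_Ioc.2
  rcases lt_or_gt_of_ne hij with h | h
  · have : ((i:ℝ)+1) ≤ (j:ℝ) := by exact_mod_cast h
    calc min (((i:ℝ)+1)*c) (((j:ℝ)+1)*c) ≤ ((i:ℝ)+1)*c := min_le_left _ _
      _ ≤ (j:ℝ)*c := by nlinarith
      _ ≤ max ((i:ℝ)*c) ((j:ℝ)*c) := le_max_right _ _
  · have : ((j:ℝ)+1) ≤ (i:ℝ) := by exact_mod_cast h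
    calc min (((i:ℝ)+1)*c) (((j:ℝ)+1)*c) ≤ ((j:ℝ)+1)*c := min_le_right _ _
      _ ≤ (i:ℝ)*c := by nlinarith
      _ ≤ max ((i:ℝ)*c) ((j:ℝ)*c) := le_max_left _ _


lemma FG_eLpNorm_eq {X : Type*} [MeasurableSpace X] (μ : Measure X) {E : Type*}
    [NormedAddCommGroup E] (f : X → E) {p : ℝ} (hp : 0 < p) :
    eLpNorm f (ENNReal.ofReal p) μ = (∫⁻ x, (‖f x‖₊ : ℝ≥0∞) ^ p ∂μ) ^ (1/p) := by
  rw [eLpNorm_eq_lintegral_rpow_enorm_toReal ((ENNReal.ofReal_pos.2 hp).ne') ENNReal.ofReal_ne_top,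
    ENNReal.toReal_ofReal hp.le]
  rfl

lemma FG_eLpNorm_le {X : Type*} [MeasurableSpace X] {μ : Measure X} {E : Type*}
    [NormedAddCommGroup E] {f : X → E} {p : ℝ} (hp : 0 < p) {A : ℝ≥0∞}
    (h : (∫⁻ x, (‖f x‖₊ : ℝ≥0∞) ^ p ∂μ) ≤ A) :
    eLpNorm f (ENNReal.ofReal p) μ ≤ A ^ (1/p) := by
  rw [FG_eLpNorm_eq μ f hp]
  exact ENNReal.rpow_le_rpow h (by positivity)

set_option maxHeartbeats 2000000 in
/-- Compact embedding `L^p(0,T;B₀) ∩ W^{α,p}(0,T;B₁) ⋐ L^p(0,T;B)` (Flandoli–Gątarek):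
if `B₀ ⊂ B ⊂ B₁` are Banach spaces with continuous injective embeddings, `B₀, B₁`
reflexive (the canonical map into the double dual is surjective), the embedding
`B₀ ↪ B` compact (bounded sets have compact closure of their image), `p ∈ (1,∞)`,
`α ∈ (0,1)`, then any sequence `gₙ : [0,T] → B₀` with uniformly bounded
`L^p(0,T;B₀)`-norm and `W^{α,p}(0,T;B₁)`-seminorm has a subsequence converging
in `L^p(0,T;B)`. -/
theorem stmt_0
    {B0 B B1 : Type*}
    [NormedAddCommGroup B0] [NormedSpace ℝ B0] [CompleteSpace B0]
    [NormedAddCommGroup B] [NormedSpace ℝ B] [CompleteSpace B]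
    [NormedAddCommGroup B1] [NormedSpace ℝ B1] [CompleteSpace B1]
    (i0 : B0 →L[ℝ] B) (hi0 : Function.Injective i0)
    (i1 : B →L[ℝ] B1) (hi1 : Function.Injective i1)
    (hrefl0 : Function.Surjective ⇑(NormedSpace.inclusionInDoubleDual ℝ B0))
    (hrefl1 : Function.Surjective ⇑(NormedSpace.inclusionInDoubleDual ℝ B1))
    (hcompact : ∀ s : Set B0, Bornology.IsBounded s → IsCompact (closure (⇑i0 '' s)))
    (T : ℝ) (hT : 0 < T) (p : ℝ) (hp : 1 < p) (α : ℝ) (hα : α ∈ Set.Ioo (0:ℝ) 1)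
    (g : ℕ → ℝ → B0)
    (hmeas : ∀ n, AEStronglyMeasurable (g n) (volume.restrict (Set.Ioc 0 T)))
    (M : ℝ≥0∞) (hM : M < ⊤)
    (hbound1 : ∀ n, (∫⁻ t in Set.Ioc 0 T, (‖g n t‖₊ : ℝ≥0∞) ^ p) ≤ M)
    (hbound2 : ∀ n, (∫⁻ t in Set.Ioc 0 T, ∫⁻ s in Set.Ioc 0 T,
        (‖i1 (i0 (g n t)) - i1 (i0 (g n s))‖₊ : ℝ≥0∞) ^ p
          / ENNReal.ofReal (|t - s| ^ (1 + α * p))) ≤ M) :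
    ∃ φ : ℕ → ℕ, StrictMono φ ∧ ∃ glim : ℝ → B,
      AEStronglyMeasurable glim (volume.restrict (Set.Ioc 0 T)) ∧
      Tendsto (fun k => ∫⁻ t in Set.Ioc 0 T,
        (‖i0 (g (φ k) t) - glim t‖₊ : ℝ≥0∞) ^ p) atTop (𝓝 0) := by
  have hp0 : (0:ℝ) < p := one_pos.trans hp
  have hα0 : 0 < α := hα.1
  set β : ℝ := α * p with hβdef
  have hβ : 0 < β := mul_pos hα0 hp0
  set μ := volume.restrict (Set.Ioc 0 T) with hμdef
  set q : ℝ≥0∞ := ENNReal.ofReal p with hqdef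
  have hq0 : q ≠ 0 := (ENNReal.ofReal_pos.2 hp0).ne'
  have hqt : q ≠ ⊤ := ENNReal.ofReal_ne_top
  have hqr : q.toReal = p := ENNReal.toReal_ofReal hp0.le
  haveI hfact : Fact (1 ≤ q) := ⟨ENNReal.one_le_ofReal.2 hp.le⟩
  haveI : IsFiniteMeasure μ := by
    constructor
    rw [hμdef, Measure.restrict_apply_univ, Real.volume_Ioc]
    exact ENNReal.ofReal_lt_top
  have hM' : M ≠ ⊤ := hM.ne
  have hmeasB : ∀ n, AEStronglyMeasurable (fun t => i0 (g n t)) μ :=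
    fun n => i0.continuous.comp_aestronglyMeasurable (hmeas n)
  have hmemg : ∀ n, MemLp (g n) q μ := by
    intro n
    refine ⟨hmeas n, ?_⟩
    rw [hqdef, FG_eLpNorm_eq μ (g n) hp0]
    exact ENNReal.rpow_lt_top_of_nonneg (by positivity) (((hbound1 n).trans_lt hM).ne)
  have hmemB : ∀ n, MemLp (fun t => i0 (g n t)) q μ := by
    intro n
    have h := i0.comp_memLp' (hmemg n)
    simpa [Function.comp_def] using h
  have hinteg : ∀ n, Integrable (g n) μ := fun n => (hmemg n).integrable hfact.out
  set G : ℕ → Lp B q μ := fun n => (hmemB n).toLp _ with hGdef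
  -- total boundedness
  have hTB : TotallyBounded (Set.range G) := by
    rw [Metric.totallyBounded_iff]
    intro ε hε
    set m : ℝ := (M ^ (1/p)).toReal with hmdef
    have hMfin : M ^ (1/p) ≠ ⊤ := ENNReal.rpow_ne_top_of_nonneg (by positivity) hM'
    have hm : M ^ (1/p) = ENNReal.ofReal m := (ENNReal.ofReal_toReal hMfin).symm
    have hm0 : 0 ≤ m := ENNReal.toReal_nonneg
    set ε' : ℝ := ε / (16 * (m+1)) with hε'def
    have hε' : 0 < ε' := by positivity
    obtain ⟨C, hC0, hEhr⟩ := FG_ehrling i0 i1 hi1 hcompact hε'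
    set δ : ℝ := ε / (8 * (C+1) * (m+1)) with hδdef
    have hδ : 0 < δ := by positivity
    obtain ⟨k, hk1, hkT⟩ : ∃ k : ℕ, 1 ≤ k ∧ (T / k) ^ α ≤ δ := by
      refine ⟨max 1 ⌈T / δ ^ (1/α)⌉₊, le_max_left _ _, ?_⟩
      set k' : ℕ := max 1 ⌈T / δ ^ (1/α)⌉₊ with hk'def
      have hδα : 0 < δ ^ (1/α) := Real.rpow_pos_of_pos hδ _
      have hk : (T / δ ^ (1/α)) ≤ (k' : ℝ) := by
        calc T / δ^(1/α) ≤ (⌈T / δ^(1/α)⌉₊ : ℝ) := Nat.le_ceil _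
          _ ≤ (k' : ℝ) := by exact_mod_cast Nat.cast_le.2 (le_max_right _ _)
      have hkpos : (0:ℝ) < (k' : ℝ) := by
        have h9 : (1:ℕ) ≤ k' := le_max_left _ _
        exact_mod_cast Nat.lt_of_lt_of_le Nat.zero_lt_one h9
      have hTk : T / (k' : ℝ) ≤ δ^(1/α) := by
        rw [div_le_iff₀ hkpos]
        have h2 := (div_le_iff₀ hδα).1 hk
        nlinarith
      calc (T/(k':ℝ))^α ≤ (δ^(1/α))^α :=
            Real.rpow_le_rpow (by positivity) hTk hα0.le
        _ = δ := by
            rw [← Real.rpow_mul hδ.le, one_div, inv_mul_cancel₀ hα0.ne', Real.rpow_one]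
    set L : ℝ := T / k with hLdef
    have hkpos : (0:ℝ) < (k:ℝ) := by exact_mod_cast Nat.lt_of_lt_of_le Nat.zero_lt_one hk1
    have hL : 0 < L := div_pos hT hkpos
    set I : ℕ → Set ℝ := fun j => Ioc ((j:ℝ)*L) (((j:ℝ)+1)*L) with hIdef
    have hba : ∀ j : ℕ, (((j:ℝ)+1)*L - (j:ℝ)*L) = L := fun j => by ring
    have hablt : ∀ j : ℕ, ((j:ℝ)*L) < ((j:ℝ)+1)*L := fun j => by nlinarith [Nat.cast_nonneg (α := ℝ) j]
    have htile : (⋃ j ∈ Finset.range k, I j) = Set.Ioc 0 T := by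
      rw [hIdef, FG_tile' hL k]
      congr 1
      rw [hLdef, mul_comm, div_mul_cancel₀ T hkpos.ne']
    have hdisj : (↑(Finset.range k) : Set ℕ).PairwiseDisjoint I := FG_disj hL k
    have hvolI : ∀ j : ℕ, volume (I j) = ENNReal.ofReal L := by
      intro j
      rw [hIdef]
      simp only [Real.volume_Ioc]
      rw [hba j]
    have hIsub : ∀ j ∈ Finset.range k, I j ⊆ Set.Ioc 0 T := by
      intro j hj
      rw [← htile]
      exact subset_biUnion_of_mem hj
    have hmemI : ∀ t ∈ Set.Ioc 0 T, ∃ j ∈ Finset.range k, t ∈ I j := by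
      intro t ht
      rw [← htile] at ht
      simpa using ht
    have hres : ∀ j ∈ Finset.range k, volume.restrict (I j) = μ.restrict (I j) := by
      intro j hj
      rw [hμdef, Measure.restrict_restrict measurableSet_Ioc,
        Set.inter_eq_self_of_subset_left (hIsub j hj)]
    have hmeasIj : ∀ n, ∀ j ∈ Finset.range k,
        AEStronglyMeasurable (g n) (volume.restrict (I j)) := by
      intro n j hj
      rw [hres j hj]
      exact (hmeas n).restrict
    have hintIj : ∀ n, ∀ j ∈ Finset.range k, IntegrableOn (g n) (I j) volume := by
      intro n j hj
      rw [IntegrableOn, hres j hj]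
      exact (hinteg n).restrict
    set av : ℕ → ℕ → B0 := fun n j => L⁻¹ • ∫ u in I j, g n u with havdef
    set P : ℕ → ℝ → B0 :=
      fun n t => ∑ j ∈ Finset.range k, (I j).indicator (fun _ => av n j) t with hPdef
    have hPsm : ∀ n, StronglyMeasurable (P n) := fun n =>
      Finset.stronglyMeasurable_fun_sum _
        (fun j _ => stronglyMeasurable_const.indicator measurableSet_Ioc)
    have hPval : ∀ n, ∀ j ∈ Finset.range k, ∀ t ∈ I j, P n t = av n j := by
      intro n j hj t ht
      simp only [hPdef]
      rw [Finset.sum_eq_single_of_mem j hj ?_]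
      · exact Set.indicator_of_mem ht _
      · intro i hi hij
        apply Set.indicator_of_notMem
        intro hti
        exact (Set.disjoint_left.1 (hdisj (Finset.mem_coe.2 hi) (Finset.mem_coe.2 hj) hij))
          hti ht
    -- L^p bound on P in B0
    have hPlint : ∀ n, (∫⁻ t in Set.Ioc 0 T, (‖P n t‖₊:ℝ≥0∞)^p) ≤ M := by
      intro n
      rw [← htile, lintegral_biUnion_finset hdisj (fun j _ => measurableSet_Ioc) _]
      have hle : ∀ j ∈ Finset.range k,
          (∫⁻ t in I j, (‖P n t‖₊:ℝ≥0∞)^p) ≤ ∫⁻ t in I j, (‖g n t‖₊:ℝ≥0∞)^p := by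
        intro j hj
        have hcon : (∫⁻ t in I j, (‖P n t‖₊:ℝ≥0∞)^p)
            = ∫⁻ _t in I j, (‖av n j‖₊:ℝ≥0∞)^p :=
          setLIntegral_congr_fun measurableSet_Ioc
            (fun t ht => by rw [hPval n j hj t ht])
        rw [hcon, setLIntegral_const, hvolI j]
        have hav := FG_avg_pow_le (hablt j) (hmeasIj n j hj) hp
        rw [hba j] at hav
        calc (‖av n j‖₊:ℝ≥0∞)^p * ENNReal.ofReal L
            ≤ ((ENNReal.ofReal L)⁻¹ * ∫⁻ t in I j, (‖g n t‖₊:ℝ≥0∞)^p) * ENNReal.ofReal L :=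
              mul_le_mul_left hav _
          _ = ∫⁻ t in I j, (‖g n t‖₊:ℝ≥0∞)^p := by
              rw [mul_comm, ← mul_assoc,
                ENNReal.mul_inv_cancel (ENNReal.ofReal_pos.2 hL).ne' ENNReal.ofReal_ne_top,
                one_mul]
      calc (∑ j ∈ Finset.range k, ∫⁻ t in I j, (‖P n t‖₊:ℝ≥0∞)^p)
          ≤ ∑ j ∈ Finset.range k, ∫⁻ t in I j, (‖g n t‖₊:ℝ≥0∞)^p := Finset.sum_le_sum hle
        _ = ∫⁻ t in ⋃ j ∈ Finset.range k, I j, (‖g n t‖₊:ℝ≥0∞)^p :=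
            (lintegral_biUnion_finset hdisj (fun j _ => measurableSet_Ioc) _).symm
        _ ≤ M := by rw [htile]; exact hbound1 n
    -- fractional bound
    have hQlint : ∀ n, (∫⁻ t in Set.Ioc 0 T,
        (‖i1 (i0 (g n t)) - i1 (i0 (P n t))‖₊:ℝ≥0∞)^p) ≤ ENNReal.ofReal (L^β) * M := by
      intro n
      rw [← htile, lintegral_biUnion_finset hdisj (fun j _ => measurableSet_Ioc) _]
      have hpc : ∀ j ∈ Finset.range k,
          (∫⁻ t in I j, (‖i1 (i0 (g n t)) - i1 (i0 (P n t))‖₊:ℝ≥0∞)^p)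
            ≤ ENNReal.ofReal (L^β) * ∫⁻ t in I j, ∫⁻ u in Set.Ioc 0 T,
              (‖i1 (i0 (g n t)) - i1 (i0 (g n u))‖₊:ℝ≥0∞)^p
                / ENNReal.ofReal (|t - u| ^ (1+β)) := by
        intro j hj
        have hψm : AEStronglyMeasurable (fun t => i1 (i0 (g n t))) (volume.restrict (I j)) :=
          (i1.continuous.comp i0.continuous).comp_aestronglyMeasurable (hmeasIj n j hj)
        have hψi : IntegrableOn (fun t => i1 (i0 (g n t))) (I j) volume := by
          have h6 := (i1.comp i0).integrable_comp (hintIj n j hj)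
          simpa [IntegrableOn] using h6
        have hQav : ∀ t ∈ I j, i1 (i0 (P n t))
            = L⁻¹ • ∫ u in I j, i1 (i0 (g n u)) := by
          intro t ht
          rw [hPval n j hj t ht, havdef]
          simp only [_root_.map_smul]
          congr 1
          have hcc := ContinuousLinearMap.integral_comp_comm (i1.comp i0) (hintIj n j hj)
          simpa using hcc.symm
        have hcong : (∫⁻ t in I j, (‖i1 (i0 (g n t)) - i1 (i0 (P n t))‖₊:ℝ≥0∞)^p)
            = ∫⁻ t in I j, (‖i1 (i0 (g n t))
                - L⁻¹ • ∫ u in I j, i1 (i0 (g n u))‖₊:ℝ≥0∞)^p :=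
          setLIntegral_congr_fun measurableSet_Ioc
            (fun t ht => by rw [hQav t ht])
        rw [hcong]
        have hpe := FG_piece_est (hablt j) hψm hψi hp hβ
        rw [hba j] at hpe
        refine hpe.trans (mul_le_mul_right (lintegral_mono fun t => ?_) _)
        exact lintegral_mono_set (hIsub j hj)
      calc (∑ j ∈ Finset.range k,
            ∫⁻ t in I j, (‖i1 (i0 (g n t)) - i1 (i0 (P n t))‖₊:ℝ≥0∞)^p)
          ≤ ∑ j ∈ Finset.range k, ENNReal.ofReal (L^β) * ∫⁻ t in I j,
              ∫⁻ u in Set.Ioc 0 T, (‖i1 (i0 (g n t)) - i1 (i0 (g n u))‖₊:ℝ≥0∞)^p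
                / ENNReal.ofReal (|t - u| ^ (1+β)) := Finset.sum_le_sum hpc
        _ = ENNReal.ofReal (L^β) * ∑ j ∈ Finset.range k, ∫⁻ t in I j,
              ∫⁻ u in Set.Ioc 0 T, (‖i1 (i0 (g n t)) - i1 (i0 (g n u))‖₊:ℝ≥0∞)^p
                / ENNReal.ofReal (|t - u| ^ (1+β)) := (Finset.mul_sum _ _ _).symm
        _ = ENNReal.ofReal (L^β) * ∫⁻ t in Set.Ioc 0 T,
              ∫⁻ u in Set.Ioc 0 T, (‖i1 (i0 (g n t)) - i1 (i0 (g n u))‖₊:ℝ≥0∞)^p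
                / ENNReal.ofReal (|t - u| ^ (1+β)) := by
            rw [← lintegral_biUnion_finset hdisj (fun j _ => measurableSet_Ioc), htile]
        _ ≤ ENNReal.ofReal (L^β) * M := mul_le_mul_right (hbound2 n) _
    -- eLpNorm distance from each g n to its step function
    have hstep : ∀ n, eLpNorm (fun t => i0 (g n t) - i0 (P n t)) q μ
        ≤ ENNReal.ofReal (ε/8) + ENNReal.ofReal (ε/8) := by
      intro n
      have hpw : ∀ t, ‖i0 (g n t) - i0 (P n t)‖
          ≤ ‖ε' * ‖g n t - P n t‖ + C * ‖i1 (i0 (g n t)) - i1 (i0 (P n t))‖‖ := by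
        intro t
        have h1 : i0 (g n t) - i0 (P n t) = i0 (g n t - P n t) := (map_sub i0 _ _).symm
        have h3 : i1 (i0 (g n t)) - i1 (i0 (P n t)) = i1 (i0 (g n t - P n t)) := by
          rw [map_sub i0 _ _, map_sub i1 _ _]
        rw [h1, h3, Real.norm_eq_abs]
        exact (hEhr (g n t - P n t)).trans (le_abs_self _)
      have hsm1 : AEStronglyMeasurable (fun t => ε' * ‖g n t - P n t‖) μ :=
        (((hmeas n).sub (hPsm n).aestronglyMeasurable).norm).const_mul ε'
      have hsm2 : AEStronglyMeasurable
          (fun t => C * ‖i1 (i0 (g n t)) - i1 (i0 (P n t))‖) μ := by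
        have h7 : AEStronglyMeasurable (fun t => i1 (i0 (g n t)) - i1 (i0 (P n t))) μ :=
          ((i1.continuous.comp i0.continuous).comp_aestronglyMeasurable (hmeas n)).sub
            (((i1.continuous.comp i0.continuous).comp_stronglyMeasurable
              (hPsm n)).aestronglyMeasurable)
        exact h7.norm.const_mul C
      have t1 : eLpNorm (fun t => ε' * ‖g n t - P n t‖) q μ
          = ENNReal.ofReal ε' * eLpNorm (fun t => g n t - P n t) q μ := by
        rw [show (fun t => ε' * ‖g n t - P n t‖)
            = (ε' : ℝ) • (fun t => ‖g n t - P n t‖) from rfl,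
          eLpNorm_const_smul, eLpNorm_norm, Real.enorm_eq_ofReal hε'.le]
      have t2 : eLpNorm (fun t => C * ‖i1 (i0 (g n t)) - i1 (i0 (P n t))‖) q μ
          = ENNReal.ofReal C
            * eLpNorm (fun t => i1 (i0 (g n t)) - i1 (i0 (P n t))) q μ := by
        rw [show (fun t => C * ‖i1 (i0 (g n t)) - i1 (i0 (P n t))‖)
            = (C : ℝ) • (fun t => ‖i1 (i0 (g n t)) - i1 (i0 (P n t))‖) from rfl,
          eLpNorm_const_smul, eLpNorm_norm, Real.enorm_eq_ofReal hC0]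
      have hsub : eLpNorm (fun t => g n t - P n t) q μ
          ≤ ENNReal.ofReal m + ENNReal.ofReal m := by
        have h4 : eLpNorm (fun t => g n t - P n t) q μ
            ≤ eLpNorm (g n) q μ + eLpNorm (P n) q μ :=
          eLpNorm_sub_le (hmeas n) (hPsm n).aestronglyMeasurable hfact.out
        refine h4.trans (add_le_add ?_ ?_)
        · rw [hqdef]
          exact (FG_eLpNorm_le hp0 (hbound1 n)).trans_eq (by rw [← hm])
        · rw [hqdef]
          exact (FG_eLpNorm_le hp0 (hPlint n)).trans_eq (by rw [← hm])
      have hQ : eLpNorm (fun t => i1 (i0 (g n t)) - i1 (i0 (P n t))) q μ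
          ≤ (ENNReal.ofReal (L^β) * M) ^ (1/p) := by
        rw [hqdef]
        exact FG_eLpNorm_le hp0 (hQlint n)
      calc eLpNorm (fun t => i0 (g n t) - i0 (P n t)) q μ
          ≤ eLpNorm ((fun t => ε' * ‖g n t - P n t‖)
              + fun t => C * ‖i1 (i0 (g n t)) - i1 (i0 (P n t))‖) q μ :=
            eLpNorm_mono hpw
        _ ≤ eLpNorm (fun t => ε' * ‖g n t - P n t‖) q μ
            + eLpNorm (fun t => C * ‖i1 (i0 (g n t)) - i1 (i0 (P n t))‖) q μ :=
            eLpNorm_add_le hsm1 hsm2 hfact.out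
        _ ≤ ENNReal.ofReal ε' * (ENNReal.ofReal m + ENNReal.ofReal m)
            + ENNReal.ofReal C * (ENNReal.ofReal (L^β) * M) ^ (1/p) := by
            rw [t1, t2]
            exact add_le_add (mul_le_mul_right hsub _) (mul_le_mul_right hQ _)
        _ ≤ ENNReal.ofReal (ε/8) + ENNReal.ofReal (ε/8) := by
            refine add_le_add ?_ ?_
            · rw [← ENNReal.ofReal_add hm0 hm0, ← ENNReal.ofReal_mul hε'.le]
              apply ENNReal.ofReal_le_ofReal
              rw [hε'def, div_mul_eq_mul_div, div_le_div_iff₀ (by positivity) (by norm_num)]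
              nlinarith
            · have hLβ : (0:ℝ) < L^β := Real.rpow_pos_of_pos hL _
              rw [ENNReal.mul_rpow_of_nonneg _ _ (by positivity : (0:ℝ) ≤ 1/p),
                ENNReal.ofReal_rpow_of_pos hLβ, hm,
                ← ENNReal.ofReal_mul (by positivity), ← ENNReal.ofReal_mul hC0]
              apply ENNReal.ofReal_le_ofReal
              have hexp : β * (1/p) = α := by
                rw [hβdef]; field_simp
              have hLα : (L^β)^(1/p) = L^α := by
                rw [← Real.rpow_mul hL.le, hexp]
              rw [hLα]
              have h5 : C * (L^α * m) ≤ C * (δ * m) :=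
                mul_le_mul_of_nonneg_left (mul_le_mul_of_nonneg_right hkT hm0) hC0
              refine h5.trans ?_
              have hpos8 : (0:ℝ) < 8*(C+1)*(m+1) := by positivity
              have he : C * (δ * m) = (C*m*ε) / (8*(C+1)*(m+1)) := by
                rw [hδdef]; ring
              rw [he, div_le_div_iff₀ hpos8 (by norm_num : (0:ℝ) < 8)]
              nlinarith [mul_nonneg (mul_nonneg hC0 hm0) hε.le, mul_nonneg hC0 hε.le,
                mul_nonneg hm0 hε.le, hε.le]
    -- compact value set and finite net
    set R : ℝ := (((ENNReal.ofReal L)⁻¹ * M) ^ (1/p)).toReal with hRdef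
    have havR : ∀ n, ∀ j ∈ Finset.range k, ‖av n j‖ ≤ R := by
      intro n j hj
      have hav := FG_avg_pow_le (hablt j) (hmeasIj n j hj) hp
      rw [hba j] at hav
      have h1 : (‖av n j‖₊:ℝ≥0∞)^p ≤ (ENNReal.ofReal L)⁻¹ * M :=
        hav.trans (mul_le_mul_right
          ((lintegral_mono_set (hIsub j hj)).trans (hbound1 n)) _)
      have h2 : (‖av n j‖₊:ℝ≥0∞) ≤ ((ENNReal.ofReal L)⁻¹ * M)^(1/p) := by
        have h3 := ENNReal.rpow_le_rpow h1 (by positivity : (0:ℝ) ≤ 1/p)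
        rwa [← ENNReal.rpow_mul, mul_one_div, div_self hp0.ne', ENNReal.rpow_one] at h3
      have hfin : ((ENNReal.ofReal L)⁻¹ * M)^(1/p) ≠ ⊤ :=
        ENNReal.rpow_ne_top_of_nonneg (by positivity)
          (ENNReal.mul_ne_top (ENNReal.inv_ne_top.2 (ENNReal.ofReal_pos.2 hL).ne') hM')
      have h4 := ENNReal.toReal_mono hfin h2
      simpa [hRdef] using h4
    have hK := hcompact {x : B0 | ‖x‖ ≤ R}
      (isBounded_iff_forall_norm_le.2 ⟨R, fun x hx => hx⟩)
    set v : ℕ → (Fin k → B) := fun n j => i0 (av n (j:ℕ)) with hvdef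
    have hvTB : TotallyBounded (Set.range v) := by
      apply ((isCompact_univ_pi (fun _ : Fin k => hK)).totallyBounded).subset
      rintro _ ⟨n, rfl⟩
      intro j _
      exact subset_closure ⟨av n (j:ℕ), havR n (j:ℕ) (Finset.mem_range.2 j.isLt), rfl⟩
    set ρ : ℝ := (ε/8) / (T^(1/p) + 1) with hρdef
    have hTp : (0:ℝ) < T^(1/p) := Real.rpow_pos_of_pos hT _
    have hρ : 0 < ρ := by positivity
    obtain ⟨net, hnet_sub, hnet_fin, hnet_cov⟩ :=
      Metric.finite_approx_of_totallyBounded hvTB ρ hρ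
    choose idx hidx using fun y (hy : y ∈ net) => hnet_sub hy
    refine ⟨{z | ∃ y, ∃ hy : y ∈ net, G (idx y hy) = z},
      Set.Finite.dependent_image hnet_fin _, ?_⟩
    rintro _ ⟨n, rfl⟩
    have hvn := hnet_cov ⟨n, rfl⟩
    rw [Set.mem_iUnion₂] at hvn
    obtain ⟨y, hy, hbally⟩ := hvn
    rw [Set.mem_iUnion₂]
    refine ⟨G (idx y hy), ⟨y, hy, rfl⟩, ?_⟩
    rw [Metric.mem_ball]
    set n' := idx y hy with hn'def
    have hvdist : dist (v n) (v n') < ρ := by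
      rw [hn'def, hidx y hy]
      exact Metric.mem_ball.1 hbally
    have hdist_eq : dist (G n) (G n')
        = (eLpNorm ((fun t => i0 (g n t)) - fun t => i0 (g n' t)) q μ).toReal := by
      rw [Lp.dist_def]
      congr 1
      apply eLpNorm_congr_ae
      exact ((hmemB n).coeFn_toLp).sub ((hmemB n').coeFn_toLp)
    have hmid : eLpNorm (fun t => i0 (P n t) - i0 (P n' t)) q μ
        ≤ ENNReal.ofReal (ε/8) := by
      have hbd : ∀ᵐ t ∂μ, ‖i0 (P n t) - i0 (P n' t)‖ ≤ dist (v n) (v n') := by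
        filter_upwards [ae_restrict_mem measurableSet_Ioc] with t ht
        obtain ⟨j, hj, htj⟩ := hmemI t ht
        rw [hPval n j hj t htj, hPval n' j hj t htj]
        have he : ‖i0 (av n j) - i0 (av n' j)‖
            = dist (v n ⟨j, Finset.mem_range.1 hj⟩) (v n' ⟨j, Finset.mem_range.1 hj⟩) := by
          rw [dist_eq_norm]
        rw [he]
        exact dist_le_pi_dist (v n) (v n') _
      refine (eLpNorm_le_of_ae_bound hbd).trans ?_
      have hμu : μ Set.univ = ENNReal.ofReal T := by
        rw [hμdef, Measure.restrict_apply_univ, Real.volume_Ioc, sub_zero]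
      rw [hμu, hqr]
      calc (ENNReal.ofReal T) ^ p⁻¹ * ENNReal.ofReal (dist (v n) (v n'))
          ≤ ENNReal.ofReal (T^(1/p)) * ENNReal.ofReal ρ := by
            refine mul_le_mul ?_ (ENNReal.ofReal_le_ofReal hvdist.le) zero_le zero_le
            rw [ENNReal.ofReal_rpow_of_pos hT, one_div]
        _ = ENNReal.ofReal (T^(1/p) * ρ) := (ENNReal.ofReal_mul (by positivity)).symm
        _ ≤ ENNReal.ofReal (ε/8) := by
            apply ENNReal.ofReal_le_ofReal
            have h8 : (0:ℝ) < T^(1/p)+1 := by positivity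
            calc T^(1/p) * ρ = (ε/8) * (T^(1/p)/(T^(1/p)+1)) := by rw [hρdef]; ring
              _ ≤ (ε/8) * 1 :=
                  mul_le_mul_of_nonneg_left ((div_le_one h8).2 (by linarith)) (by positivity)
              _ = ε/8 := mul_one _
    have h1n := hstep n
    have h3n : eLpNorm (fun t => i0 (P n' t) - i0 (g n' t)) q μ
        ≤ ENNReal.ofReal (ε/8) + ENNReal.ofReal (ε/8) := by
      have hneg : (fun t => i0 (P n' t) - i0 (g n' t))
          = -(fun t => i0 (g n' t) - i0 (P n' t)) := by funext t; simp
      rw [hneg, eLpNorm_neg]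
      exact hstep n'
    have htri : eLpNorm ((fun t => i0 (g n t)) - fun t => i0 (g n' t)) q μ
        ≤ ENNReal.ofReal (ε/8) + ENNReal.ofReal (ε/8) + (ENNReal.ofReal (ε/8)
          + (ENNReal.ofReal (ε/8) + ENNReal.ofReal (ε/8))) := by
      have e1 : ((fun t => i0 (g n t)) - fun t => i0 (g n' t))
          = (fun t => i0 (g n t) - i0 (P n t))
            + ((fun t => i0 (P n t) - i0 (P n' t))
              + fun t => i0 (P n' t) - i0 (g n' t)) := by
        funext t
        simp only [Pi.add_apply, Pi.sub_apply]
        abel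
      rw [e1]
      have a1 : AEStronglyMeasurable (fun t => i0 (g n t) - i0 (P n t)) μ :=
        (hmeasB n).sub ((i0.continuous.comp_stronglyMeasurable (hPsm n)).aestronglyMeasurable)
      have a2 : AEStronglyMeasurable (fun t => i0 (P n t) - i0 (P n' t)) μ :=
        ((i0.continuous.comp_stronglyMeasurable (hPsm n)).aestronglyMeasurable).sub
          ((i0.continuous.comp_stronglyMeasurable (hPsm n')).aestronglyMeasurable)
      have a3 : AEStronglyMeasurable (fun t => i0 (P n' t) - i0 (g n' t)) μ :=
        ((i0.continuous.comp_stronglyMeasurable (hPsm n')).aestronglyMeasurable).sub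
          (hmeasB n')
      refine (eLpNorm_add_le a1 (a2.add a3) hfact.out).trans ?_
      refine add_le_add h1n ?_
      refine (eLpNorm_add_le a2 a3 hfact.out).trans ?_
      exact add_le_add hmid h3n
    rw [hdist_eq]
    have hsum : (ENNReal.ofReal (ε/8) + ENNReal.ofReal (ε/8) + (ENNReal.ofReal (ε/8)
        + (ENNReal.ofReal (ε/8) + ENNReal.ofReal (ε/8)))) = ENNReal.ofReal (5*(ε/8)) := by
      have h8 : (0:ℝ) ≤ ε/8 := by positivity
      have h58 : (5:ℝ)*(ε/8) = ε/8 + (ε/8 + (ε/8 + (ε/8 + ε/8))) := by ring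
      rw [h58, ENNReal.ofReal_add h8 (by positivity), ENNReal.ofReal_add h8 (by positivity),
        ENNReal.ofReal_add h8 (by positivity), ENNReal.ofReal_add h8 h8]
      ring
    calc (eLpNorm ((fun t => i0 (g n t)) - fun t => i0 (g n' t)) q μ).toReal
        ≤ (ENNReal.ofReal (5*(ε/8))).toReal :=
          ENNReal.toReal_mono ENNReal.ofReal_ne_top (htri.trans_eq hsum)
      _ = 5*(ε/8) := ENNReal.toReal_ofReal (by positivity)
      _ < ε := by linarith
  -- extract a convergent subsequence
  have hcomp : IsCompact (closure (Set.range G)) :=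
    hTB.closure.isCompact_of_isClosed isClosed_closure
  obtain ⟨Lf, -, φ, hφ, hconv⟩ := hcomp.isSeqCompact (fun n => subset_closure ⟨n, rfl⟩)
  refine ⟨φ, hφ, ⇑Lf, Lp.aestronglyMeasurable Lf, ?_⟩
  have hdist0 : Tendsto (fun j => dist ((G ∘ φ) j) Lf) atTop (𝓝 0) :=
    tendsto_iff_dist_tendsto_zero.1 hconv
  have heq : ∀ j, (∫⁻ t in Set.Ioc 0 T, (‖i0 (g (φ j) t) - (Lf : ℝ → B) t‖₊:ℝ≥0∞)^p)
      = ENNReal.ofReal (dist (G (φ j)) Lf) ^ p := by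
    intro j
    have h1 : (∫⁻ t, (‖i0 (g (φ j) t) - (Lf : ℝ → B) t‖₊:ℝ≥0∞)^p ∂μ)
        = ∫⁻ t, (‖(⇑(G (φ j)) - ⇑Lf) t‖₊:ℝ≥0∞)^p ∂μ := by
      apply lintegral_congr_ae
      filter_upwards [(hmemB (φ j)).coeFn_toLp] with t ht
      have h4 : ⇑(G (φ j)) t = i0 (g (φ j) t) := ht
      simp only [Pi.sub_apply, h4]
    have h2 : (∫⁻ t, (‖(⇑(G (φ j)) - ⇑Lf) t‖₊:ℝ≥0∞)^p ∂μ)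
        = eLpNorm (⇑(G (φ j)) - ⇑Lf) q μ ^ p := by
      rw [eLpNorm_eq_lintegral_rpow_enorm_toReal hq0 hqt, hqr, ← ENNReal.rpow_mul, one_div,
        inv_mul_cancel₀ hp0.ne', ENNReal.rpow_one]
      rfl
    have h3 : eLpNorm (⇑(G (φ j)) - ⇑Lf) q μ = ENNReal.ofReal (dist (G (φ j)) Lf) := by
      rw [Lp.dist_def, ENNReal.ofReal_toReal ?_]
      have h5 := Lp.eLpNorm_lt_top (G (φ j) - Lf)
      have hcoe : ⇑(G (φ j) - Lf) =ᵐ[μ] ⇑(G (φ j)) - ⇑Lf := Lp.coeFn_sub _ _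
      rw [← eLpNorm_congr_ae hcoe]
      exact h5.ne
    rw [h1, h2, h3]
  have hof : Tendsto (fun j => ENNReal.ofReal (dist (G (φ j)) Lf)) atTop (𝓝 0) := by
    have h6 := (ENNReal.continuous_ofReal.tendsto 0).comp hdist0
    simpa [Function.comp_def] using h6
  have hrp : Tendsto (fun j => ENNReal.ofReal (dist (G (φ j)) Lf) ^ p) atTop (𝓝 0) := by
    have hc := (ENNReal.continuous_rpow_const (y := p)).tendsto 0
    have h2 := hc.comp hof
    simpa [Function.comp_def, ENNReal.zero_rpow_of_pos hp0] using h2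
  exact hrp.congr (fun j => (heq j).symm)
end

section
/- Let $B_1 \subset \tilde B$ be Banach spaces with a compact continuous linear embedding, let $T>0$, and let $\alpha \in (0,1)$ and $p > 1$ satisfy $\alpha p > 1$. Then every sequence $(g_n)$ of continuous functions $g_n : [0,T] \to B_1$ that is bounded in the $W^{\alpha,p}(0,T;B_1)$ norm (i.e. $\sup_n \int_0^T \|g_n(t)\|_{B_1}^p dt + \int_0^T\int_0^T \|g_n(t)-g_n(s)\|_{B_1}^p |t-s|^{-1-\alpha p} ds\,dt < \infty$) has a subsequence that converges uniformly on $[0,T]$ in the norm of $\tilde B$; i.e. $W^{\alpha,p}(0,T;B_1)$ is compactly embedded into $C([0,T];\tilde B)$. -/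
open MeasureTheory Filter Topology Set
open scoped ENNReal NNReal BoundedContinuousFunction

section Rect

variable {B1 : Type*} [NormedAddCommGroup B1] [NormedSpace ℝ B1] [CompleteSpace B1]

private lemma rect_bound
    {T p α : ℝ} (hT : 0 < T) (hp : 1 < p) (hα0 : 0 < α)
    {f : ℝ → B1} (hf : Continuous f) {M : ℝ≥0∞} (hM : M ≠ ⊤)
    (hI : (∫⁻ t in Set.Ioc 0 T, ∫⁻ s in Set.Ioc 0 T,
            ((‖f t - f s‖₊ : ℝ≥0∞)) ^ p / ENNReal.ofReal (|t - s| ^ (1 + α * p))) ≤ M)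
    {a b c d h' : ℝ} (ha : 0 ≤ a) (hab : a < b) (hbT : b ≤ T)
    (hc : 0 ≤ c) (hcd : c < d) (hdT : d ≤ T) (hh' : 0 ≤ h')
    (hdist : ∀ u ∈ Set.Ioc a b, ∀ v ∈ Set.Ioc c d, |u - v| ≤ h') :
    ‖((b - a)⁻¹ • ∫ u in Set.Ioc a b, f u) - (d - c)⁻¹ • ∫ v in Set.Ioc c d, f v‖
      ≤ M.toReal ^ (1/p) * h' ^ ((1 + α * p)/p) * ((b - a) * (d - c)) ^ (-(1/p)) := by
  have hp0 : (0:ℝ) < p := lt_trans one_pos hp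
  have hpq : p.HolderConjugate (Real.conjExponent p) := Real.HolderConjugate.conjExponent hp
  set q : ℝ := Real.conjExponent p with hq
  have hq0 : (0:ℝ) < q := hpq.symm.pos
  have hba : (0:ℝ) < b - a := sub_pos.2 hab
  have hdc : (0:ℝ) < d - c := sub_pos.2 hcd
  have hX : (0:ℝ) < (b - a) * (d - c) := mul_pos hba hdc
  -- notation
  set F : ℝ × ℝ → ℝ≥0∞ := fun z => (‖f z.1 - f z.2‖₊ : ℝ≥0∞) with hF
  set W : ℝ × ℝ → ℝ≥0∞ := fun z => ENNReal.ofReal (|z.1 - z.2| ^ (1 + α * p)) with hW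
  set G : ℝ × ℝ → ℝ≥0∞ := fun z => (F z ^ p / W z) ^ (1/p) with hG
  have hFc : Continuous F :=
    ENNReal.continuous_coe.comp (((hf.comp continuous_fst).sub (hf.comp continuous_snd)).nnnorm)
  have hFm : Measurable F := hFc.measurable
  have hWm : Measurable W := by
    apply Measurable.ennreal_ofReal
    exact ((continuous_fst.sub continuous_snd).abs.rpow_const
      (fun x => Or.inr (by positivity))).measurable
  have hGm : Measurable G := ((hFm.pow_const p).div hWm).pow_const _
  -- product-measure bound on the fractional seminorm
  have hsub : Set.Ioc a b ×ˢ Set.Ioc c d ⊆ Set.Ioc 0 T ×ˢ Set.Ioc 0 T :=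
    Set.prod_mono (Set.Ioc_subset_Ioc ha hbT) (Set.Ioc_subset_Ioc hc hdT)
  have hIprod : (∫⁻ z in Set.Ioc a b ×ˢ Set.Ioc c d, F z ^ p / W z ∂(volume.prod volume)) ≤ M := by
    refine le_trans (lintegral_mono_set hsub) (le_trans (le_of_eq ?_) hI)
    rw [← Measure.prod_restrict]
    exact lintegral_prod _ (((hFm.pow_const p).div hWm).aemeasurable)
  set cst : ℝ≥0∞ := ENNReal.ofReal (h' ^ ((1 + α * p)/p)) with hcst
  have hpt : ∀ z ∈ Set.Ioc a b ×ˢ Set.Ioc c d, F z ≤ G z * cst := by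
    rintro ⟨u, v⟩ hz
    obtain ⟨hu, hv⟩ := hz
    by_cases huv : u = v
    · simp [hF, huv]
    · have hW0 : W (u, v) ≠ 0 := by
        rw [hW]
        simp only [Ne, ENNReal.ofReal_eq_zero, not_le]
        exact Real.rpow_pos_of_pos (abs_pos.2 (sub_ne_zero.2 huv)) _
      have hWt : W (u, v) ≠ ⊤ := ENNReal.ofReal_ne_top
      have key : G (u, v) * (W (u, v)) ^ (1/p) = F (u, v) := by
        rw [hG]
        simp only
        rw [← ENNReal.mul_rpow_of_nonneg _ _ (by positivity : (0:ℝ) ≤ 1/p),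
          ENNReal.div_mul_cancel hW0 hWt, ← ENNReal.rpow_mul, mul_one_div_cancel hp0.ne',
          ENNReal.rpow_one]
      have hWle : (W (u, v)) ^ (1/p) ≤ cst := by
        have e1 : h' ^ ((1 + α * p)/p) = (h' ^ (1 + α * p)) ^ (1/p) := by
          rw [← Real.rpow_mul hh', mul_one_div]
        rw [hW, hcst, e1, ← ENNReal.ofReal_rpow_of_nonneg (by positivity) (by positivity)]
        refine ENNReal.rpow_le_rpow (ENNReal.ofReal_le_ofReal ?_) (by positivity)
        exact Real.rpow_le_rpow (abs_nonneg _) (hdist u hu v hv) (by positivity)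
      calc F (u, v) = G (u, v) * (W (u, v)) ^ (1/p) := key.symm
        _ ≤ G (u, v) * cst := mul_le_mul_right hWle _
  -- Hölder bound on the iterated lintegral of F
  set E : ℝ≥0∞ := cst * (M ^ (1/p) * (ENNReal.ofReal ((b - a) * (d - c))) ^ (1/q)) with hE
  have hL : (∫⁻ u in Set.Ioc a b, ∫⁻ v in Set.Ioc c d, F (u, v)) ≤ E := by
    have h1 : (∫⁻ u in Set.Ioc a b, ∫⁻ v in Set.Ioc c d, F (u, v))
        = ∫⁻ z in Set.Ioc a b ×ˢ Set.Ioc c d, F z ∂(volume.prod volume) := by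
      rw [← Measure.prod_restrict, lintegral_prod _ hFm.aemeasurable]
    rw [h1]
    set π := (volume.prod volume).restrict (Set.Ioc a b ×ˢ Set.Ioc c d) with hπ
    calc (∫⁻ z in Set.Ioc a b ×ˢ Set.Ioc c d, F z ∂(volume.prod volume))
        ≤ ∫⁻ z, G z * cst ∂π := setLIntegral_mono (hGm.mul_const _) hpt
      _ = cst * ∫⁻ z, G z ∂π := by
          rw [lintegral_mul_const _ hGm, mul_comm]
      _ ≤ cst * ((∫⁻ z, G z ^ p ∂π) ^ (1/p) * (∫⁻ z, (1:ℝ≥0∞) ^ q ∂π) ^ (1/q)) := by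
          refine mul_le_mul_right ?_ _
          have := ENNReal.lintegral_mul_le_Lp_mul_Lq π hpq hGm.aemeasurable
            (aemeasurable_const (b := (1:ℝ≥0∞)))
          simpa using this
      _ ≤ E := by
          rw [hE]
          refine mul_le_mul_right (mul_le_mul' ?_ ?_) _
          · refine ENNReal.rpow_le_rpow ?_ (by positivity)
            refine le_trans (le_of_eq ?_) hIprod
            refine lintegral_congr fun z => ?_
            rw [hG, ← ENNReal.rpow_mul, one_div_mul_cancel hp0.ne', ENNReal.rpow_one]
          · refine ENNReal.rpow_le_rpow (le_of_eq ?_) (one_div_nonneg.2 hq0.le)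
            simp only [ENNReal.one_rpow]
            rw [lintegral_one, hπ, Measure.restrict_apply_univ, Measure.prod_prod,
              Real.volume_Ioc, Real.volume_Ioc, ← ENNReal.ofReal_mul hba.le]
  have hEt : E ≠ ⊤ := by
    rw [hE]
    refine ENNReal.mul_ne_top ENNReal.ofReal_ne_top (ENNReal.mul_ne_top ?_ ?_)
    · exact ENNReal.rpow_ne_top_of_nonneg (by positivity) hM
    · exact ENNReal.rpow_ne_top_of_nonneg (one_div_nonneg.2 hq0.le) ENNReal.ofReal_ne_top
  -- the averaging identity
  have hfiab : IntegrableOn f (Set.Ioc a b) := hf.integrableOn_Ioc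
  have hficd : IntegrableOn f (Set.Ioc c d) := hf.integrableOn_Ioc
  have hinner : ∀ u : ℝ, (∫ v in Set.Ioc c d, (f u - f v))
      = (d - c) • f u - ∫ v in Set.Ioc c d, f v := by
    intro u
    rw [integral_sub (integrableOn_const (s := Set.Ioc c d) (C := f u) (by simp [Real.volume_Ioc])) hficd,
      setIntegral_const, measureReal_def, Real.volume_Ioc, ENNReal.toReal_ofReal hdc.le]
  have houter : (∫ u in Set.Ioc a b, ((d - c) • f u - ∫ v in Set.Ioc c d, f v))
      = (d - c) • (∫ u in Set.Ioc a b, f u) - (b - a) • (∫ v in Set.Ioc c d, f v) := by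
    have hsm : IntegrableOn (fun u => (d - c) • f u) (Set.Ioc a b) := hfiab.smul _
    rw [integral_sub hsm (integrableOn_const (by simp [Real.volume_Ioc])),
      integral_smul, setIntegral_const, measureReal_def, Real.volume_Ioc, ENNReal.toReal_ofReal hba.le]
  have hbane : b - a ≠ 0 := hba.ne'
  have hdcne : d - c ≠ 0 := hdc.ne'
  have key : (b - a)⁻¹ • (∫ u in Set.Ioc a b, f u) - (d - c)⁻¹ • (∫ v in Set.Ioc c d, f v)
      = ((b - a) * (d - c))⁻¹ • ∫ u in Set.Ioc a b, (∫ v in Set.Ioc c d, (f u - f v)) := by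
    have e1 : ((b - a) * (d - c))⁻¹ * (d - c) = (b - a)⁻¹ := by field_simp <;> ring
    have e2 : ((b - a) * (d - c))⁻¹ * (b - a) = (d - c)⁻¹ := by
      rw [mul_inv]
      field_simp <;> ring
    simp only [hinner]
    rw [houter, smul_sub, smul_smul, smul_smul, e1, e2]
  rw [key, norm_smul, Real.norm_eq_abs, abs_of_pos (inv_pos.2 hX)]
  have hnorm : ‖∫ u in Set.Ioc a b, (∫ v in Set.Ioc c d, (f u - f v))‖ ≤ E.toReal := by
    refine le_trans (norm_integral_le_lintegral_norm _) ?_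
    refine ENNReal.toReal_mono hEt (le_trans ?_ hL)
    refine lintegral_mono fun u => ?_
    calc ENNReal.ofReal ‖∫ v in Set.Ioc c d, (f u - f v)‖
        ≤ ENNReal.ofReal (∫⁻ v in Set.Ioc c d, ENNReal.ofReal ‖f u - f v‖).toReal :=
          ENNReal.ofReal_le_ofReal (norm_integral_le_lintegral_norm _)
      _ ≤ ∫⁻ v in Set.Ioc c d, ENNReal.ofReal ‖f u - f v‖ := ENNReal.ofReal_toReal_le
      _ = ∫⁻ v in Set.Ioc c d, F (u, v) := by
          refine lintegral_congr fun v => ?_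
          exact ofReal_norm _
  calc ((b - a) * (d - c))⁻¹ * ‖∫ u in Set.Ioc a b, (∫ v in Set.Ioc c d, (f u - f v))‖
      ≤ ((b - a) * (d - c))⁻¹ * E.toReal := by
        exact mul_le_mul_of_nonneg_left hnorm (inv_nonneg.2 hX.le)
    _ = M.toReal ^ (1/p) * h' ^ ((1 + α * p)/p) * ((b - a) * (d - c)) ^ (-(1/p)) := by
        have hEtoReal : E.toReal
            = h' ^ ((1 + α * p)/p) * (M.toReal ^ (1/p) * ((b - a) * (d - c)) ^ (1/q)) := by
          rw [hE, ENNReal.toReal_mul, ENNReal.toReal_mul, ENNReal.toReal_ofReal (by positivity),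
            ← ENNReal.toReal_rpow, ENNReal.ofReal_rpow_of_pos hX,
            ENNReal.toReal_ofReal (Real.rpow_nonneg hX.le _)]
        rw [hEtoReal]
        have hexp : ((b - a) * (d - c))⁻¹ * ((b - a) * (d - c)) ^ (1/q)
            = ((b - a) * (d - c)) ^ (-(1/p)) := by
          rw [← Real.rpow_neg_one ((b - a) * (d - c)), ← Real.rpow_add hX]
          congr 1
          have := hpq.inv_add_inv_eq_one
          simp only [one_div]
          linarith
        calc ((b - a) * (d - c))⁻¹
              * (h' ^ ((1 + α * p)/p) * (M.toReal ^ (1/p) * ((b - a) * (d - c)) ^ (1/q)))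
            = h' ^ ((1 + α * p)/p) * M.toReal ^ (1/p)
              * (((b - a) * (d - c))⁻¹ * ((b - a) * (d - c)) ^ (1/q)) := by ring
          _ = _ := by rw [hexp]; ring

end Rect

section Holder

variable {B1 : Type*} [NormedAddCommGroup B1] [NormedSpace ℝ B1] [CompleteSpace B1]

private lemma avg_near {f : ℝ → B1} (hf : Continuous f) {a b x ε : ℝ} (hab : a < b)
    (hx : ∀ u ∈ Set.Ioc a b, ‖f u - f x‖ ≤ ε) :
    ‖((b - a)⁻¹ • ∫ u in Set.Ioc a b, f u) - f x‖ ≤ ε := by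
  have hba : (0:ℝ) < b - a := sub_pos.2 hab
  have hkey : ((b - a)⁻¹ • ∫ u in Set.Ioc a b, f u) - f x
      = (b - a)⁻¹ • ∫ u in Set.Ioc a b, (f u - f x) := by
    rw [integral_sub hf.integrableOn_Ioc
      (integrableOn_const (by simp [Real.volume_Ioc])),
      smul_sub, setIntegral_const, measureReal_def, Real.volume_Ioc, ENNReal.toReal_ofReal hba.le,
      smul_smul, inv_mul_cancel₀ hba.ne', one_smul]
  rw [hkey, norm_smul, Real.norm_eq_abs, abs_of_pos (inv_pos.2 hba)]
  have hb : ‖∫ u in Set.Ioc a b, (f u - f x)‖ ≤ ε * (volume (Set.Ioc a b)).toReal := by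
    exact norm_setIntegral_le_of_norm_le_const (by simp [Real.volume_Ioc]) hx
  rw [Real.volume_Ioc, ENNReal.toReal_ofReal hba.le] at hb
  calc (b - a)⁻¹ * ‖∫ u in Set.Ioc a b, (f u - f x)‖
      ≤ (b - a)⁻¹ * (ε * (b - a)) := by
        exact mul_le_mul_of_nonneg_left hb (inv_nonneg.2 hba.le)
    _ = ε := by field_simp

private lemma holder_est
    {T p α : ℝ} (hT : 0 < T) (hp : 1 < p) (hα0 : 0 < α) (hαp : 1 < α * p)
    {f : ℝ → B1} (hf : Continuous f) {M : ℝ≥0∞} (hM : M ≠ ⊤)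
    (hI : (∫⁻ t in Set.Ioc 0 T, ∫⁻ s in Set.Ioc 0 T,
            ((‖f t - f s‖₊ : ℝ≥0∞)) ^ p / ENNReal.ofReal (|t - s| ^ (1 + α * p))) ≤ M) :
    ∀ t ∈ Set.Icc 0 T, ∀ s ∈ Set.Icc 0 T,
      ‖f t - f s‖ ≤ 2 * 2 ^ (1/p) / (1 - 2 ^ (-(α - 1/p))) * M.toReal ^ (1/p)
        * |t - s| ^ (α - 1/p) := by
  have hp0 : (0:ℝ) < p := lt_trans one_pos hp
  set β : ℝ := α - 1/p with hβdef
  have hβ : 0 < β := by rw [hβdef, sub_pos, div_lt_iff₀ hp0]; linarith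
  set r : ℝ := 2 ^ (-β) with hrdef
  have hr0 : 0 < r := Real.rpow_pos_of_pos two_pos _
  have hr1 : r < 1 := Real.rpow_lt_one_of_one_lt_of_neg (by norm_num) (by linarith)
  set D : ℝ := 2 ^ (1/p) * M.toReal ^ (1/p) with hDdef
  have hD0 : 0 ≤ D := by
    rw [hDdef]
    exact mul_nonneg (Real.rpow_nonneg (by norm_num) _) (Real.rpow_nonneg ENNReal.toReal_nonneg _)
  -- exponent algebra used for both telescopes
  have halg : ∀ x : ℝ, 0 < x →
      M.toReal ^ (1/p) * x ^ ((1 + α * p)/p) * (x * (x/2)) ^ (-(1/p))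
        = D * x ^ β := by
    intro x hx
    have h1 : x * (x/2) = x ^ (2:ℝ) / 2 := by rw [Real.rpow_two]; ring
    rw [h1, Real.div_rpow (by positivity) (by norm_num), ← Real.rpow_mul hx.le,
      Real.rpow_neg (by norm_num : (0:ℝ) ≤ 2), div_inv_eq_mul, hDdef]
    have hxe : x ^ ((1 + α * p)/p) * x ^ ((2:ℝ) * -(1/p)) = x ^ β := by
      rw [← Real.rpow_add hx]
      congr 1
      rw [hβdef]
      field_simp
      ring
    rw [← hxe]
    ring
  -- a uniform bound on the dyadic scales
  have hgeom : ∀ K : ℕ, (∑ k ∈ Finset.range K, r ^ k) ≤ 1 / (1 - r) := by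
    intro K
    rw [le_div_iff₀ (by linarith)]
    nlinarith [geom_sum_mul r K, pow_nonneg hr0.le K]
  have htend : Tendsto (fun K : ℕ => (1:ℝ) / 2 ^ K) atTop (𝓝 0) := by
    have := tendsto_pow_atTop_nhds_zero_of_lt_one
      (by norm_num : (0:ℝ) ≤ 1/2) (by norm_num : (1:ℝ)/2 < 1)
    simpa [div_pow] using this
  have main : ∀ t s : ℝ, 0 ≤ t → t < s → s ≤ T →
      ‖f t - f s‖ ≤ 2 * (D * (s - t) ^ β / (1 - r)) := by
    intro t s ht hts hsT
    set h : ℝ := s - t with hhdef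
    have hh0 : 0 < h := sub_pos.2 hts
    have hk0 : ∀ k : ℕ, 0 < h / 2 ^ k := fun k => div_pos hh0 (by positivity)
    have hkle : ∀ k : ℕ, h / 2 ^ k ≤ h := by
      intro k
      rw [div_le_iff₀ (by positivity)]
      nlinarith [one_le_pow₀ (by norm_num : (1:ℝ) ≤ 2) (n := k)]
    have hxβ : ∀ k : ℕ, (h / 2 ^ k) ^ β = h ^ β * r ^ k := by
      intro k
      rw [Real.div_rpow hh0.le (by positivity), ← Real.rpow_natCast (2:ℝ) k,
        ← Real.rpow_mul (by norm_num : (0:ℝ) ≤ 2), hrdef, ← Real.rpow_natCast (2 ^ (-β)) k,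
        ← Real.rpow_mul (by norm_num : (0:ℝ) ≤ 2), div_eq_mul_inv, ← Real.rpow_neg
          (by norm_num : (0:ℝ) ≤ 2)]
      ring_nf
    set A : ℕ → B1 := fun k => (h / 2 ^ k)⁻¹ • ∫ u in Set.Ioc t (t + h / 2 ^ k), f u with hA
    set Bv : ℕ → B1 := fun k => (h / 2 ^ k)⁻¹ • ∫ u in Set.Ioc (s - h / 2 ^ k) s, f u with hB
    have hhalf : ∀ k : ℕ, h / 2 ^ (k + 1) = h / 2 ^ k / 2 := by
      intro k
      rw [pow_succ]
      ring
    have hstepA : ∀ k : ℕ, ‖A k - A (k + 1)‖ ≤ D * h ^ β * r ^ k := by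
      intro k
      have h2k := hk0 k
      have h2k1 := hk0 (k + 1)
      have hrb := rect_bound (a := t) (b := t + h / 2 ^ k) (c := t) (d := t + h / 2 ^ (k + 1))
        (h' := h / 2 ^ k) hT hp hα0 hf hM hI ht (by linarith) (by linarith [hkle k]) ht
        (by linarith) (by linarith [hkle (k + 1)]) h2k.le ?_
      · rw [add_sub_cancel_left, add_sub_cancel_left] at hrb
        refine le_trans hrb (le_of_eq ?_)
        rw [hhalf k, halg _ h2k, hxβ k]
        ring
      · intro u hu v hv
        rw [abs_sub_le_iff]
        have h1 := hu.1; have h2 := hu.2; have h3 := hv.1; have h4 := hv.2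
        have h5 : h / 2 ^ (k + 1) ≤ h / 2 ^ k := by
          rw [hhalf k]; linarith
        constructor <;> linarith
    have hstepB : ∀ k : ℕ, ‖Bv k - Bv (k + 1)‖ ≤ D * h ^ β * r ^ k := by
      intro k
      have h2k := hk0 k
      have h2k1 := hk0 (k + 1)
      have hs0 : 0 ≤ s - h / 2 ^ k := by
        have := hkle k
        rw [hhdef] at this ⊢
        linarith
      have hs1 : 0 ≤ s - h / 2 ^ (k + 1) := by
        have := hkle (k + 1)
        rw [hhdef] at this ⊢
        linarith
      have hrb := rect_bound (a := s - h / 2 ^ k) (b := s) (c := s - h / 2 ^ (k + 1)) (d := s)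
        (h' := h / 2 ^ k) hT hp hα0 hf hM hI hs0 (by linarith) hsT hs1 (by linarith) hsT
        h2k.le ?_
      · rw [sub_sub_cancel, sub_sub_cancel] at hrb
        refine le_trans hrb (le_of_eq ?_)
        rw [hhalf k, halg _ h2k, hxβ k]
        ring
      · intro u hu v hv
        rw [abs_sub_le_iff]
        have h1 := hu.1; have h2 := hu.2; have h3 := hv.1; have h4 := hv.2
        have h5 : h / 2 ^ (k + 1) ≤ h / 2 ^ k := by
          rw [hhalf k]; linarith
        constructor <;> linarith
    have hDhβ : 0 ≤ D * h ^ β := mul_nonneg hD0 (Real.rpow_nonneg hh0.le _)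
    have htele : ∀ (C : ℕ → B1), (∀ k : ℕ, ‖C k - C (k + 1)‖ ≤ D * h ^ β * r ^ k) →
        ∀ K : ℕ, ‖C 0 - C K‖ ≤ D * h ^ β / (1 - r) := by
      intro C hC K
      calc ‖C 0 - C K‖ = dist (C 0) (C K) := (dist_eq_norm _ _).symm
        _ ≤ ∑ k ∈ Finset.range K, dist (C k) (C (k + 1)) := dist_le_range_sum_dist C K
        _ ≤ ∑ k ∈ Finset.range K, D * h ^ β * r ^ k := by
            refine Finset.sum_le_sum fun k _ => ?_
            rw [dist_eq_norm]
            exact hC k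
        _ = D * h ^ β * ∑ k ∈ Finset.range K, r ^ k := by rw [Finset.mul_sum]
        _ ≤ D * h ^ β * (1 / (1 - r)) := mul_le_mul_of_nonneg_left (hgeom K) hDhβ
        _ = D * h ^ β / (1 - r) := by ring
    -- convergence of the averages
    have hlim : ∀ (C : ℕ → B1) (x : ℝ),
        (∀ ε > (0:ℝ), ∃ N : ℕ, ∀ K ≥ N, ‖C K - f x‖ ≤ ε) → Tendsto C atTop (𝓝 (f x)) := by
      intro C x hC
      rw [Metric.tendsto_atTop]
      intro ε hε
      obtain ⟨N, hN⟩ := hC (ε / 2) (by linarith)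
      exact ⟨N, fun K hK => by
        rw [dist_eq_norm]
        exact lt_of_le_of_lt (hN K hK) (by linarith)⟩
    have hsmall : ∀ δ > (0:ℝ), ∃ N : ℕ, ∀ K ≥ N, h / 2 ^ K < δ := by
      intro δ hδ
      have h2 : Tendsto (fun K : ℕ => h * (1 / 2 ^ K)) atTop (𝓝 0) := by
        simpa using htend.const_mul h
      have h3 : Tendsto (fun K : ℕ => h / 2 ^ K) atTop (𝓝 0) := by
        simpa [div_eq_mul_inv, one_div] using h2
      exact eventually_atTop.1 (h3.eventually (gt_mem_nhds hδ))
    have hlimA : Tendsto A atTop (𝓝 (f t)) := by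
      refine hlim A t fun ε hε => ?_
      obtain ⟨δ, hδ0, hδ⟩ := Metric.continuousAt_iff.1 hf.continuousAt ε hε
      obtain ⟨N, hN⟩ := hsmall δ hδ0
      refine ⟨N, fun K hK => ?_⟩
      have := avg_near (a := t) (b := t + h / 2 ^ K) (x := t) (ε := ε) hf
        (by linarith [hk0 K]) ?_
      · rw [add_sub_cancel_left] at this
        exact this
      · intro u hu
        have h1 := hu.1; have h2 := hu.2
        have : dist u t < δ := by
          rw [Real.dist_eq, abs_of_pos (by linarith : (0:ℝ) < u - t)]
          linarith [hN K hK]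
        have := hδ this
        rw [dist_eq_norm] at this
        exact this.le
    have hlimB : Tendsto Bv atTop (𝓝 (f s)) := by
      refine hlim Bv s fun ε hε => ?_
      obtain ⟨δ, hδ0, hδ⟩ := Metric.continuousAt_iff.1 hf.continuousAt ε hε
      obtain ⟨N, hN⟩ := hsmall δ hδ0
      refine ⟨N, fun K hK => ?_⟩
      have := avg_near (a := s - h / 2 ^ K) (b := s) (x := s) (ε := ε) hf
        (by linarith [hk0 K]) ?_
      · rw [sub_sub_cancel] at this
        exact this
      · intro u hu
        have h1 := hu.1; have h2 := hu.2
        have : dist u s < δ := by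
          rw [Real.dist_eq, abs_sub_comm, abs_of_nonneg (by linarith : (0:ℝ) ≤ s - u)]
          linarith [hN K hK]
        have := hδ this
        rw [dist_eq_norm] at this
        exact this.le
    have hAf : ‖A 0 - f t‖ ≤ D * h ^ β / (1 - r) := by
      have hten : Tendsto (fun K => ‖A 0 - A K‖) atTop (𝓝 ‖A 0 - f t‖) :=
        (tendsto_const_nhds.sub hlimA).norm
      exact le_of_tendsto hten (Eventually.of_forall (htele A hstepA))
    have hBf : ‖Bv 0 - f s‖ ≤ D * h ^ β / (1 - r) := by
      have hten : Tendsto (fun K => ‖Bv 0 - Bv K‖) atTop (𝓝 ‖Bv 0 - f s‖) :=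
        (tendsto_const_nhds.sub hlimB).norm
      exact le_of_tendsto hten (Eventually.of_forall (htele Bv hstepB))
    have hAB : A 0 = Bv 0 := by
      rw [hA, hB]
      simp only [pow_zero, div_one]
      rw [show t + h = s by rw [hhdef]; ring, show s - h = t by rw [hhdef]; ring]
    have hsplit : f t - f s = (f t - A 0) - (f s - Bv 0) := by
      rw [hAB]
      abel
    calc ‖f t - f s‖ = ‖(f t - A 0) - (f s - Bv 0)‖ := by rw [hsplit]
      _ ≤ ‖f t - A 0‖ + ‖f s - Bv 0‖ := norm_sub_le _ _
      _ ≤ D * h ^ β / (1 - r) + D * h ^ β / (1 - r) := by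
          rw [norm_sub_rev (f t), norm_sub_rev (f s)]
          exact add_le_add hAf hBf
      _ = 2 * (D * h ^ β / (1 - r)) := by ring
  -- conclude, by symmetry
  intro t ht s hs
  rcases lt_trichotomy t s with hlt | heq | hgt
  · refine le_trans (main t s ht.1 hlt hs.2) (le_of_eq ?_)
    rw [abs_sub_comm, abs_of_pos (by linarith : (0:ℝ) < s - t), hDdef]
    ring
  · simp [heq, Real.zero_rpow hβ.ne']
  · rw [norm_sub_rev, abs_sub_comm]
    refine le_trans (main s t hs.1 hgt ht.2) (le_of_eq ?_)
    rw [abs_sub_comm, abs_of_pos (by linarith : (0:ℝ) < t - s), hDdef]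
    ring

end Holder

/-- Compact embedding `W^{α,p}(0,T;B₁) ⋐ C([0,T]; B̃)` for `αp > 1`:
if `B₁ ⊂ B̃` are Banach spaces with a compact continuous injective embedding,
`α ∈ (0,1)`, `p > 1` and `αp > 1`, then any sequence of continuous functions
`gₙ : [0,T] → B₁` bounded in the `W^{α,p}(0,T;B₁)` norm has a subsequence that
converges uniformly on `[0,T]` in the norm of `B̃`. -/
theorem stmt_1
    {B1 Bt : Type*}
    [NormedAddCommGroup B1] [NormedSpace ℝ B1] [CompleteSpace B1]
    [NormedAddCommGroup Bt] [NormedSpace ℝ Bt] [CompleteSpace Bt]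
    (i : B1 →L[ℝ] Bt) (hi : Function.Injective i)
    (hcompact : ∀ s : Set B1, Bornology.IsBounded s → IsCompact (closure (⇑i '' s)))
    (T : ℝ) (hT : 0 < T) (p α : ℝ) (hp : 1 < p) (hα : α ∈ Set.Ioo (0:ℝ) 1)
    (hαp : 1 < α * p)
    (g : ℕ → ℝ → B1)
    (hcont : ∀ n, ContinuousOn (g n) (Set.Icc 0 T))
    (M : ℝ≥0∞) (hM : M < ⊤)
    (hbound : ∀ n,
      (∫⁻ t in Set.Ioc 0 T, (‖g n t‖₊ : ℝ≥0∞) ^ p)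
        + (∫⁻ t in Set.Ioc 0 T, ∫⁻ s in Set.Ioc 0 T,
            (‖g n t - g n s‖₊ : ℝ≥0∞) ^ p
              / ENNReal.ofReal (|t - s| ^ (1 + α * p))) ≤ M) :
    ∃ φ : ℕ → ℕ, StrictMono φ ∧ ∃ glim : ℝ → Bt,
      ContinuousOn glim (Set.Icc 0 T) ∧
      TendstoUniformlyOn (fun k t => i (g (φ k) t)) glim atTop (Set.Icc 0 T) := by
  have hp0 : (0:ℝ) < p := lt_trans one_pos hp
  have hα0 : 0 < α := hα.1
  have hβ : 0 < α - 1/p := by rw [sub_pos, div_lt_iff₀ hp0]; linarith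
  have hMne : M ≠ ⊤ := hM.ne
  -- clamped versions of the `g n`, globally continuous
  set c : ℝ → ℝ := fun x => max 0 (min x T) with hc
  have hcc : Continuous c := continuous_const.max (continuous_id.min continuous_const)
  have hcmem : ∀ x, c x ∈ Set.Icc 0 T := fun x =>
    ⟨le_max_left _ _, max_le hT.le (min_le_right _ _)⟩
  have hcid : ∀ x ∈ Set.Icc 0 T, c x = x := by
    intro x hx
    rw [hc]
    simp only
    rw [min_eq_left hx.2, max_eq_right hx.1]
  set f : ℕ → ℝ → B1 := fun n => g n ∘ c with hfdef
  have hfc : ∀ n, Continuous (f n) := fun n => (hcont n).comp_continuous hcc hcmem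
  have hfg : ∀ n, ∀ x ∈ Set.Icc 0 T, f n x = g n x := fun n x hx => by
    rw [hfdef]; simp only [Function.comp_apply, hcid x hx]
  have hIocIcc : Set.Ioc (0:ℝ) T ⊆ Set.Icc 0 T := Set.Ioc_subset_Icc_self
  -- transfer the bounds to `f`
  have hbound1 : ∀ n, (∫⁻ t in Set.Ioc 0 T, (‖f n t‖₊ : ℝ≥0∞) ^ p) ≤ M := by
    intro n
    refine le_trans (le_of_eq ?_) (le_trans (self_le_add_right _ _) (hbound n))
    refine setLIntegral_congr_fun measurableSet_Ioc (fun t ht => ?_)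
    rw [hfg n t (hIocIcc ht)]
  have hbound2 : ∀ n, (∫⁻ t in Set.Ioc 0 T, ∫⁻ s in Set.Ioc 0 T,
      (‖f n t - f n s‖₊ : ℝ≥0∞) ^ p / ENNReal.ofReal (|t - s| ^ (1 + α * p))) ≤ M := by
    intro n
    refine le_trans (le_of_eq ?_) (le_trans le_add_self (hbound n))
    refine setLIntegral_congr_fun measurableSet_Ioc (fun t ht => ?_)
    refine setLIntegral_congr_fun measurableSet_Ioc (fun s hs => ?_)
    rw [hfg n t (hIocIcc ht), hfg n s (hIocIcc hs)]
  -- uniform Hölder estimate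
  set C0 : ℝ := 2 * 2 ^ (1/p) / (1 - 2 ^ (-(α - 1/p))) * M.toReal ^ (1/p) with hC0def
  have hr1 : (2:ℝ) ^ (-(α - 1/p)) < 1 :=
    Real.rpow_lt_one_of_one_lt_of_neg (by norm_num) (by linarith)
  have hC0 : 0 ≤ C0 := by
    rw [hC0def]
    have h1 : (0:ℝ) ≤ 2 * 2 ^ (1/p) := by positivity
    have h2 : (0:ℝ) < 1 - 2 ^ (-(α - 1/p)) := by linarith
    positivity
  have hhol : ∀ n, ∀ t ∈ Set.Icc 0 T, ∀ s ∈ Set.Icc 0 T,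
      ‖g n t - g n s‖ ≤ C0 * |t - s| ^ (α - 1/p) := by
    intro n t ht s hs
    rw [← hfg n t ht, ← hfg n s hs]
    have := holder_est hT hp hα0 hαp (hfc n) hMne (hbound2 n) t ht s hs
    rw [hC0def]
    exact this
  -- uniform sup bound
  set r0 : ℝ := ((M.toReal + 1)/T) ^ (1/p) with hr0def
  have hr0 : 0 ≤ r0 := Real.rpow_nonneg (by positivity) _
  set R : ℝ := r0 + C0 * T ^ (α - 1/p) with hRdef
  have hbd : ∀ n, ∀ t ∈ Set.Icc 0 T, ‖g n t‖ ≤ R := by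
    intro n t ht
    -- find a point where the norm is at most `r0`
    have hex : ∃ s₀ ∈ Set.Ioc 0 T, ‖g n s₀‖ ≤ r0 := by
      by_contra hcon
      push_neg at hcon
      have hpt : ∀ s ∈ Set.Ioc 0 T, ENNReal.ofReal r0 ^ p ≤ (‖f n s‖₊ : ℝ≥0∞) ^ p := by
        intro s hs
        refine ENNReal.rpow_le_rpow ?_ hp0.le
        rw [hfg n s (hIocIcc hs)]
        exact (ENNReal.ofReal_le_ofReal (hcon s hs).le).trans_eq (ofReal_norm _)
      have hge : ENNReal.ofReal (M.toReal + 1) ≤ ∫⁻ s in Set.Ioc 0 T, (‖f n s‖₊ : ℝ≥0∞) ^ p := by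
        have h1 : (∫⁻ _ in Set.Ioc 0 T, ENNReal.ofReal r0 ^ p)
            ≤ ∫⁻ s in Set.Ioc 0 T, (‖f n s‖₊ : ℝ≥0∞) ^ p := by
          refine setLIntegral_mono ?_ hpt
          exact ((ENNReal.continuous_coe.comp ((hfc n).nnnorm)).measurable).pow_const p
        refine le_trans (le_of_eq ?_) h1
        rw [setLIntegral_const, ENNReal.ofReal_rpow_of_nonneg hr0 hp0.le, hr0def,
          ← Real.rpow_mul (by positivity), one_div_mul_cancel hp0.ne', Real.rpow_one,
          Real.volume_Ioc, sub_zero, ← ENNReal.ofReal_mul (by positivity),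
          div_mul_cancel₀ _ hT.ne']
      have hlt : M < ENNReal.ofReal (M.toReal + 1) := by
        conv_lhs => rw [← ENNReal.ofReal_toReal hMne]
        exact (ENNReal.ofReal_lt_ofReal_iff (by positivity)).2 (by linarith)
      exact absurd (le_trans hge (hbound1 n)) (not_le.2 hlt)
    obtain ⟨s₀, hs₀, hgs₀⟩ := hex
    have hs₀' : s₀ ∈ Set.Icc 0 T := hIocIcc hs₀
    calc ‖g n t‖ = ‖(g n t - g n s₀) + g n s₀‖ := by rw [sub_add_cancel]
      _ ≤ ‖g n t - g n s₀‖ + ‖g n s₀‖ := norm_add_le _ _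
      _ ≤ C0 * |t - s₀| ^ (α - 1/p) + r0 := add_le_add (hhol n t ht s₀ hs₀') hgs₀
      _ ≤ C0 * T ^ (α - 1/p) + r0 := by
          refine add_le_add_left (mul_le_mul_of_nonneg_left ?_ hC0) _
          refine Real.rpow_le_rpow (abs_nonneg _) ?_ hβ.le
          rw [abs_le]
          constructor <;> [linarith [ht.1, ht.2, hs₀.1, hs₀.2]; linarith [ht.1, ht.2, hs₀.1, hs₀.2]]
      _ = R := by rw [hRdef]; ring
  -- Arzelà–Ascoli
  haveI : CompactSpace ↥(Set.Icc (0:ℝ) T) := isCompact_iff_compactSpace.1 isCompact_Icc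
  set F : ℕ → (↥(Set.Icc (0:ℝ) T) →ᵇ Bt) := fun n =>
    BoundedContinuousFunction.mkOfCompact
      ⟨fun x => i (g n x), i.continuous.comp (ContinuousOn.restrict (hcont n))⟩ with hFdef
  have hFapp : ∀ n (x : ↥(Set.Icc (0:ℝ) T)), F n x = i (g n x) := fun n x => rfl
  set s : Set Bt := closure (⇑i '' Metric.closedBall 0 R) with hsdef
  have hsC : IsCompact s := hcompact _ Metric.isBounded_closedBall
  have in_s : ∀ (fb : ↥(Set.Icc (0:ℝ) T) →ᵇ Bt) (x : ↥(Set.Icc (0:ℝ) T)),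
      fb ∈ Set.range F → fb x ∈ s := by
    rintro fb x ⟨n, rfl⟩
    rw [hFapp]
    refine subset_closure ⟨g n x, ?_, rfl⟩
    rw [Metric.mem_closedBall, dist_zero_right]
    exact hbd n x x.2
  have hequi : Equicontinuous ((↑) : Set.range F → (↥(Set.Icc (0:ℝ) T) → Bt)) := by
    intro x₀
    rw [Metric.equicontinuousAt_iff]
    intro ε hε
    set C1 : ℝ := (‖i‖ + 1) * C0 + 1 with hC1def
    have hC1 : 0 < C1 := by
      have := norm_nonneg i
      rw [hC1def]
      nlinarith
    refine ⟨((ε / C1) ^ (α - 1/p)⁻¹), Real.rpow_pos_of_pos (by positivity) _, ?_⟩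
    rintro x hx ⟨fb, n, rfl⟩
    have hy0 : (0:ℝ) ≤ |(x₀:ℝ) - x| := abs_nonneg _
    have hylt : |(x₀:ℝ) - x| < (ε / C1) ^ (α - 1/p)⁻¹ := by
      rw [Subtype.dist_eq, Real.dist_eq, abs_sub_comm] at hx
      exact hx
    have hyβ : |(x₀:ℝ) - x| ^ (α - 1/p) < ε / C1 := by
      have := Real.rpow_lt_rpow hy0 hylt hβ
      rwa [← Real.rpow_mul (by positivity), inv_mul_cancel₀ hβ.ne', Real.rpow_one] at this
    have hiC : ‖i‖ * C0 ≤ C1 := by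
      rw [hC1def]
      nlinarith [norm_nonneg i, hC0]
    calc dist (F n x₀) (F n x) = ‖i (g n x₀) - i (g n x)‖ := by
          rw [hFapp, hFapp, dist_eq_norm]
      _ = ‖i (g n x₀ - g n x)‖ := by rw [map_sub]
      _ ≤ ‖i‖ * ‖g n x₀ - g n x‖ := i.le_opNorm _
      _ ≤ ‖i‖ * (C0 * |(x₀:ℝ) - x| ^ (α - 1/p)) :=
          mul_le_mul_of_nonneg_left (hhol n x₀ x₀.2 x x.2) (norm_nonneg i)
      _ = ‖i‖ * C0 * |(x₀:ℝ) - x| ^ (α - 1/p) := by ring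
      _ ≤ C1 * |(x₀:ℝ) - x| ^ (α - 1/p) :=
          mul_le_mul_of_nonneg_right hiC (Real.rpow_nonneg hy0 _)
      _ < C1 * (ε / C1) := (mul_lt_mul_iff_right₀ hC1).2 hyβ
      _ = ε := by field_simp
  have hcomp : IsCompact (closure (Set.range F)) :=
    BoundedContinuousFunction.arzela_ascoli s hsC (Set.range F) in_s hequi
  obtain ⟨fl, -, φ, hφ, hconv⟩ := hcomp.tendsto_subseq (fun n => subset_closure ⟨n, rfl⟩)
  refine ⟨φ, hφ, fun x => fl (Set.projIcc 0 T hT.le x),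
    (fl.continuous.comp continuous_projIcc).continuousOn, ?_⟩
  rw [Metric.tendstoUniformlyOn_iff]
  intro ε hε
  obtain ⟨N, hN⟩ := Metric.tendsto_atTop.1 hconv ε hε
  filter_upwards [eventually_ge_atTop N] with k hk
  intro x hx
  have h1 : dist (F (φ k)) fl < ε := hN k hk
  have h2 : dist (F (φ k) ⟨x, hx⟩) (fl ⟨x, hx⟩) ≤ dist (F (φ k)) fl :=
    BoundedContinuousFunction.dist_coe_le_dist _
  have h3 : Set.projIcc 0 T hT.le x = ⟨x, hx⟩ := Set.projIcc_of_mem hT.le hx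
  simp only [h3]
  rw [dist_comm]
  calc dist (i (g (φ k) x)) (fl ⟨x, hx⟩) = dist (F (φ k) ⟨x, hx⟩) (fl ⟨x, hx⟩) := by
        rw [hFapp]
    _ ≤ dist (F (φ k)) fl := h2
    _ < ε := h1
end

section
/- (Gyöngy–Krylov criterion) Let $(X_n)_{n\in\mathbb{N}}$ be a sequence of random variables from a probability space $(\Omega,\mathcal{F},\mathbb{P})$ to a complete separable metric space $(E,d)$. Assume that for every pair of subsequences $(n_1(k), n_2(k))_{k}$ with $n_1(k) \ge n_2(k)$ for every $k$, there is a further subsequence $(k(h))_h$ such that the $E\times E$-valued random variables $(X_{n_1(k(h))}, X_{n_2(k(h))})$ converge in law, as $h \to \infty$, to a probability measure $\mu$ on $E \times E$ satisfying $\mu(\{(x,y) \in E\times E : x = y\}) = 1$. Then there exists a random variable $X : \Omega \to E$ such that $X_n$ converges to $X$ in probability. -/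
open MeasureTheory Filter Topology

/-- The joint law of `(f, g)` under `P`, as a probability measure on `E × E`. -/
noncomputable def jointLaw {Ω E : Type*} [MeasurableSpace Ω] [MeasurableSpace E]
    (P : Measure Ω) [IsProbabilityMeasure P] (f g : Ω → E)
    (hf : Measurable f) (hg : Measurable g) : ProbabilityMeasure (E × E) :=
  ⟨P.map (fun ω => (f ω, g ω)), Measure.isProbabilityMeasure_map (hf.prodMk hg).aemeasurable⟩

/-- Gyöngy–Krylov criterion: if for every pair of subsequences `(X_{n₁(k)}, X_{n₂(k)})`
with `n₁(k) ≥ n₂(k)` there is a further subsequence along which the joint laws converge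
weakly to a measure `μ` on `E × E` concentrated on the diagonal, then `Xₙ` converges in
probability to some random variable `X`. -/
theorem stmt_2
    {Ω : Type*} [MeasurableSpace Ω] (P : Measure Ω) [IsProbabilityMeasure P]
    {E : Type*} [MetricSpace E] [CompleteSpace E] [TopologicalSpace.SeparableSpace E]
    [MeasurableSpace E] [BorelSpace E]
    (X : ℕ → Ω → E) (hX : ∀ n, Measurable (X n))
    (h : ∀ n1 n2 : ℕ → ℕ, StrictMono n1 → StrictMono n2 → (∀ k, n2 k ≤ n1 k) →
      ∃ (ks : ℕ → ℕ) (μ : ProbabilityMeasure (E × E)), StrictMono ks ∧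
        μ {q : E × E | q.1 = q.2} = 1 ∧
        Tendsto (fun m => jointLaw P (X (n1 (ks m))) (X (n2 (ks m)))
          (hX (n1 (ks m))) (hX (n2 (ks m)))) atTop (𝓝 μ)) :
    ∃ Xlim : Ω → E, Measurable Xlim ∧ TendstoInMeasure P X atTop Xlim := by
  classical
  haveI : SecondCountableTopology E := UniformSpace.secondCountable_of_separable E
  -- Step 1: the sequence is Cauchy in measure.
  have cauchy : ∀ ε : ℝ, 0 < ε → ∀ δ : ENNReal, 0 < δ →
      ∃ N, ∀ m n, N ≤ n → n ≤ m → P {ω | ε ≤ dist (X m ω) (X n ω)} ≤ δ := by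
    intro ε hε δ hδ
    by_contra hc
    push_neg at hc
    choose m n hn hmn hP using hc
    -- build strictly monotone subsequences
    set g : ℕ → ℕ := fun k => Nat.rec 0 (fun _ p => m p + 1) k with hg
    have hg0 : ∀ k, g (k + 1) = m (g k) + 1 := fun k => rfl
    set n1 : ℕ → ℕ := fun k => m (g k) with hn1
    set n2 : ℕ → ℕ := fun k => n (g k) with hn2
    have h21 : ∀ k, n2 k ≤ n1 k := fun k => hmn (g k)
    have hgn2 : ∀ k, g k ≤ n2 k := fun k => hn (g k)
    have hs2 : StrictMono n2 := by
      apply strictMono_nat_of_lt_succ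
      intro k
      calc n2 k ≤ n1 k := h21 k
        _ < g (k + 1) := by rw [hg0]; exact Nat.lt_succ_self _
        _ ≤ n2 (k + 1) := hgn2 (k + 1)
    have hs1 : StrictMono n1 := by
      apply strictMono_nat_of_lt_succ
      intro k
      calc n1 k < g (k + 1) := by rw [hg0]; exact Nat.lt_succ_self _
        _ ≤ n2 (k + 1) := hgn2 (k + 1)
        _ ≤ n1 (k + 1) := h21 (k + 1)
    obtain ⟨ks, μ, hks, hμdiag, hconv⟩ := h n1 n2 hs1 hs2 h21
    -- the closed set where the distance is at least ε
    set C : Set (E × E) := {q : E × E | ε ≤ dist q.1 q.2} with hC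
    have hCclosed : IsClosed C :=
      isClosed_le continuous_const (continuous_fst.dist continuous_snd)
    have hdiag_meas : MeasurableSet {q : E × E | q.1 = q.2} :=
      (isClosed_eq continuous_fst continuous_snd).measurableSet
    have h1 : (μ : Measure (E × E)) {q : E × E | q.1 = q.2} = 1 := by
      rw [← ProbabilityMeasure.ennreal_coeFn_eq_coeFn_toMeasure, hμdiag]
      simp
    have hCzero : (μ : Measure (E × E)) C = 0 := by
      have hsub : C ⊆ {q : E × E | q.1 = q.2}ᶜ := by
        intro q hq hq'
        have hq2 : ε ≤ dist q.1 q.2 := hq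
        rw [hq', dist_self] at hq2
        exact absurd hq2 (not_le.mpr hε)
      have hcompl : (μ : Measure (E × E)) {q : E × E | q.1 = q.2}ᶜ = 0 := by
        rw [measure_compl hdiag_meas (measure_ne_top _ _), h1, measure_univ, tsub_self]
      exact le_antisymm (hcompl ▸ measure_mono hsub) zero_le
    have hlimsup := MeasureTheory.ProbabilityMeasure.limsup_measure_closed_le_of_tendsto
      hconv hCclosed
    rw [hCzero] at hlimsup
    have hterm : ∀ i, δ ≤ ((jointLaw P (X (n1 (ks i))) (X (n2 (ks i)))
        (hX (n1 (ks i))) (hX (n2 (ks i)))) : Measure (E × E)) C := by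
      intro i
      have hmap : ((jointLaw P (X (n1 (ks i))) (X (n2 (ks i)))
          (hX (n1 (ks i))) (hX (n2 (ks i)))) : Measure (E × E)) C
          = P {ω | ε ≤ dist (X (n1 (ks i)) ω) (X (n2 (ks i)) ω)} := by
        show (P.map (fun ω => (X (n1 (ks i)) ω, X (n2 (ks i)) ω))) C = _
        rw [Measure.map_apply ((hX _).prodMk (hX _)) hCclosed.measurableSet]
        rfl
      rw [hmap]
      exact (hP (g (ks i))).le
    have hle : δ ≤ atTop.limsup (fun i =>
        ((jointLaw P (X (n1 (ks i))) (X (n2 (ks i)))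
        (hX (n1 (ks i))) (hX (n2 (ks i)))) : Measure (E × E)) C) := by
      apply le_limsup_of_frequently_le
      · exact Frequently.of_forall hterm
      · exact ⟨⊤, eventually_map.2 (Eventually.of_forall fun _ => le_top)⟩
    exact absurd (hle.trans hlimsup) (not_le.mpr hδ)
  -- Step 2: extract an a.e. convergent subsequence.
  have half_pos : ∀ k : ℕ, (0 : ENNReal) < 2⁻¹ ^ k := fun k =>
    ENNReal.pow_pos (by norm_num) k
  choose Nf hNf using fun k : ℕ =>
    cauchy ((1 / 2 : ℝ) ^ k) (by positivity) ((2 : ENNReal)⁻¹ ^ k) (half_pos k)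
  set φ : ℕ → ℕ := fun k => Nat.rec (Nf 0) (fun k p => max (Nf (k + 1)) p + 1) k with hφ
  have hφsucc : ∀ k, φ (k + 1) = max (Nf (k + 1)) (φ k) + 1 := fun k => rfl
  have hφmono : StrictMono φ := by
    apply strictMono_nat_of_lt_succ
    intro k
    rw [hφsucc]
    exact Nat.lt_succ_of_le (le_max_right _ _)
  have hNfφ : ∀ k, Nf k ≤ φ k := by
    intro k
    cases k with
    | zero => exact le_refl _
    | succ k => rw [hφsucc]; exact (le_max_left _ _).trans (Nat.le_succ _)
  set A : ℕ → Set Ω := fun k =>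
    {ω | (1 / 2 : ℝ) ^ k ≤ dist (X (φ (k + 1)) ω) (X (φ k) ω)} with hA
  have hAbound : ∀ k, P (A k) ≤ (2 : ENNReal)⁻¹ ^ k := fun k =>
    hNf k (φ (k + 1)) (φ k) (hNfφ k) (hφmono.monotone (Nat.le_succ k))
  have hsum : (∑' k, P (A k)) ≠ ⊤ := by
    have : (∑' k, P (A k)) ≤ ∑' k : ℕ, (2 : ENNReal)⁻¹ ^ k := ENNReal.tsum_le_tsum hAbound
    refine ne_top_of_le_ne_top ?_ this
    rw [ENNReal.tsum_geometric]
    simp [ENNReal.inv_ne_top]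
  have hae : ∀ᵐ ω ∂P, ∃ l : E, Tendsto (fun k => X (φ k) ω) atTop (𝓝 l) := by
    filter_upwards [ae_eventually_notMem hsum] with ω hω
    have hcauchy : CauchySeq (fun k => X (φ k) ω) := by
      apply cauchySeq_of_summable_dist
      obtain ⟨K, hK⟩ := eventually_atTop.mp hω
      rw [← summable_nat_add_iff K]
      apply Summable.of_nonneg_of_le (fun k => dist_nonneg)
        (f := fun k => (1 / 2 : ℝ) ^ (k + K))
      · intro k
        have := hK (k + K) (Nat.le_add_left K k)
        simp only [A, Set.mem_setOf_eq, not_le] at this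
        rw [dist_comm]
        exact this.le
      · rw [summable_nat_add_iff K]
        exact summable_geometric_of_lt_one (by norm_num) (by norm_num)
    exact cauchySeq_tendsto_of_complete hcauchy
  obtain ⟨Xlim, hXlim_sm, hXlim_ae⟩ := exists_stronglyMeasurable_limit_of_tendsto_ae
    (f := fun k => X (φ k)) (fun k => (hX _).aestronglyMeasurable) hae
  refine ⟨Xlim, hXlim_sm.measurable, ?_⟩
  have hsubTIM : TendstoInMeasure P (fun k => X (φ k)) atTop Xlim :=
    tendstoInMeasure_of_tendsto_ae (fun k => (hX _).aestronglyMeasurable) hXlim_ae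
  rw [tendstoInMeasure_iff_dist]
  intro ε hε
  rw [ENNReal.tendsto_atTop_zero]
  intro δ hδ
  obtain ⟨N, hN⟩ := cauchy (ε / 2) (by positivity) (δ / 2) (ENNReal.half_pos hδ.ne')
  obtain ⟨K, hK⟩ := ENNReal.tendsto_atTop_zero.mp (tendstoInMeasure_iff_dist.mp hsubTIM (ε / 2) (by positivity))
    (δ / 2) (ENNReal.half_pos hδ.ne')
  set k := max K N with hk
  have hφkN : N ≤ φ k := le_trans (le_max_right K N) (hφmono.le_apply)
  have hKterm : P {ω | ε / 2 ≤ dist (X (φ k) ω) (Xlim ω)} ≤ δ / 2 :=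
    hK k (le_max_left K N)
  refine ⟨N, fun nn hnn => ?_⟩
  have hsub : {ω | ε ≤ dist (X nn ω) (Xlim ω)} ⊆
      {ω | ε / 2 ≤ dist (X nn ω) (X (φ k) ω)} ∪
      {ω | ε / 2 ≤ dist (X (φ k) ω) (Xlim ω)} := by
    intro ω hω
    by_contra hcon
    simp only [Set.mem_union, Set.mem_setOf_eq, not_or, not_le] at hcon
    have : dist (X nn ω) (Xlim ω) < ε :=
      calc dist (X nn ω) (Xlim ω)
          ≤ dist (X nn ω) (X (φ k) ω) + dist (X (φ k) ω) (Xlim ω) := dist_triangle _ _ _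
        _ < ε / 2 + ε / 2 := add_lt_add hcon.1 hcon.2
        _ = ε := add_halves ε
    exact absurd hω (by simp only [Set.mem_setOf_eq, not_le]; exact this)
  have hfirst : P {ω | ε / 2 ≤ dist (X nn ω) (X (φ k) ω)} ≤ δ / 2 := by
    rcases le_total (φ k) nn with hle | hle
    · exact hN nn (φ k) hφkN hle
    · have := hN (φ k) nn (le_trans hnn (le_refl _) |>.trans (le_refl _) |> fun _ => hnn) hle
      -- fix below
      have heq : {ω | ε / 2 ≤ dist (X nn ω) (X (φ k) ω)}
          = {ω | ε / 2 ≤ dist (X (φ k) ω) (X nn ω)} := by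
        ext ω; simp [dist_comm]
      rw [heq]
      exact hN (φ k) nn hnn hle
  calc P {ω | ε ≤ dist (X nn ω) (Xlim ω)}
      ≤ P ({ω | ε / 2 ≤ dist (X nn ω) (X (φ k) ω)} ∪
          {ω | ε / 2 ≤ dist (X (φ k) ω) (Xlim ω)}) := measure_mono hsub
    _ ≤ P {ω | ε / 2 ≤ dist (X nn ω) (X (φ k) ω)} +
          P {ω | ε / 2 ≤ dist (X (φ k) ω) (Xlim ω)} := measure_union_le _ _
    _ ≤ δ / 2 + δ / 2 := add_le_add hfirst hKterm
    _ = δ := ENNReal.add_halves δ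
end

section
/- Let $L > 0$, $T > 0$ and $0 \le \theta < 1/8$, and for $(k,l) \in \mathbb{Z}^2$ set $w_{k,l} = (1-(\pi k/L)^2)^2 + (\pi l/L)^2 + 1$. Then there exists a constant $C = C(\theta, T, L) > 0$ such that for all $0 \le s < t \le T$, $\sum_{(k,l)\in\mathbb{Z}^2} \int_s^t w_{k,l}^{2\theta}\, e^{-2(t-u)(w_{k,l}-2)}\,du \;\le\; C\,(t-s)^{1/4 - 2\theta}$. -/
open scoped ENNReal

open MeasureTheory Set

lemma tailSum (r : ℝ) (hr : 1 < r) (N : ℕ) (hN : 1 ≤ N) :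
    (∑' n : ℕ, ENNReal.ofReal (((N:ℝ) + 1 + n) ^ (-r)))
      ≤ ENNReal.ofReal ((N:ℝ) ^ (1 - r) / (r - 1)) := by
  have hNpos : (0:ℝ) < N := by exact_mod_cast hN
  have hmeas : Measurable fun x : ℝ => ENNReal.ofReal (x ^ (-r)) :=
    (measurable_id.pow_const _).ennreal_ofReal
  -- each term bounded by integral over Ioc (N+n) (N+n+1)
  have step : ∀ n : ℕ, ENNReal.ofReal (((N:ℝ) + 1 + n) ^ (-r))
      ≤ ∫⁻ x in Ioc ((N:ℝ) + n) ((N:ℝ) + n + 1), ENNReal.ofReal (x ^ (-r)) := by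
    intro n
    have h1 : ENNReal.ofReal (((N:ℝ) + 1 + n) ^ (-r))
        = ∫⁻ _ in Ioc ((N:ℝ) + n) ((N:ℝ) + n + 1), ENNReal.ofReal (((N:ℝ) + 1 + n) ^ (-r)) := by
      rw [setLIntegral_const, Real.volume_Ioc]
      norm_num
    rw [h1]
    refine setLIntegral_mono hmeas fun x hx => ?_
    refine ENNReal.ofReal_le_ofReal ?_
    refine Real.rpow_le_rpow_of_nonpos ?_ ?_ (by linarith)
    · linarith [hx.1]
    · have := hx.2; linarith
  calc (∑' n : ℕ, ENNReal.ofReal (((N:ℝ) + 1 + n) ^ (-r)))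
      ≤ ∑' n : ℕ, ∫⁻ x in Ioc ((N:ℝ) + n) ((N:ℝ) + n + 1), ENNReal.ofReal (x ^ (-r)) :=
        ENNReal.tsum_le_tsum step
    _ = ∫⁻ x in ⋃ n : ℕ, Ioc ((N:ℝ) + n) ((N:ℝ) + n + 1), ENNReal.ofReal (x ^ (-r)) := by
        refine (lintegral_iUnion (fun n => measurableSet_Ioc) ?_ _).symm
        intro m n hmn
        rw [Function.onFun, Set.Ioc_disjoint_Ioc]
        rcases hmn.lt_or_gt with h | h
        · have h1 : (m:ℝ) + 1 ≤ n := by exact_mod_cast h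
          exact min_le_of_left_le (le_trans (by linarith) (le_max_right _ _))
        · have h1 : (n:ℝ) + 1 ≤ m := by exact_mod_cast h
          exact min_le_of_right_le (le_trans (by linarith) (le_max_left _ _))
    _ ≤ ∫⁻ x in Ioi (N:ℝ), ENNReal.ofReal (x ^ (-r)) := by
        refine lintegral_mono_set ?_
        refine Set.iUnion_subset fun n => ?_
        intro x hx
        have : (N:ℝ) ≤ (N:ℝ) + n := by linarith [Nat.cast_nonneg (α := ℝ) n]
        exact lt_of_le_of_lt this hx.1
    _ = ENNReal.ofReal ((N:ℝ) ^ (1 - r) / (r - 1)) := by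
        rw [← ofReal_integral_eq_lintegral_ofReal (integrableOn_Ioi_rpow_of_lt (by linarith) hNpos)
          ((ae_restrict_mem measurableSet_Ioi).mono fun x hx =>
            (Real.rpow_pos_of_pos (hNpos.trans hx) _).le)]
        rw [integral_Ioi_rpow_of_lt (by linarith) hNpos]
        congr 1
        rw [show -r + 1 = 1 - r by ring]
        have h1 : (1:ℝ) - r ≠ 0 := by intro h; rw [sub_eq_zero] at h; exact (ne_of_lt hr) h
        have h2 : r - 1 ≠ 0 := by intro h; rw [sub_eq_zero] at h; exact (ne_of_lt hr) h.symm
        field_simp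
        ring

lemma sum_min_nat (α T q : ℝ) (hα : 0 < α) (hq1 : 1/α < q) (hT : 0 < T) :
    ∃ C > (0:ℝ), ∀ τ : ℝ, 0 < τ → τ ≤ T →
      (∑' n : ℕ, ENNReal.ofReal ((min τ (1/((n:ℝ)^α + 1))) ^ q))
        ≤ ENNReal.ofReal (C * τ ^ (q - 1/α)) := by
  have hq0 : 0 < q := lt_trans (by positivity) hq1
  have hαq : 1 < α * q := by
    rw [div_lt_iff₀ hα] at hq1; linarith [hq1]
  have hc2 : (0:ℝ) < 1/(α*q - 1) := one_div_pos.mpr (by linarith)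
  have hc1 : (0:ℝ) < 1 + 2*T^(1/α) := by positivity
  refine ⟨(1 + 2*T^(1/α)) + 1/(α*q - 1), by linarith, fun τ hτ hτT => ?_⟩
  set N : ℕ := ⌈τ ^ (-(1/α))⌉₊ with hNdef
  have hτpow : (0:ℝ) < τ ^ (-(1/α)) := Real.rpow_pos_of_pos hτ _
  have hN1 : 1 ≤ N := Nat.one_le_ceil_iff.mpr hτpow
  have hNτ : τ ^ (-(1/α)) ≤ (N:ℝ) := Nat.le_ceil _
  have hNup : (N:ℝ) < τ ^ (-(1/α)) + 1 := Nat.ceil_lt_add_one hτpow.le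
  rw [← Summable.sum_add_tsum_nat_add' (f := fun n : ℕ =>
    ENNReal.ofReal ((min τ (1/((n:ℝ)^α + 1))) ^ q)) (k := N+1) ENNReal.summable]
  have hτq : τ ^ (-(1/α)) * τ ^ q = τ ^ (q - 1/α) := by
    rw [← Real.rpow_add hτ]; ring_nf
  -- head bound
  have head : (∑ i ∈ Finset.range (N+1), ENNReal.ofReal ((min τ (1/((i:ℝ)^α + 1))) ^ q))
      ≤ ENNReal.ofReal ((1 + 2*T^(1/α)) * τ ^ (q - 1/α)) := by
    have hcard : ∀ i ∈ Finset.range (N+1),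
        ENNReal.ofReal ((min τ (1/((i:ℝ)^α + 1))) ^ q) ≤ ENNReal.ofReal (τ ^ q) := by
      intro i _
      exact ENNReal.ofReal_le_ofReal (Real.rpow_le_rpow (le_min hτ.le (by positivity))
        (min_le_left _ _) hq0.le)
    calc (∑ i ∈ Finset.range (N+1), ENNReal.ofReal ((min τ (1/((i:ℝ)^α + 1))) ^ q))
        ≤ (N+1) • ENNReal.ofReal (τ ^ q) := by
          simpa [Finset.card_range] using Finset.sum_le_card_nsmul (Finset.range (N+1)) _ _ hcard
      _ = ((N:ℝ≥0∞) + 1) * ENNReal.ofReal (τ ^ q) := by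
          rw [nsmul_eq_mul]; push_cast; ring
      _ ≤ ENNReal.ofReal ((1 + 2*T^(1/α)) * τ ^ (q - 1/α)) := by
          have h2 : (2:ℝ) ≤ 2 * T^(1/α) * τ ^ (-(1/α)) := by
            have hTτ : T ^ (-(1/α)) ≤ τ ^ (-(1/α)) :=
              Real.rpow_le_rpow_of_nonpos hτ hτT (neg_nonpos.mpr (by positivity))
            have : T^(1/α) * T^(-(1/α)) = 1 := by
              rw [← Real.rpow_add hT]; simp
            nlinarith [Real.rpow_pos_of_pos hT (1/α), this]
          have hNle : (N:ℝ) + 1 ≤ (1 + 2*T^(1/α)) * τ ^ (-(1/α)) := by nlinarith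
          have : ((N:ℝ) + 1) * τ ^ q ≤ (1 + 2*T^(1/α)) * τ ^ (q - 1/α) := by
            rw [← hτq, ← mul_assoc]
            exact mul_le_mul_of_nonneg_right hNle (Real.rpow_pos_of_pos hτ q).le
          calc ((N:ℝ≥0∞) + 1) * ENNReal.ofReal (τ ^ q)
              = ENNReal.ofReal (((N:ℝ) + 1) * τ ^ q) := by
                rw [ENNReal.ofReal_mul (by positivity)]
                congr 1
                rw [ENNReal.ofReal_add (by positivity) zero_le_one]
                simp
            _ ≤ _ := ENNReal.ofReal_le_ofReal this
  -- tail bound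
  have tail : (∑' n : ℕ, ENNReal.ofReal ((min τ (1/(((n + (N+1) : ℕ):ℝ)^α + 1))) ^ q))
      ≤ ENNReal.ofReal ((1/(α*q - 1)) * τ ^ (q - 1/α)) := by
    have hterm : ∀ n : ℕ, ENNReal.ofReal ((min τ (1/(((n + (N+1) : ℕ):ℝ)^α + 1))) ^ q)
        ≤ ENNReal.ofReal (((N:ℝ) + 1 + n) ^ (-(α*q))) := by
      intro n
      have hx : (1:ℝ) ≤ (N:ℝ) + 1 + n := by
        have := Nat.cast_nonneg (α := ℝ) N; have := Nat.cast_nonneg (α := ℝ) n; linarith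
      have hxpos : (0:ℝ) < (N:ℝ) + 1 + n := by linarith
      have hcast : (((n + (N+1) : ℕ)):ℝ) = (N:ℝ) + 1 + n := by push_cast; ring
      rw [hcast]
      refine ENNReal.ofReal_le_ofReal ?_
      have h1 : min τ (1/(((N:ℝ) + 1 + n)^α + 1)) ≤ ((N:ℝ) + 1 + n) ^ (-α) := by
        refine le_trans (min_le_right _ _) ?_
        rw [Real.rpow_neg hxpos.le, ← one_div]
        refine one_div_le_one_div_of_le (Real.rpow_pos_of_pos hxpos α) (by linarith)
      calc (min τ (1/(((N:ℝ) + 1 + n)^α + 1))) ^ q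
          ≤ (((N:ℝ) + 1 + n) ^ (-α)) ^ q :=
            Real.rpow_le_rpow (le_min hτ.le (by positivity)) h1 hq0.le
        _ = ((N:ℝ) + 1 + n) ^ (-(α*q)) := by
            rw [← Real.rpow_mul hxpos.le]; ring_nf
    calc _ ≤ ∑' n : ℕ, ENNReal.ofReal (((N:ℝ) + 1 + n) ^ (-(α*q))) := ENNReal.tsum_le_tsum hterm
      _ ≤ ENNReal.ofReal ((N:ℝ) ^ (1 - α*q) / (α*q - 1)) := tailSum _ hαq N hN1
      _ ≤ ENNReal.ofReal ((1/(α*q - 1)) * τ ^ (q - 1/α)) := by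
          refine ENNReal.ofReal_le_ofReal ?_
          rw [div_eq_mul_one_div, mul_comm]
          refine mul_le_mul_of_nonneg_left ?_ hc2.le
          calc (N:ℝ) ^ (1 - α*q) ≤ (τ ^ (-(1/α))) ^ (1 - α*q) :=
              Real.rpow_le_rpow_of_nonpos hτpow hNτ (by linarith)
            _ = τ ^ (q - 1/α) := by
              rw [← Real.rpow_mul hτ.le]
              congr 1
              field_simp
              ring
  calc _ ≤ ENNReal.ofReal ((1 + 2*T^(1/α)) * τ ^ (q - 1/α))
        + ENNReal.ofReal ((1/(α*q - 1)) * τ ^ (q - 1/α)) := add_le_add head tail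
    _ = ENNReal.ofReal (((1 + 2*T^(1/α)) + 1/(α*q - 1)) * τ ^ (q - 1/α)) := by
        rw [← ENNReal.ofReal_add (by positivity) (mul_nonneg hc2.le (Real.rpow_pos_of_pos hτ _).le)]
        ring_nf

lemma lint_exp_bound (w s t : ℝ) (hw : 1 ≤ w) (hst : s ≤ t) :
    ∫⁻ u in Set.Ioc s t, ENNReal.ofReal (Real.exp (-(2*(t-u)*w)))
      ≤ ENNReal.ofReal (min (t-s) (1/(2*w))) := by
  have hw0 : (0:ℝ) < 2*w := by linarith
  have hcont : Continuous fun u : ℝ => Real.exp (-(2*(t-u)*w)) := by fun_prop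
  have bound1 : ∫⁻ u in Set.Ioc s t, ENNReal.ofReal (Real.exp (-(2*(t-u)*w)))
      ≤ ENNReal.ofReal (t-s) := by
    calc ∫⁻ u in Set.Ioc s t, ENNReal.ofReal (Real.exp (-(2*(t-u)*w)))
        ≤ ∫⁻ _ in Set.Ioc s t, 1 := by
          refine setLIntegral_mono measurable_const fun u hu => ?_
          refine ENNReal.ofReal_le_one.mpr (Real.exp_le_one_iff.mpr ?_)
          have h1 : u ≤ t := hu.2
          nlinarith
      _ = ENNReal.ofReal (t-s) := by
          rw [setLIntegral_one, Real.volume_Ioc]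
  have bound2 : ∫⁻ u in Set.Ioc s t, ENNReal.ofReal (Real.exp (-(2*(t-u)*w)))
      ≤ ENNReal.ofReal (1/(2*w)) := by
    have hderiv : ∀ u ∈ Set.uIcc s t, HasDerivAt
        (fun u : ℝ => Real.exp (-(2*(t-u)*w)) / (2*w)) (Real.exp (-(2*(t-u)*w))) u := by
      intro u _
      have h0 : HasDerivAt (fun u : ℝ => -(2*(t-u)*w)) (2*w) u := by
        have he : (fun u : ℝ => -(2*(t-u)*w)) = fun u => 2*w*u - 2*w*t := by
          funext u; ring
        rw [he]
        simpa using ((hasDerivAt_id u).const_mul (2*w)).sub_const (2*w*t)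
      have h1 := (h0.exp).div_const (2*w)
      simpa [mul_div_cancel_right₀ _ (ne_of_gt hw0)] using h1
    have hkey : ∫ u in s..t, Real.exp (-(2*(t-u)*w))
        = Real.exp 0 / (2*w) - Real.exp (-(2*(t-s)*w)) / (2*w) := by
      have := intervalIntegral.integral_eq_sub_of_hasDerivAt hderiv
        (hcont.intervalIntegrable s t)
      rw [this]
      norm_num
    have hIoc : ∫ u in Set.Ioc s t, Real.exp (-(2*(t-u)*w))
        = Real.exp 0 / (2*w) - Real.exp (-(2*(t-s)*w)) / (2*w) := by
      rw [← intervalIntegral.integral_of_le hst, hkey]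
    rw [← ofReal_integral_eq_lintegral_ofReal (hcont.integrableOn_Ioc)
      (Filter.Eventually.of_forall fun u => (Real.exp_pos _).le), hIoc]
    refine ENNReal.ofReal_le_ofReal ?_
    rw [Real.exp_zero]
    exact sub_le_self _ (by positivity)
  rcases le_total (t-s) (1/(2*w)) with h | h
  · rw [min_eq_left h]; exact bound1
  · rw [min_eq_right h]; exact bound2

lemma min_one_div_le (τ x y β : ℝ) (hτ : 0 < τ) (hx : 0 < x) (hy : 0 < y)
    (hβ : 1 ≤ β) (h : x ≤ β * y) : min τ (1/y) ≤ β * min τ (1/x) := by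
  rcases le_total τ (1/x) with hc | hc
  · calc min τ (1/y) ≤ τ := min_le_left _ _
      _ = 1 * τ := (one_mul τ).symm
      _ ≤ β * min τ (1/x) := by
          rw [min_eq_left hc]; exact mul_le_mul hβ le_rfl hτ.le (by linarith)
  · rw [min_eq_right hc]
    calc min τ (1/y) ≤ 1/y := min_le_right _ _
      _ ≤ β * (1/x) := by
          rw [mul_one_div]
          rw [div_le_div_iff₀ hy hx]
          linarith
    
lemma real_chain (T θ τ A B x y q1 q2 β₁ β₂ : ℝ)
    (hθ0 : 0 ≤ θ) (hτ : 0 < τ)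
    (hA : 0 ≤ A) (hB : 0 ≤ B) (hq1 : 0 < q1) (hq2 : 0 < q2) (hsum : q1 + q2 = 1 - 2*θ)
    (hβ₁ : 1 ≤ β₁) (hβ₂ : 1 ≤ β₂) (hx : 0 < x) (hy : 0 < y)
    (hxA : x ≤ β₁ * (A+1)) (hyB : y ≤ β₂ * (B+1)) :
    Real.exp (4*T) * ((A+B+1) ^ (2*θ) * min τ (1/(2*(A+B+1))))
      ≤ (Real.exp (4*T) * β₁^q1 * β₂^q2) * ((min τ (1/x))^q1 * (min τ (1/y))^q2) := by
  set w : ℝ := A + B + 1 with hwdef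
  have hw1 : 1 ≤ w := by simp [hwdef]; linarith
  have hw0 : 0 < w := by linarith
  set m : ℝ := min τ (1/(2*w)) with hmdef
  have hm0 : 0 < m := lt_min hτ (by positivity)
  have h1 : w ^ (2*θ) * m ≤ m ^ (q1 + q2) := by
    have hwm : w ≤ m⁻¹ := by
      have h2 : m ≤ 1/(2*w) := min_le_right _ _
      rw [le_div_iff₀ (by positivity)] at h2
      rw [le_inv_comm₀ hw0 hm0]
      have hinv : w⁻¹ * w = 1 := inv_mul_cancel₀ hw0.ne'
      nlinarith [mul_pos hm0 hw0]
    have h3 : w ^ (2*θ) ≤ (m⁻¹) ^ (2*θ) :=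
      Real.rpow_le_rpow (by linarith) hwm (by linarith)
    have h4 : (m⁻¹ : ℝ) ^ (2*θ) = m ^ (-(2*θ)) := by
      rw [Real.rpow_neg hm0.le, Real.inv_rpow hm0.le]
    calc w ^ (2*θ) * m ≤ m ^ (-(2*θ)) * m ^ (1:ℝ) := by
          rw [← h4, Real.rpow_one]
          exact mul_le_mul_of_nonneg_right h3 hm0.le
      _ = m ^ (q1 + q2) := by
          rw [← Real.rpow_add hm0]; congr 1; linarith
  have hmix : m ^ (q1+q2) = m ^ q1 * m ^ q2 := Real.rpow_add hm0 _ _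
  have h3 : m ^ q1 ≤ β₁ ^ q1 * (min τ (1/x)) ^ q1 := by
    have step1 : m ≤ min τ (1/(A+1)) := by
      refine le_min (min_le_left _ _) (le_trans (min_le_right _ _) ?_)
      refine one_div_le_one_div_of_le (by linarith) (by linarith)
    have step2 : min τ (1/(A+1)) ≤ β₁ * min τ (1/x) :=
      min_one_div_le τ x (A+1) β₁ hτ hx (by linarith) hβ₁ hxA
    calc m ^ q1 ≤ (β₁ * min τ (1/x)) ^ q1 :=
        Real.rpow_le_rpow hm0.le (le_trans step1 step2) hq1.le
      _ = β₁ ^ q1 * (min τ (1/x)) ^ q1 :=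
        Real.mul_rpow (by linarith) (le_min hτ.le (by positivity))
  have h4 : m ^ q2 ≤ β₂ ^ q2 * (min τ (1/y)) ^ q2 := by
    have step1 : m ≤ min τ (1/(B+1)) := by
      refine le_min (min_le_left _ _) (le_trans (min_le_right _ _) ?_)
      refine one_div_le_one_div_of_le (by linarith) (by linarith)
    have step2 : min τ (1/(B+1)) ≤ β₂ * min τ (1/y) :=
      min_one_div_le τ y (B+1) β₂ hτ hy (by linarith) hβ₂ hyB
    calc m ^ q2 ≤ (β₂ * min τ (1/y)) ^ q2 :=
        Real.rpow_le_rpow hm0.le (le_trans step1 step2) hq2.le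
      _ = β₂ ^ q2 * (min τ (1/y)) ^ q2 :=
        Real.mul_rpow (by linarith) (le_min hτ.le (by positivity))
  have hprod : m ^ q1 * m ^ q2 ≤ (β₁ ^ q1 * (min τ (1/x)) ^ q1) * (β₂ ^ q2 * (min τ (1/y)) ^ q2) :=
    mul_le_mul h3 h4 (Real.rpow_nonneg hm0.le _)
      (mul_nonneg (Real.rpow_nonneg (by linarith) _) (Real.rpow_nonneg (le_min hτ.le (by positivity)) _))
  calc Real.exp (4*T) * (w ^ (2*θ) * m)
      ≤ Real.exp (4*T) * ((β₁ ^ q1 * (min τ (1/x)) ^ q1) * (β₂ ^ q2 * (min τ (1/y)) ^ q2)) := by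
        refine mul_le_mul_of_nonneg_left ?_ (Real.exp_pos _).le
        calc w ^ (2*θ) * m ≤ m ^ (q1+q2) := h1
          _ = m ^ q1 * m ^ q2 := hmix
          _ ≤ _ := hprod
    _ = (Real.exp (4*T) * β₁^q1 * β₂^q2) * ((min τ (1/x))^q1 * (min τ (1/y))^q2) := by ring

lemma per_term (T θ s t A B x y q1 q2 β₁ β₂ : ℝ)
    (hθ0 : 0 ≤ θ) (hs : 0 ≤ s) (hst : s < t) (htT : t ≤ T)
    (hA : 0 ≤ A) (hB : 0 ≤ B) (hq1 : 0 < q1) (hq2 : 0 < q2) (hsum : q1 + q2 = 1 - 2*θ)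
    (hβ₁ : 1 ≤ β₁) (hβ₂ : 1 ≤ β₂) (hx : 0 < x) (hy : 0 < y)
    (hxA : x ≤ β₁ * (A+1)) (hyB : y ≤ β₂ * (B+1)) :
    ∫⁻ u in Set.Ioc s t,
        ENNReal.ofReal ((A+B+1) ^ (2*θ) * Real.exp (-(2*(t-u)*((A+B+1) - 2))))
      ≤ ENNReal.ofReal ((Real.exp (4*T) * β₁^q1 * β₂^q2) *
          ((min (t-s) (1/x))^q1 * (min (t-s) (1/y))^q2)) := by
  set w : ℝ := A + B + 1 with hwdef
  have hw1 : 1 ≤ w := by simp only [hwdef]; linarith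
  have hw0 : 0 < w := by linarith
  have hwnn : (0:ℝ) ≤ w ^ (2*θ) := Real.rpow_nonneg (by linarith) _
  have hmeas : Measurable fun u : ℝ =>
      ENNReal.ofReal (Real.exp (4*T) * w ^ (2*θ) * Real.exp (-(2*(t-u)*w))) := by
    fun_prop
  have step1 : ∫⁻ u in Set.Ioc s t, ENNReal.ofReal (w ^ (2*θ) * Real.exp (-(2*(t-u)*(w - 2))))
      ≤ ∫⁻ u in Set.Ioc s t,
          ENNReal.ofReal (Real.exp (4*T) * w ^ (2*θ) * Real.exp (-(2*(t-u)*w))) := by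
    refine setLIntegral_mono hmeas fun u hu => ?_
    refine ENNReal.ofReal_le_ofReal ?_
    have hsplit : Real.exp (-(2*(t-u)*(w - 2)))
        = Real.exp (4*(t-u)) * Real.exp (-(2*(t-u)*w)) := by
      rw [← Real.exp_add]; ring_nf
    have h4 : Real.exp (4*(t-u)) ≤ Real.exp (4*T) := by
      refine Real.exp_le_exp.mpr ?_
      have := hu.1; have := hu.2
      linarith
    have hEW : (0:ℝ) ≤ Real.exp (-(2*(t-u)*w)) := (Real.exp_pos _).le
    calc w ^ (2*θ) * Real.exp (-(2*(t-u)*(w - 2)))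
        = w ^ (2*θ) * Real.exp (4*(t-u)) * Real.exp (-(2*(t-u)*w)) := by rw [hsplit]; ring
      _ ≤ w ^ (2*θ) * Real.exp (4*T) * Real.exp (-(2*(t-u)*w)) :=
          mul_le_mul_of_nonneg_right (mul_le_mul_of_nonneg_left h4 hwnn) hEW
      _ = Real.exp (4*T) * w ^ (2*θ) * Real.exp (-(2*(t-u)*w)) := by ring
  have step2 : ∫⁻ u in Set.Ioc s t,
      ENNReal.ofReal (Real.exp (4*T) * w ^ (2*θ) * Real.exp (-(2*(t-u)*w)))
      ≤ ENNReal.ofReal (Real.exp (4*T) * w ^ (2*θ) * min (t-s) (1/(2*w))) := by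
    have hc : (0:ℝ) ≤ Real.exp (4*T) * w ^ (2*θ) := mul_nonneg (Real.exp_pos _).le hwnn
    calc ∫⁻ u in Set.Ioc s t,
        ENNReal.ofReal (Real.exp (4*T) * w ^ (2*θ) * Real.exp (-(2*(t-u)*w)))
        = ENNReal.ofReal (Real.exp (4*T) * w ^ (2*θ))
            * ∫⁻ u in Set.Ioc s t, ENNReal.ofReal (Real.exp (-(2*(t-u)*w))) := by
          simp_rw [ENNReal.ofReal_mul hc]
          exact lintegral_const_mul _ (by fun_prop)
      _ ≤ ENNReal.ofReal (Real.exp (4*T) * w ^ (2*θ)) * ENNReal.ofReal (min (t-s) (1/(2*w))) :=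
          mul_le_mul_right (lint_exp_bound w s t hw1 hst.le) _
      _ = ENNReal.ofReal (Real.exp (4*T) * w ^ (2*θ) * min (t-s) (1/(2*w))) := by
          rw [← ENNReal.ofReal_mul hc]
  refine le_trans (le_trans step1 step2) (ENNReal.ofReal_le_ofReal ?_)
  have := real_chain T θ (t-s) A B x y q1 q2 β₁ β₂ hθ0 (by linarith) hA hB hq1 hq2 hsum
    hβ₁ hβ₂ hx hy hxA hyB
  calc Real.exp (4*T) * w ^ (2*θ) * min (t-s) (1/(2*w))
      = Real.exp (4*T) * (w ^ (2*θ) * min (t-s) (1/(2*w))) := by ring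
    _ ≤ _ := this

lemma int_sum_le (H : ℕ → ℝ≥0∞) : (∑' k : ℤ, H (k.natAbs)) ≤ 2 * ∑' n : ℕ, H n := by
  have he : Function.Surjective (fun p : Bool × ℕ => (if p.1 then (p.2:ℤ) else -(p.2:ℤ))) := by
    intro k
    rcases le_or_gt 0 k with h | h
    · exact ⟨(true, k.toNat), by simp [Int.toNat_of_nonneg h]⟩
    · exact ⟨(false, (-k).toNat), by simp [Int.toNat_of_nonneg (by linarith : (0:ℤ) ≤ -k)]⟩
  calc (∑' k : ℤ, H (k.natAbs))
      ≤ ∑' p : Bool × ℕ, H ((if p.1 then (p.2:ℤ) else -(p.2:ℤ)).natAbs) :=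
        ENNReal.tsum_le_tsum_comp_of_surjective he _
    _ = ∑' p : Bool × ℕ, H p.2 := by
        refine tsum_congr fun p => ?_
        rcases p with ⟨b, n⟩
        cases b <;> simp
    _ = 2 * ∑' n : ℕ, H n := by
        rw [ENNReal.tsum_prod (f := fun (_ : Bool) (n : ℕ) => H n)]
        simp [tsum_bool, two_mul]

/-- The weight `w_{k,l} = (1-(πk/L)²)² + (πl/L)² + 1`, so that the eigenvalues of the
linearized anisotropic Swift–Hohenberg operator `𝓛₁` on `[-L,L]²` are `-(w_{k,l}-2)`. -/
noncomputable def shWeight (L : ℝ) (kl : ℤ × ℤ) : ℝ :=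
  (1 - (Real.pi * (kl.1 : ℝ) / L) ^ 2) ^ 2 + (Real.pi * (kl.2 : ℝ) / L) ^ 2 + 1

/-- Bound on the quantity `I₂` from the Itô isometry: for `0 ≤ θ < 1/8` there is
`C = C(θ,T,L) > 0` with
`∑_{(k,l)∈ℤ²} ∫_s^t w_{k,l}^{2θ} e^{-2(t-u)(w_{k,l}-2)} du ≤ C (t-s)^{1/4-2θ}`
for all `0 ≤ s < t ≤ T`. -/
theorem stmt_6 (L T θ : ℝ) (hL : 0 < L) (hT : 0 < T) (hθ0 : 0 ≤ θ) (hθ : θ < 1 / 8) :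
    ∃ C > (0:ℝ), ∀ s t : ℝ, 0 ≤ s → s < t → t ≤ T →
      (∑' kl : ℤ × ℤ, ∫⁻ u in Set.Ioc s t,
          ENNReal.ofReal ((shWeight L kl) ^ (2 * θ)
            * Real.exp (-(2 * (t - u) * (shWeight L kl - 2)))))
        ≤ ENNReal.ofReal (C * (t - s) ^ ((1:ℝ)/4 - 2 * θ)) := by
  have ha0 : 0 < Real.pi / L := div_pos Real.pi_pos hL
  set a : ℝ := Real.pi / L with ha
  set q1 : ℝ := 3/8 - θ with hq1def
  set q2 : ℝ := 5/8 - θ with hq2def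
  have hq10 : 0 < q1 := by rw [hq1def]; linarith
  have hq20 : 0 < q2 := by rw [hq2def]; linarith
  obtain ⟨C₁, hC₁, H₁⟩ := sum_min_nat 4 T q1 (by norm_num) (by rw [hq1def]; norm_num; linarith) hT
  obtain ⟨C₂, hC₂, H₂⟩ := sum_min_nat 2 T q2 (by norm_num) (by rw [hq2def]; norm_num; linarith) hT
  set β₁ : ℝ := (4 + a^4)/a^4 with hβ₁def
  set β₂ : ℝ := (1 + a^2)/a^2 with hβ₂def
  have hβ₁ : 1 ≤ β₁ := by rw [hβ₁def, le_div_iff₀ (by positivity)]; nlinarith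
  have hβ₂ : 1 ≤ β₂ := by rw [hβ₂def, le_div_iff₀ (by positivity)]; nlinarith
  have hcomp₁ : ∀ k : ℤ, ((k:ℝ)^4 + 1) ≤ β₁ * ((1 - (a*(k:ℝ))^2)^2 + 1) := by
    intro k
    set K : ℝ := (k:ℝ)
    rw [hβ₁def, div_mul_eq_mul_div, le_div_iff₀ (by positivity)]
    have hid : (K^4+1)*a^4 = ((a*K)^2)^2 + a^4 := by ring
    rw [hid]
    set z : ℝ := (a*K)^2 with hzdef
    have hz0 : 0 ≤ z := sq_nonneg _
    rcases le_total z 2 with hcase | hcase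
    · nlinarith [sq_nonneg (1-z), sq_nonneg a, pow_pos ha0 4]
    · nlinarith [sq_nonneg (z-2), sq_nonneg a, pow_pos ha0 4]
  have hcomp₂ : ∀ l : ℤ, ((l:ℝ)^2 + 1) ≤ β₂ * ((a*(l:ℝ))^2 + 1) := by
    intro l
    rw [hβ₂def, div_mul_eq_mul_div, le_div_iff₀ (by positivity)]
    nlinarith [sq_nonneg (a*(l:ℝ)), sq_nonneg (l:ℝ), sq_nonneg a, sq_nonneg (a^2*(l:ℝ))]
  set K₀ : ℝ := Real.exp (4*T) * β₁^q1 * β₂^q2 with hK₀def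
  have hβ₁0 : (0:ℝ) < β₁ := lt_of_lt_of_le one_pos hβ₁
  have hβ₂0 : (0:ℝ) < β₂ := lt_of_lt_of_le one_pos hβ₂
  have hK₀ : 0 < K₀ := by
    exact mul_pos (mul_pos (Real.exp_pos _) (Real.rpow_pos_of_pos hβ₁0 _))
      (Real.rpow_pos_of_pos hβ₂0 _)
  refine ⟨4 * K₀ * C₁ * C₂, by positivity, fun s t hs hst htT => ?_⟩
  set τ : ℝ := t - s with hτdef
  have hτ0 : 0 < τ := by rw [hτdef]; linarith
  have hτT : τ ≤ T := by rw [hτdef]; linarith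
  set f₁ : ℤ → ℝ := fun k => (min τ (1/((k:ℝ)^4+1)))^q1 with hf₁def
  set f₂ : ℤ → ℝ := fun l => (min τ (1/((l:ℝ)^2+1)))^q2 with hf₂def
  have hf₁nn : ∀ k, 0 ≤ f₁ k := fun k =>
    Real.rpow_nonneg (le_min hτ0.le (by positivity)) _
  have hf₂nn : ∀ l, 0 ≤ f₂ l := fun l =>
    Real.rpow_nonneg (le_min hτ0.le (by positivity)) _
  -- per-term bound
  have hterm : ∀ kl : ℤ × ℤ,
      (∫⁻ u in Set.Ioc s t, ENNReal.ofReal ((shWeight L kl) ^ (2 * θ)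
        * Real.exp (-(2 * (t - u) * (shWeight L kl - 2)))))
      ≤ ENNReal.ofReal (K₀ * (f₁ kl.1 * f₂ kl.2)) := by
    rintro ⟨k, l⟩
    have hw_eq : shWeight L (k, l) = (1 - (a*(k:ℝ))^2)^2 + (a*(l:ℝ))^2 + 1 := by
      simp only [shWeight, ha]
      ring
    rw [hw_eq]
    have := per_term T θ s t ((1 - (a*(k:ℝ))^2)^2) ((a*(l:ℝ))^2)
      ((k:ℝ)^4+1) ((l:ℝ)^2+1) q1 q2 β₁ β₂ hθ0 hs hst htT
      (sq_nonneg _) (sq_nonneg _) hq10 hq20 (by rw [hq1def, hq2def]; ring)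
      hβ₁ hβ₂ (by positivity) (by positivity) (hcomp₁ k) (hcomp₂ l)
    exact this
  calc (∑' kl : ℤ × ℤ, ∫⁻ u in Set.Ioc s t,
          ENNReal.ofReal ((shWeight L kl) ^ (2 * θ)
            * Real.exp (-(2 * (t - u) * (shWeight L kl - 2)))))
      ≤ ∑' kl : ℤ × ℤ, ENNReal.ofReal (K₀ * (f₁ kl.1 * f₂ kl.2)) :=
        ENNReal.tsum_le_tsum hterm
    _ = ENNReal.ofReal K₀ * ((∑' k : ℤ, ENNReal.ofReal (f₁ k)) * (∑' l : ℤ, ENNReal.ofReal (f₂ l))) := by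
        have hrw : ∀ kl : ℤ × ℤ, ENNReal.ofReal (K₀ * (f₁ kl.1 * f₂ kl.2))
            = ENNReal.ofReal K₀ * ENNReal.ofReal (f₁ kl.1) * ENNReal.ofReal (f₂ kl.2) := by
          intro kl
          rw [ENNReal.ofReal_mul hK₀.le, ENNReal.ofReal_mul (hf₁nn _), mul_assoc]
        simp_rw [hrw]
        rw [ENNReal.tsum_prod (f := fun k l =>
          ENNReal.ofReal K₀ * ENNReal.ofReal (f₁ k) * ENNReal.ofReal (f₂ l))]
        have hinner : ∀ k : ℤ, (∑' l : ℤ, ENNReal.ofReal K₀ * ENNReal.ofReal (f₁ k) * ENNReal.ofReal (f₂ l))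
            = ENNReal.ofReal K₀ * ENNReal.ofReal (f₁ k) * (∑' l : ℤ, ENNReal.ofReal (f₂ l)) := by
          intro k; rw [ENNReal.tsum_mul_left]
        simp_rw [hinner]
        have houter : ∀ k : ℤ, ENNReal.ofReal K₀ * ENNReal.ofReal (f₁ k) * (∑' l : ℤ, ENNReal.ofReal (f₂ l))
            = (ENNReal.ofReal K₀ * (∑' l : ℤ, ENNReal.ofReal (f₂ l))) * ENNReal.ofReal (f₁ k) := by
          intro k; ring
        simp_rw [houter]
        rw [ENNReal.tsum_mul_left]
        ring
    _ ≤ ENNReal.ofReal K₀ * ((2 * ENNReal.ofReal (C₁ * τ ^ (q1 - 1/4)))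
          * (2 * ENNReal.ofReal (C₂ * τ ^ (q2 - 1/2)))) := by
        refine mul_le_mul_right (mul_le_mul' ?_ ?_) _
        · -- k-sum
          have hev : ∀ k : ℤ, ENNReal.ofReal (f₁ k)
              = (fun n : ℕ => ENNReal.ofReal ((min τ (1/((n:ℝ)^4+1)))^q1)) k.natAbs := by
            intro k
            have : ((k.natAbs : ℕ):ℝ)^4 = (k:ℝ)^4 := by
              rw [Nat.cast_natAbs, Int.cast_abs]
              exact (pow_abs _ _).trans (abs_of_nonneg (by positivity))
            simp only [hf₁def, this]
          calc (∑' k : ℤ, ENNReal.ofReal (f₁ k))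
              = ∑' k : ℤ, (fun n : ℕ => ENNReal.ofReal ((min τ (1/((n:ℝ)^4+1)))^q1)) k.natAbs :=
                tsum_congr hev
            _ ≤ 2 * ∑' n : ℕ, ENNReal.ofReal ((min τ (1/((n:ℝ)^4+1)))^q1) := int_sum_le _
            _ ≤ 2 * ENNReal.ofReal (C₁ * τ ^ (q1 - 1/4)) := by
                refine mul_le_mul_right ?_ _
                have h4 : ∀ n : ℕ, ((n:ℝ))^(4:ℝ) = (n:ℝ)^(4:ℕ) := by
                  intro n
                  rw [show (4:ℝ) = ((4:ℕ):ℝ) by norm_num, Real.rpow_natCast]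
                have := H₁ τ hτ0 hτT
                simp_rw [h4] at this
                exact this
        · -- l-sum
          have hev : ∀ l : ℤ, ENNReal.ofReal (f₂ l)
              = (fun n : ℕ => ENNReal.ofReal ((min τ (1/((n:ℝ)^2+1)))^q2)) l.natAbs := by
            intro l
            have : ((l.natAbs : ℕ):ℝ)^2 = (l:ℝ)^2 := by
              rw [Nat.cast_natAbs, Int.cast_abs]
              exact (pow_abs _ _).trans (abs_of_nonneg (by positivity))
            simp only [hf₂def, this]
          calc (∑' l : ℤ, ENNReal.ofReal (f₂ l))
              = ∑' l : ℤ, (fun n : ℕ => ENNReal.ofReal ((min τ (1/((n:ℝ)^2+1)))^q2)) l.natAbs :=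
                tsum_congr hev
            _ ≤ 2 * ∑' n : ℕ, ENNReal.ofReal ((min τ (1/((n:ℝ)^2+1)))^q2) := int_sum_le _
            _ ≤ 2 * ENNReal.ofReal (C₂ * τ ^ (q2 - 1/2)) := by
                refine mul_le_mul_right ?_ _
                have h2 : ∀ n : ℕ, ((n:ℝ))^(2:ℝ) = (n:ℝ)^(2:ℕ) := by
                  intro n
                  rw [show (2:ℝ) = ((2:ℕ):ℝ) by norm_num, Real.rpow_natCast]
                have := H₂ τ hτ0 hτT
                simp_rw [h2] at this
                exact this
    _ = ENNReal.ofReal ((4 * K₀ * C₁ * C₂) * τ ^ ((1:ℝ)/4 - 2 * θ)) := by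
        have e2 : (2:ℝ≥0∞) = ENNReal.ofReal 2 := by norm_num
        rw [e2, ← ENNReal.ofReal_mul (by norm_num), ← ENNReal.ofReal_mul (by norm_num),
          ← ENNReal.ofReal_mul ?hh, ← ENNReal.ofReal_mul hK₀.le]
        case hh => positivity
        congr 1
        have hττ : τ ^ (q1 - 1/4) * τ ^ (q2 - 1/2) = τ ^ ((1:ℝ)/4 - 2*θ) := by
          rw [← Real.rpow_add hτ0]
          congr 1
          rw [hq1def, hq2def]; ring
        calc K₀ * (2 * (C₁ * τ ^ (q1 - 1/4)) * (2 * (C₂ * τ ^ (q2 - 1/2))))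
            = (4 * K₀ * C₁ * C₂) * (τ ^ (q1 - 1/4) * τ ^ (q2 - 1/2)) := by ring
          _ = (4 * K₀ * C₁ * C₂) * τ ^ ((1:ℝ)/4 - 2*θ) := by rw [hττ]
end

section
/- Let $L > 0$, $T > 0$ and $\theta, \gamma \ge 0$ with $\theta + \gamma < 1/8$, and for $(k,l) \in \mathbb{Z}^2$ set $w_{k,l} = (1-(\pi k/L)^2)^2 + (\pi l/L)^2 + 1$. Then there exists a constant $C = C(\gamma, \theta, T, L) > 0$ such that for all $0 \le s \le t \le T$, $\sum_{(k,l)\in\mathbb{Z}^2} \int_0^s w_{k,l}^{2\theta}\, \big(e^{-(t-u)(w_{k,l}-2)} - e^{-(s-u)(w_{k,l}-2)}\big)^2\,du \;\le\; C\,(t-s)^{2\gamma}$. -/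
open scoped ENNReal
open MeasureTheory

section aux

/-- `(1 - e^{-x})^2 ≤ x^p` for `0 ≤ x`, `0 ≤ p ≤ 2`. -/
lemma aux_one_sub_exp_sq_le {x p : ℝ} (hx : 0 ≤ x) (hp0 : 0 ≤ p) (hp2 : p ≤ 2) :
    (1 - Real.exp (-x)) ^ 2 ≤ x ^ p := by
  rcases le_or_gt x 1 with hx1 | hx1
  · rcases eq_or_lt_of_le hx with rfl | hx0
    · have h := Real.rpow_nonneg (le_refl (0:ℝ)) p
      simpa using h
    · have h1 : 1 - Real.exp (-x) ≤ x := by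
        have := Real.add_one_le_exp (-x)
        linarith
      have h0 : 0 ≤ 1 - Real.exp (-x) := by
        have : Real.exp (-x) ≤ 1 := Real.exp_le_one_iff.mpr (by linarith)
        linarith
      calc (1 - Real.exp (-x)) ^ 2 ≤ x ^ 2 := by nlinarith
        _ = x ^ (2 : ℝ) := by rw [← Real.rpow_natCast x 2]; norm_num
        _ ≤ x ^ p := Real.rpow_le_rpow_of_exponent_ge hx0 hx1 hp2
  · have h0 : 0 < Real.exp (-x) := Real.exp_pos _
    have h1 : Real.exp (-x) ≤ 1 := Real.exp_le_one_iff.mpr (by linarith)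
    calc (1 - Real.exp (-x)) ^ 2 ≤ 1 := by nlinarith
      _ ≤ x ^ p := Real.one_le_rpow hx1.le hp0

/-- `|e^c - e^d| ≤ e^M |c - d|` when `c, d ≤ M`. -/
lemma aux_abs_exp_sub_exp_le {c d M : ℝ} (hc : c ≤ M) (hd : d ≤ M) :
    |Real.exp c - Real.exp d| ≤ Real.exp M * |c - d| := by
  have key : ∀ a b : ℝ, b ≤ a → a ≤ M → Real.exp a - Real.exp b ≤ Real.exp M * (a - b) := by
    intro a b hba haM
    have h1 : b - a + 1 ≤ Real.exp (b - a) := Real.add_one_le_exp _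
    have h2 : Real.exp a * Real.exp (b - a) = Real.exp b := by
      rw [← Real.exp_add]; ring_nf
    have h3 : Real.exp a ≤ Real.exp M := Real.exp_le_exp.mpr haM
    have h4 : Real.exp a - Real.exp b ≤ Real.exp a * (a - b) := by nlinarith [Real.exp_pos a]
    nlinarith [Real.exp_pos a]
  rcases le_total d c with h | h
  · rw [abs_of_nonneg (sub_nonneg.mpr (Real.exp_le_exp.mpr h)), abs_of_nonneg (sub_nonneg.mpr h)]
    exact key c d h hc
  · rw [abs_sub_comm, abs_sub_comm c d,
      abs_of_nonneg (sub_nonneg.mpr (Real.exp_le_exp.mpr h)), abs_of_nonneg (sub_nonneg.mpr h)]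
    exact key d c h hd

/-- Weighted GM ≤ max ≤ sum: `(1+B)^p (1+C)^q ≤ (1+B+C)^(p+q)` for nonneg quantities. -/
lemma aux_gm_le {B C p q : ℝ} (hB : 0 ≤ B) (hC : 0 ≤ C) (hp : 0 ≤ p) (hq : 0 ≤ q) :
    (1 + B) ^ p * (1 + C) ^ q ≤ (1 + B + C) ^ (p + q) := by
  have hm : (0:ℝ) < 1 + B + C := by linarith
  calc (1 + B) ^ p * (1 + C) ^ q
      ≤ (1 + B + C) ^ p * (1 + B + C) ^ q :=
        mul_le_mul (Real.rpow_le_rpow (by linarith) (by linarith) hp)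
          (Real.rpow_le_rpow (by linarith) (by linarith) hq)
          (Real.rpow_nonneg (by linarith) q) (Real.rpow_nonneg hm.le p)
    _ = (1 + B + C) ^ (p + q) := (Real.rpow_add hm p q).symm

/-- The exponential set-lintegral bound. -/
lemma aux_lint_exp {s b : ℝ} (hs : 0 ≤ s) (hb : 0 < b) :
    ∫⁻ u in Set.Ioc 0 s, ENNReal.ofReal (Real.exp (-((s - u) * b))) ≤ ENNReal.ofReal (1 / b) := by
  have hcont : Continuous fun u : ℝ => Real.exp (-((s - u) * b)) := by fun_prop
  have hint : IntegrableOn (fun u : ℝ => Real.exp (-((s - u) * b))) (Set.Ioc 0 s) :=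
    hcont.integrableOn_Ioc
  rw [← MeasureTheory.ofReal_integral_eq_lintegral_ofReal hint
      (Filter.Eventually.of_forall fun u => (Real.exp_pos _).le)]
  apply ENNReal.ofReal_le_ofReal
  have hF : ∀ u : ℝ, HasDerivAt (fun v => Real.exp (-((s - v) * b)) / b)
      (Real.exp (-((s - u) * b))) u := by
    intro u
    have h1 : HasDerivAt (fun v : ℝ => -((s - v) * b)) b u := by
      exact (((hasDerivAt_id u).const_sub s).mul_const b).neg.congr_deriv (by ring)
    have h2 := (h1.exp).div_const b
    simpa [mul_div_assoc, mul_div_cancel_right₀ _ hb.ne'] using h2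
  have hIoc : ∫ u in Set.Ioc 0 s, Real.exp (-((s - u) * b))
      = ∫ u in (0:ℝ)..s, Real.exp (-((s - u) * b)) := (intervalIntegral.integral_of_le hs).symm
  rw [hIoc, intervalIntegral.integral_eq_sub_of_hasDerivAt (fun u _ => hF u)
      (hcont.intervalIntegrable 0 s)]
  have h1 : Real.exp (-((s - s) * b)) = 1 := by norm_num
  rw [h1]
  have h2 : 0 < Real.exp (-((s - 0) * b)) := Real.exp_pos _
  rw [div_sub_div_same, one_div]
  rw [div_le_iff₀ hb, inv_mul_cancel₀ hb.ne']
  linarith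

lemma aux_finite_int (A : ℝ) : ({k : ℤ | |(k : ℝ)| ≤ A}).Finite := by
  apply Set.Finite.subset (Set.finite_Icc (-(⌈A⌉)) ⌈A⌉)
  intro k hk
  simp only [Set.mem_setOf_eq] at hk
  have h1 : (k : ℝ) ≤ A := (le_abs_self _).trans hk
  have h2 : -A ≤ (k : ℝ) := by
    have h3 : -(k:ℝ) ≤ |(k:ℝ)| := neg_le_abs _
    linarith
  have hceil : A ≤ (⌈A⌉ : ℝ) := Int.le_ceil A
  simp only [Set.mem_Icc]
  constructor
  · exact_mod_cast (by linarith : -(⌈A⌉:ℝ) ≤ (k:ℝ))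
  · exact_mod_cast h1.trans hceil

lemma aux_summable_int {f : ℤ → ℝ} {S : Set ℤ} (hS : S.Finite) {c r : ℝ} (hr : 1 < r)
    (hf0 : ∀ n, 0 ≤ f n) (hbound : ∀ n ∉ S, f n ≤ c * |(n : ℝ)| ^ (-r)) : Summable f := by
  rw [← hS.summable_compl_iff]
  exact Summable.of_nonneg_of_le (fun n => hf0 _) (fun n => hbound n.1 n.2)
    (((Real.summable_abs_int_rpow hr).mul_left c).subtype _)

lemma aux_summable_k {L p : ℝ} (hL : 0 < L) (hp : 1 / 4 < p) :
    Summable fun k : ℤ => (1 + (1 - (Real.pi * (k : ℝ) / L) ^ 2) ^ 2) ^ (-p) := by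
  have hπ := Real.pi_pos
  set c : ℝ := (Real.pi / L) ^ 4 / 4 with hcdef
  have hc : 0 < c := by positivity
  apply aux_summable_int (S := {k : ℤ | |(k : ℝ)| ≤ 2 * L / Real.pi})
    (aux_finite_int _) (c := c ^ (-p)) (r := 4 * p) (by linarith)
    (fun n => Real.rpow_nonneg (by positivity) _)
  intro k hk
  simp only [Set.mem_setOf_eq, not_le] at hk
  have hk0 : (k : ℝ) ≠ 0 := by
    intro h; rw [h] at hk; simp at hk
    have : 0 < 2 * L / Real.pi := by positivity
    linarith
  have hy2 : 2 ≤ (Real.pi / L) ^ 2 * (k : ℝ) ^ 2 := by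
    have h1 : 2 * L / Real.pi < |(k : ℝ)| := hk
    have h2 : 2 * L < Real.pi * |(k : ℝ)| := by
      rw [div_lt_iff₀ hπ] at h1; linarith
    have h3 : (2 * L) ^ 2 ≤ (Real.pi * |(k : ℝ)|) ^ 2 := by
      apply sq_le_sq' <;> nlinarith [abs_nonneg (k:ℝ)]
    have h4 : Real.pi ^ 2 * (k : ℝ) ^ 2 = (Real.pi * |(k:ℝ)|) ^ 2 := by
      rw [mul_pow, sq_abs]
    rw [div_pow, div_mul_eq_mul_div, le_div_iff₀ (by positivity : (0:ℝ) < L ^ 2)]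
    nlinarith
  set y : ℝ := (Real.pi / L) ^ 2 * (k : ℝ) ^ 2 with hydef
  have hbase : c * (k : ℝ) ^ 4 ≤ 1 + (1 - (Real.pi * (k : ℝ) / L) ^ 2) ^ 2 := by
    have e1 : (Real.pi * (k : ℝ) / L) ^ 2 = y := by rw [hydef]; field_simp
    have e2 : c * (k : ℝ) ^ 4 = (y / 2) ^ 2 := by rw [hydef, hcdef]; ring
    have e3 : (y / 2) ^ 2 ≤ (1 - y) ^ 2 := by nlinarith
    rw [e1, e2]; nlinarith [sq_nonneg (1 - y)]
  have hck : 0 < c * (k : ℝ) ^ 4 := by positivity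
  calc (1 + (1 - (Real.pi * (k : ℝ) / L) ^ 2) ^ 2) ^ (-p)
      ≤ (c * (k : ℝ) ^ 4) ^ (-p) :=
        Real.rpow_le_rpow_of_nonpos hck hbase (by linarith)
    _ = c ^ (-p) * |(k : ℝ)| ^ (-(4 * p)) := by
        rw [Real.mul_rpow hc.le (by positivity)]
        congr 1
        rw [show ((k:ℝ)) ^ 4 = |(k:ℝ)| ^ (4:ℕ) by rw [pow_abs, abs_of_nonneg (by positivity)],
          ← Real.rpow_natCast |(k:ℝ)| 4, ← Real.rpow_mul (abs_nonneg _)]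
        norm_num

lemma aux_summable_l {L q : ℝ} (hL : 0 < L) (hq : 1 / 2 < q) :
    Summable fun l : ℤ => (1 + (Real.pi * (l : ℝ) / L) ^ 2) ^ (-q) := by
  have hπ := Real.pi_pos
  set c : ℝ := (Real.pi / L) ^ 2 with hcdef
  have hc : 0 < c := by positivity
  apply aux_summable_int (S := {(0 : ℤ)}) (Set.finite_singleton _)
    (c := c ^ (-q)) (r := 2 * q) (by linarith)
    (fun n => Real.rpow_nonneg (by positivity) _)
  intro l hl
  have hl0 : (l : ℝ) ≠ 0 := by exact_mod_cast fun h => hl (by simpa using h)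
  have hbase : c * (l : ℝ) ^ 2 ≤ 1 + (Real.pi * (l : ℝ) / L) ^ 2 := by
    have e1 : (Real.pi * (l : ℝ) / L) ^ 2 = c * (l : ℝ) ^ 2 := by
      rw [hcdef]; field_simp
    rw [e1]; linarith
  have hcl : 0 < c * (l : ℝ) ^ 2 := by positivity
  calc (1 + (Real.pi * (l : ℝ) / L) ^ 2) ^ (-q)
      ≤ (c * (l : ℝ) ^ 2) ^ (-q) := Real.rpow_le_rpow_of_nonpos hcl hbase (by linarith)
    _ = c ^ (-q) * |(l : ℝ)| ^ (-(2 * q)) := by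
        rw [Real.mul_rpow hc.le (by positivity)]
        congr 1
        rw [show ((l:ℝ)) ^ 2 = |(l:ℝ)| ^ (2:ℕ) by rw [pow_abs, abs_of_nonneg (by positivity)],
          ← Real.rpow_natCast |(l:ℝ)| 2, ← Real.rpow_mul (abs_nonneg _)]
        norm_num

end aux

set_option maxHeartbeats 2000000 in
/-- Bound on the quantity `I₁` from the Itô isometry: for `θ, γ ≥ 0` with `θ + γ < 1/8`
there is `C = C(γ,θ,T,L) > 0` with
`∑_{(k,l)∈ℤ²} ∫_0^s w_{k,l}^{2θ} (e^{-(t-u)(w_{k,l}-2)} - e^{-(s-u)(w_{k,l}-2)})² du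
  ≤ C (t-s)^{2γ}` for all `0 ≤ s ≤ t ≤ T`. -/
theorem stmt_7 (L T θ γ : ℝ) (hL : 0 < L) (hT : 0 < T) (hθ0 : 0 ≤ θ) (hγ0 : 0 ≤ γ)
    (hθγ : θ + γ < 1 / 8) :
    ∃ C > (0:ℝ), ∀ s t : ℝ, 0 ≤ s → s ≤ t → t ≤ T →
      (∑' kl : ℤ × ℤ, ∫⁻ u in Set.Ioc 0 s,
          ENNReal.ofReal ((shWeight L kl) ^ (2 * θ)
            * (Real.exp (-((t - u) * (shWeight L kl - 2)))
                - Real.exp (-((s - u) * (shWeight L kl - 2)))) ^ 2))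
        ≤ ENNReal.ofReal (C * (t - s) ^ (2 * γ)) := by
  have hπ := Real.pi_pos
  obtain ⟨α, hαdef⟩ : ∃ x : ℝ, x = 1 - 2*θ - 2*γ := ⟨_, rfl⟩
  have hα : 3/4 < α := by rw [hαdef]; linarith
  have hα1 : α ≤ 1 := by rw [hαdef]; linarith
  obtain ⟨p, hpdef⟩ : ∃ x : ℝ, x = α/2 - 1/8 := ⟨_, rfl⟩
  obtain ⟨q, hqdef⟩ : ∃ x : ℝ, x = α/2 + 1/8 := ⟨_, rfl⟩
  have hp : 1/4 < p := by rw [hpdef]; linarith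
  have hq : 1/2 < q := by rw [hqdef]; linarith
  have hp0 : 0 ≤ p := by linarith
  have hq0 : 0 ≤ q := by linarith
  have hpq : p + q = α := by rw [hpdef, hqdef]; ring
  have hsk := aux_summable_k hL hp
  have hsl := aux_summable_l hL hq
  have hprod : Summable (fun kl : ℤ × ℤ =>
      (1 + (1 - (Real.pi * (kl.1:ℝ)/L)^2)^2)^(-p) * (1 + (Real.pi * (kl.2:ℝ)/L)^2)^(-q)) :=
    hsk.mul_of_nonneg hsl (fun k => Real.rpow_nonneg (by positivity) _)
      (fun l => Real.rpow_nonneg (by positivity) _)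
  obtain ⟨c₀, hc₀def⟩ : ∃ x : ℝ, x = T * (Real.exp (2*T) * (T ^ (2 - 2*γ) * (3:ℝ) ^ (2*θ))) :=
    ⟨_, rfl⟩
  obtain ⟨c₁, hc₁def⟩ : ∃ x : ℝ, x = 3 * (3:ℝ) ^ (2*θ) := ⟨_, rfl⟩
  have hc₀ : 0 < c₀ := by rw [hc₀def]; positivity
  have hc₁ : 0 < c₁ := by rw [hc₁def]; positivity
  obtain ⟨g, hgdef⟩ : ∃ g : ℤ × ℤ → ℝ, g = fun kl => if shWeight L kl < 3 then c₀
    else c₁ * ((1 + (1 - (Real.pi * (kl.1:ℝ)/L)^2)^2)^(-p)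
      * (1 + (Real.pi * (kl.2:ℝ)/L)^2)^(-q)) := ⟨_, rfl⟩
  have hg0 : ∀ kl, 0 ≤ g kl := by
    intro kl
    rw [hgdef]
    dsimp only
    split
    · exact hc₀.le
    · positivity
  have hSfin : ({kl : ℤ × ℤ | shWeight L kl < 3}).Finite := by
    have hfp : (({k : ℤ | |(k:ℝ)| ≤ 2*L/Real.pi} ×ˢ {l : ℤ | |(l:ℝ)| ≤ 2*L/Real.pi}) :
        Set (ℤ × ℤ)).Finite :=
      Set.Finite.prod (aux_finite_int (2*L/Real.pi)) (aux_finite_int (2*L/Real.pi))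
    apply hfp.subset
    rintro ⟨k, l⟩ hkl
    simp only [Set.mem_setOf_eq, shWeight] at hkl
    have habs : ∀ x : ℝ, x ^ 2 < 3 → |x| < 2 := by
      intro x hx
      nlinarith [sq_abs x, sq_nonneg (|x| - 2), abs_nonneg x]
    have hmem : ∀ m : ℤ, |Real.pi * (m:ℝ) / L| < 2 → |(m:ℝ)| ≤ 2*L/Real.pi := by
      intro m hm
      rw [le_div_iff₀ hπ]
      have e1 : |Real.pi * (m:ℝ) / L| = Real.pi * |(m:ℝ)| / L := by
        rw [abs_div, abs_mul, abs_of_pos hπ, abs_of_pos hL]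
      rw [e1, div_lt_iff₀ hL] at hm
      linarith
    have hBk : (1 - (Real.pi * (k:ℝ) / L) ^ 2) ^ 2 < 2 := by
      nlinarith [sq_nonneg (Real.pi * (l:ℝ) / L)]
    have hCl : (Real.pi * (l:ℝ) / L) ^ 2 < 2 := by
      nlinarith [sq_nonneg (1 - (Real.pi * (k:ℝ) / L) ^ 2)]
    have hk2 : (Real.pi * (k:ℝ) / L) ^ 2 < 3 := by
      nlinarith [sq_nonneg (1 - (Real.pi * (k:ℝ) / L) ^ 2),
        sq_nonneg ((Real.pi * (k:ℝ) / L) ^ 2 - 3)]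
    have hl2 : (Real.pi * (l:ℝ) / L) ^ 2 < 3 := by linarith
    exact ⟨hmem k (habs _ hk2), hmem l (habs _ hl2)⟩
  have hg : Summable g := by
    rw [← hSfin.summable_compl_iff]
    apply Summable.of_nonneg_of_le (fun n => hg0 _) ?_ ((hprod.mul_left c₁).subtype _)
    rintro ⟨kl, hkl⟩
    have hkl' : ¬ shWeight L kl < 3 := hkl
    simp only [Function.comp_apply, hgdef]
    rw [if_neg hkl']
  refine ⟨∑' kl, g kl + 1, by have h : 0 ≤ ∑' kl, g kl := tsum_nonneg hg0; linarith, ?_⟩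
  intro s t hs hst htT
  have hts0 : (0:ℝ) ≤ t - s := by linarith
  have hD0 : 0 ≤ (t - s) ^ (2*γ) := Real.rpow_nonneg hts0 _
  have key : ∀ kl : ℤ × ℤ,
      (∫⁻ u in Set.Ioc 0 s,
        ENNReal.ofReal ((shWeight L kl) ^ (2 * θ)
          * (Real.exp (-((t - u) * (shWeight L kl - 2)))
              - Real.exp (-((s - u) * (shWeight L kl - 2)))) ^ 2))
        ≤ ENNReal.ofReal (g kl * (t - s) ^ (2*γ)) := by
    intro kl
    have hgval : g kl = if shWeight L kl < 3 then c₀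
        else c₁ * ((1 + (1 - (Real.pi * (kl.1:ℝ)/L)^2)^2)^(-p)
          * (1 + (Real.pi * (kl.2:ℝ)/L)^2)^(-q)) := by rw [hgdef]
    obtain ⟨B, hBdef⟩ : ∃ x : ℝ, x = (1 - (Real.pi * (kl.1:ℝ)/L)^2)^2 := ⟨_, rfl⟩
    obtain ⟨Cl, hCldef⟩ : ∃ x : ℝ, x = (Real.pi * (kl.2:ℝ)/L)^2 := ⟨_, rfl⟩
    have hB0 : 0 ≤ B := by rw [hBdef]; positivity
    have hC0 : 0 ≤ Cl := by rw [hCldef]; positivity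
    have hwBC : shWeight L kl = B + Cl + 1 := by rw [hBdef, hCldef, shWeight]
    set w : ℝ := shWeight L kl with hwdef
    have hw1 : 1 ≤ w := by rw [hwBC]; linarith
    set a : ℝ := w - 2 with hadef
    rcases lt_or_ge w 3 with hw3 | hw3
    · -- small eigenvalue case
      have hgkl : g kl = c₀ := by rw [hgval, if_pos hw3]
      rcases eq_or_lt_of_le hst with rfl | hst'
      · have h0 : (fun u : ℝ => ENNReal.ofReal (w ^ (2*θ)
            * (Real.exp (-((s - u) * a)) - Real.exp (-((s - u) * a))) ^ 2)) = fun _ => 0 := by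
          funext u; simp
        rw [h0, lintegral_zero]
        exact zero_le
      · have hts : (0:ℝ) < t - s := by linarith
        have ha1 : |a| ≤ 1 := abs_le.mpr ⟨by rw [hadef]; linarith, by rw [hadef]; linarith⟩
        set K₂ : ℝ := Real.exp (2*T) * (T ^ (2-2*γ) * ((3:ℝ)^(2*θ) * (t-s)^(2*γ))) with hK₂def
        have hK₂0 : 0 ≤ K₂ := by rw [hK₂def]; positivity
        have hpt : ∀ u ∈ Set.Ioc (0:ℝ) s,
            w ^ (2*θ) * (Real.exp (-((t - u) * a)) - Real.exp (-((s - u) * a))) ^ 2 ≤ K₂ := by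
          intro u hu
          obtain ⟨hu0, hus⟩ := hu
          have hb1 : -((t-u)*a) ≤ T := by
            calc -((t-u)*a) ≤ |(t-u)*a| := neg_le_abs _
              _ = (t-u) * |a| := by rw [abs_mul, abs_of_nonneg (by linarith : (0:ℝ) ≤ t - u)]
              _ ≤ T * 1 := mul_le_mul (by linarith) ha1 (abs_nonneg a) (by linarith)
              _ = T := mul_one T
          have hb2 : -((s-u)*a) ≤ T := by
            calc -((s-u)*a) ≤ |(s-u)*a| := neg_le_abs _
              _ = (s-u) * |a| := by rw [abs_mul, abs_of_nonneg (by linarith : (0:ℝ) ≤ s - u)]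
              _ ≤ T * 1 := mul_le_mul (by linarith) ha1 (abs_nonneg a) (by linarith)
              _ = T := mul_one T
          have h3 := aux_abs_exp_sub_exp_le hb1 hb2
          have h4 : |(-((t-u)*a)) - (-((s-u)*a))| = (t-s) * |a| := by
            rw [show (-((t-u)*a)) - (-((s-u)*a)) = -((t-s)*a) by ring, abs_neg, abs_mul,
              abs_of_nonneg hts.le]
          have h5 : |Real.exp (-((t-u)*a)) - Real.exp (-((s-u)*a))| ≤ Real.exp T * (t-s) := by
            calc |Real.exp (-((t-u)*a)) - Real.exp (-((s-u)*a))|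
                ≤ Real.exp T * ((t-s)*|a|) := by rw [← h4]; exact h3
              _ ≤ Real.exp T * ((t-s)*1) := by
                  apply mul_le_mul_of_nonneg_left _ (Real.exp_pos T).le
                  exact mul_le_mul_of_nonneg_left ha1 hts.le
              _ = Real.exp T * (t-s) := by ring
          have h6 : (Real.exp (-((t-u)*a)) - Real.exp (-((s-u)*a))) ^ 2
              ≤ (Real.exp T * (t-s)) ^ 2 := by
            rw [← sq_abs]
            exact pow_le_pow_left₀ (abs_nonneg _) h5 2
          have h7 : (Real.exp T * (t-s)) ^ 2 = Real.exp (2*T) * (t-s)^2 := by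
            rw [mul_pow, sq (Real.exp T), ← Real.exp_add, show T + T = 2*T from by ring]
          have h8 : (t-s:ℝ) ^ (2:ℕ) = (t-s)^(2-2*γ) * (t-s)^(2*γ) := by
            rw [← Real.rpow_natCast (t-s) 2, ← Real.rpow_add hts]
            norm_num
          have h9 : (t-s)^(2-2*γ) ≤ T^(2-2*γ) :=
            Real.rpow_le_rpow hts.le (by linarith) (by linarith)
          have h10 : w^(2*θ) ≤ (3:ℝ)^(2*θ) :=
            Real.rpow_le_rpow (by linarith) (by linarith) (by positivity)
          have hA : (Real.exp (-((t-u)*a)) - Real.exp (-((s-u)*a))) ^ 2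
              ≤ Real.exp (2*T) * (T^(2-2*γ) * (t-s)^(2*γ)) := by
            calc (Real.exp (-((t-u)*a)) - Real.exp (-((s-u)*a))) ^ 2
                ≤ Real.exp (2*T) * (t-s)^2 := h7 ▸ h6
              _ = Real.exp (2*T) * ((t-s)^(2-2*γ) * (t-s)^(2*γ)) := by rw [← h8]
              _ ≤ Real.exp (2*T) * (T^(2-2*γ) * (t-s)^(2*γ)) := by
                  apply mul_le_mul_of_nonneg_left _ (Real.exp_pos _).le
                  exact mul_le_mul_of_nonneg_right h9 hD0
          calc w ^ (2*θ) * (Real.exp (-((t-u)*a)) - Real.exp (-((s-u)*a))) ^ 2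
              ≤ (3:ℝ)^(2*θ) * (Real.exp (2*T) * (T^(2-2*γ) * (t-s)^(2*γ))) :=
                mul_le_mul h10 hA (sq_nonneg _) (by positivity)
            _ = K₂ := by rw [hK₂def]; ring
        calc ∫⁻ u in Set.Ioc 0 s,
              ENNReal.ofReal (w ^ (2*θ)
                * (Real.exp (-((t - u) * a)) - Real.exp (-((s - u) * a))) ^ 2)
            ≤ ∫⁻ _ in Set.Ioc (0:ℝ) s, ENNReal.ofReal K₂ :=
              setLIntegral_mono measurable_const
                (fun u hu => ENNReal.ofReal_le_ofReal (hpt u hu))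
          _ = ENNReal.ofReal K₂ * volume (Set.Ioc (0:ℝ) s) := setLIntegral_const _ _
          _ ≤ ENNReal.ofReal K₂ * ENNReal.ofReal T := by
              rw [Real.volume_Ioc]
              exact mul_le_mul_right (ENNReal.ofReal_le_ofReal (by linarith)) _
          _ = ENNReal.ofReal (K₂ * T) := (ENNReal.ofReal_mul hK₂0).symm
          _ = ENNReal.ofReal (g kl * (t-s)^(2*γ)) := by
              rw [hgkl, hK₂def, hc₀def]; congr 1; ring
    · -- large eigenvalue case
      have hgkl : g kl = c₁ * ((1 + B)^(-p) * (1 + Cl)^(-q)) := by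
        rw [hgval, hBdef, hCldef, if_neg (not_lt.mpr hw3)]
      have ha1 : 1 ≤ a := by rw [hadef]; linarith
      have ha0 : 0 < a := by linarith
      have hid : ∀ u : ℝ, ENNReal.ofReal (w^(2*θ)
          * (Real.exp (-((t-u)*a)) - Real.exp (-((s-u)*a))) ^ 2)
          = ENNReal.ofReal (w^(2*θ) * (1 - Real.exp (-((t-s)*a))) ^ 2)
            * ENNReal.ofReal (Real.exp (-((s-u)*(2*a)))) := by
        intro u
        rw [← ENNReal.ofReal_mul (by positivity)]
        congr 1
        have e1 : Real.exp (-((t-u)*a)) = Real.exp (-((s-u)*a)) * Real.exp (-((t-s)*a)) := by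
          rw [← Real.exp_add]; congr 1; ring
        have e2 : Real.exp (-((s-u)*(2*a)))
            = Real.exp (-((s-u)*a)) * Real.exp (-((s-u)*a)) := by
          rw [← Real.exp_add]; congr 1; ring
        rw [e1, e2]; ring
      set K₁ : ℝ := w^(2*θ) * (1 - Real.exp (-((t-s)*a))) ^ 2 with hK₁def
      have hK₁0 : 0 ≤ K₁ := by rw [hK₁def]; positivity
      have hreal : K₁ * (1/(2*a)) ≤ g kl * (t-s)^(2*γ) := by
        have hx : 0 ≤ (t-s)*a := mul_nonneg hts0 ha0.le
        have h1 : (1 - Real.exp (-((t-s)*a))) ^ 2 ≤ ((t-s)*a)^(2*γ) :=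
          aux_one_sub_exp_sq_le hx (by linarith) (by linarith)
        have h2 : ((t-s)*a)^(2*γ) = (t-s)^(2*γ) * a^(2*γ) := Real.mul_rpow hts0 ha0.le
        have h3 : w^(2*θ) ≤ (3:ℝ)^(2*θ) * a^(2*θ) := by
          calc w^(2*θ) ≤ (3*a)^(2*θ) :=
              Real.rpow_le_rpow (by linarith) (by rw [hadef] at ha1 ⊢; linarith) (by positivity)
            _ = (3:ℝ)^(2*θ) * a^(2*θ) := Real.mul_rpow (by norm_num) ha0.le
        have h4 : a^(2*θ) * a^(2*γ) / a = a^(-α) := by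
          have e : -α = 2*θ + 2*γ - 1 := by rw [hαdef]; ring
          rw [e, Real.rpow_sub ha0, Real.rpow_one, ← Real.rpow_add ha0]
        have h5 : a^(-α) ≤ 3 * ((1+B)^(-p) * (1+Cl)^(-q)) := by
          have hBC : 1 + B + Cl = 2 + a := by rw [hadef, hwBC]; ring
          have h6 : (1+B)^p * (1+Cl)^q ≤ (2+a)^α := by
            have hgm := aux_gm_le hB0 hC0 hp0 hq0
            rw [hpq, hBC] at hgm
            exact hgm
          have h7 : (2+a)^α ≤ 3 * a^α := by
            calc (2+a)^α ≤ (3*a)^α := Real.rpow_le_rpow (by linarith) (by linarith) (by linarith)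
              _ = (3:ℝ)^α * a^α := Real.mul_rpow (by norm_num) ha0.le
              _ ≤ (3:ℝ)^(1:ℝ) * a^α := by
                  exact mul_le_mul_of_nonneg_right
                    (Real.rpow_le_rpow_of_exponent_le (by norm_num) hα1)
                    (Real.rpow_nonneg ha0.le _)
              _ = 3 * a^α := by rw [Real.rpow_one]
          have hP : 0 < (1+B)^p := Real.rpow_pos_of_pos (by linarith) _
          have hQ : 0 < (1+Cl)^q := Real.rpow_pos_of_pos (by linarith) _
          have haα : 0 < a^α := Real.rpow_pos_of_pos ha0 _
          have key2 : (1+B)^p * (1+Cl)^q ≤ 3 * a^α := le_trans h6 h7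
          rw [Real.rpow_neg ha0.le, Real.rpow_neg (by linarith : (0:ℝ) ≤ 1+B),
            Real.rpow_neg (by linarith : (0:ℝ) ≤ 1+Cl)]
          calc (a^α)⁻¹
              ≤ (((1+B)^p * (1+Cl)^q) / 3)⁻¹ := by
                apply inv_anti₀ (by positivity)
                rw [div_le_iff₀ (by norm_num : (0:ℝ) < 3)]
                linarith
            _ = 3 * (((1+B)^p)⁻¹ * ((1+Cl)^q)⁻¹) := by
                ring
        have hK₁le : K₁ ≤ (3:ℝ)^(2*θ) * a^(2*θ) * ((t-s)^(2*γ) * a^(2*γ)) := by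
          rw [hK₁def]
          exact mul_le_mul h3 (h1.trans_eq h2) (sq_nonneg _) (by positivity)
        calc K₁ * (1/(2*a))
            ≤ ((3:ℝ)^(2*θ) * a^(2*θ) * ((t-s)^(2*γ) * a^(2*γ))) * (1/(2*a)) :=
              mul_le_mul_of_nonneg_right hK₁le (by positivity)
          _ ≤ ((3:ℝ)^(2*θ) * a^(2*θ) * ((t-s)^(2*γ) * a^(2*γ))) * (1/a) := by
              apply mul_le_mul_of_nonneg_left _ (by positivity)
              apply div_le_div_of_nonneg_left (by norm_num) ha0
              linarith
          _ = (3:ℝ)^(2*θ) * (t-s)^(2*γ) * (a^(2*θ) * a^(2*γ) / a) := by ring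
          _ = (3:ℝ)^(2*θ) * (t-s)^(2*γ) * a^(-α) := by rw [h4]
          _ ≤ (3:ℝ)^(2*θ) * (t-s)^(2*γ) * (3 * ((1+B)^(-p) * (1+Cl)^(-q))) := by
              apply mul_le_mul_of_nonneg_left h5 (by positivity)
          _ = g kl * (t-s)^(2*γ) := by rw [hgkl, hc₁def]; ring
      calc ∫⁻ u in Set.Ioc 0 s,
            ENNReal.ofReal (w ^ (2*θ)
              * (Real.exp (-((t - u) * a)) - Real.exp (-((s - u) * a))) ^ 2)
          = ∫⁻ u in Set.Ioc 0 s,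
              ENNReal.ofReal K₁ * ENNReal.ofReal (Real.exp (-((s-u)*(2*a)))) :=
            lintegral_congr (fun u => hid u)
        _ = ENNReal.ofReal K₁
            * ∫⁻ u in Set.Ioc 0 s, ENNReal.ofReal (Real.exp (-((s-u)*(2*a)))) :=
            lintegral_const_mul' _ _ ENNReal.ofReal_ne_top
        _ ≤ ENNReal.ofReal K₁ * ENNReal.ofReal (1/(2*a)) :=
            mul_le_mul_right (aux_lint_exp hs (by linarith)) _
        _ = ENNReal.ofReal (K₁ * (1/(2*a))) := (ENNReal.ofReal_mul hK₁0).symm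
        _ ≤ ENNReal.ofReal (g kl * (t-s)^(2*γ)) := ENNReal.ofReal_le_ofReal hreal
  calc (∑' kl : ℤ × ℤ, ∫⁻ u in Set.Ioc 0 s,
          ENNReal.ofReal ((shWeight L kl) ^ (2 * θ)
            * (Real.exp (-((t - u) * (shWeight L kl - 2)))
                - Real.exp (-((s - u) * (shWeight L kl - 2)))) ^ 2))
      ≤ ∑' kl : ℤ × ℤ, ENNReal.ofReal (g kl * (t - s) ^ (2*γ)) :=
        ENNReal.tsum_le_tsum key
    _ = ENNReal.ofReal (∑' kl : ℤ × ℤ, g kl * (t - s) ^ (2*γ)) :=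
        (ENNReal.ofReal_tsum_of_nonneg (fun kl => mul_nonneg (hg0 kl) hD0)
          (hg.mul_right _)).symm
    _ = ENNReal.ofReal ((∑' kl : ℤ × ℤ, g kl) * (t - s) ^ (2*γ)) := by rw [tsum_mul_right]
    _ ≤ ENNReal.ofReal ((∑' kl, g kl + 1) * (t - s) ^ (2*γ)) := by
        apply ENNReal.ofReal_le_ofReal
        apply mul_le_mul_of_nonneg_right _ hD0
        linarith
end

section
/- Let $L > 0$ and $T > 0$, and for $(k,l) \in \mathbb{Z}^2$ set $w_{k,l} = (1-(\pi k/L)^2)^2 + (\pi l/L)^2 + 1$. Then there exists a constant $C = C(T,L) > 0$ such that for all $0 < t \le T$, $\sum_{(k,l)\in\mathbb{Z}^2} \int_0^t e^{-2(t-u)(w_{k,l}-2)}\,du \;\le\; C\, t^{1/4} \;<\; \infty$. In particular the series converges for every $t \in (0,T]$. -/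
open scoped ENNReal

open Real MeasureTheory

/-- Telescoping bound: `∑_{n≥1} 1/(1+bn)² ≤ 1/b`. -/
lemma tele_sum (b : ℝ) (hb : 0 < b) :
    ∑' n : ℕ, ENNReal.ofReal (1 / (1 + b * (n + 1)) ^ 2) ≤ ENNReal.ofReal (1 / b) := by
  set f : ℕ → ℝ := fun m => 1 / (1 + b * m) with hf
  have hpos : ∀ n : ℕ, (0:ℝ) < 1 + b * n := fun n => by positivity
  have key : ∀ n : ℕ, (1:ℝ) / (1 + b * ((n:ℝ) + 1)) ^ 2 ≤ (f n - f (n + 1)) / b := by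
    intro n
    have h1 := hpos n
    have h2 : (0:ℝ) < 1 + b * ((n:ℝ) + 1) := by positivity
    have e : (f n - f (n + 1)) / b = 1 / ((1 + b * n) * (1 + b * ((n:ℝ) + 1))) := by
      simp only [hf]
      push_cast
      field_simp
      ring
    rw [e]
    apply one_div_le_one_div_of_le (by positivity)
    nlinarith
  have hsumle : ∀ N : ℕ, ∑ n ∈ Finset.range N, (1:ℝ) / (1 + b * ((n:ℝ) + 1)) ^ 2 ≤ 1 / b := by
    intro N
    calc ∑ n ∈ Finset.range N, (1:ℝ) / (1 + b * ((n:ℝ) + 1)) ^ 2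
        ≤ ∑ n ∈ Finset.range N, (f n - f (n + 1)) / b :=
          Finset.sum_le_sum fun n _ => key n
      _ = (∑ n ∈ Finset.range N, (f n - f (n + 1))) / b := by rw [Finset.sum_div]
      _ = (f 0 - f N) / b := by rw [Finset.sum_range_sub']
      _ ≤ 1 / b := by
          have hfN : 0 ≤ f N := by positivity
          have hf0 : f 0 = 1 := by simp [hf]
          gcongr
          linarith
  have hnn : ∀ n : ℕ, (0:ℝ) ≤ 1 / (1 + b * ((n:ℝ) + 1)) ^ 2 := fun n => by positivity
  have hsummable : Summable (fun n : ℕ => (1:ℝ) / (1 + b * ((n:ℝ) + 1)) ^ 2) :=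
    summable_of_sum_range_le hnn hsumle
  rw [← ENNReal.ofReal_tsum_of_nonneg hnn hsummable]
  exact ENNReal.ofReal_le_ofReal (tsum_le_of_sum_range_le hnn hsumle)

lemma tsum_int_split (F : ℤ → ℝ≥0∞) :
    ∑' l : ℤ, F l = F 0 + ((∑' n : ℕ, F ((n:ℤ) + 1)) + ∑' n : ℕ, F (-((n:ℤ) + 1))) := by
  have h1 : HasSum (Int.rec (fun n : ℕ => F n) (fun n : ℕ => F (-((n:ℤ) + 1))))
      ((∑' n : ℕ, F (n:ℤ)) + ∑' n : ℕ, F (-((n:ℤ) + 1))) :=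
    HasSum.int_rec ENNReal.summable.hasSum ENNReal.summable.hasSum
  have h2 : (Int.rec (fun n : ℕ => F n) (fun n : ℕ => F (-((n:ℤ) + 1))) : ℤ → ℝ≥0∞) = F := by
    funext l
    cases l with
    | ofNat n => rfl
    | negSucc n => show F (-((n:ℤ)+1)) = _ ; rw [← Int.negSucc_eq]
  rw [h2] at h1
  have h4 : ∑' (n:ℕ), F ↑n = F 0 + ∑' (n:ℕ), F ((n:ℤ)+1) := by
    rw [tsum_eq_zero_add' ENNReal.summable]
    norm_num
  rw [h1.tsum_eq, h4, add_assoc]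

/-- Half-line sum bound from the telescoping lemma. -/
lemma half_sum_le {g : ℕ → ℝ} {b c : ℝ} (hb : 0 < b) (hc : 0 ≤ c)
    (hg : ∀ n : ℕ, g n ≤ c * (1 / (1 + b * ((n:ℝ) + 1)) ^ 2)) :
    ∑' n : ℕ, ENNReal.ofReal (g n) ≤ ENNReal.ofReal (c / b) := by
  calc ∑' n : ℕ, ENNReal.ofReal (g n)
      ≤ ∑' n : ℕ, ENNReal.ofReal (c * (1 / (1 + b * ((n:ℝ) + 1)) ^ 2)) :=
        ENNReal.tsum_le_tsum fun n => ENNReal.ofReal_le_ofReal (hg n)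
    _ = ∑' n : ℕ, ENNReal.ofReal c * ENNReal.ofReal (1 / (1 + b * ((n:ℝ) + 1)) ^ 2) :=
        tsum_congr fun n => ENNReal.ofReal_mul hc
    _ = ENNReal.ofReal c * ∑' n : ℕ, ENNReal.ofReal (1 / (1 + b * ((n:ℝ) + 1)) ^ 2) :=
        ENNReal.tsum_mul_left
    _ ≤ ENNReal.ofReal c * ENNReal.ofReal (1 / b) := mul_le_mul_right (tele_sum b hb) _
    _ = ENNReal.ofReal (c / b) := by rw [← ENNReal.ofReal_mul hc, mul_one_div]

lemma zsq_bound (a : ℝ) (ha : 0 < a) :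
    ∑' l : ℤ, ENNReal.ofReal (1 / (1 + a * (l:ℝ) ^ 2))
      ≤ ENNReal.ofReal (1 + 4 / Real.sqrt a) := by
  have hs : 0 < Real.sqrt a := Real.sqrt_pos.mpr ha
  have hsq : Real.sqrt a ^ 2 = a := Real.sq_sqrt ha.le
  have hpt : ∀ x : ℝ, 0 ≤ x →
      1 / (1 + a * x ^ 2) ≤ 2 * (1 / (1 + Real.sqrt a * x) ^ 2) := by
    intro x hx
    rw [mul_one_div, div_le_div_iff₀ (by positivity) (by positivity)]
    nlinarith [sq_nonneg (1 - Real.sqrt a * x), hs.le, mul_nonneg hs.le hx]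
  rw [tsum_int_split (fun l : ℤ => ENNReal.ofReal (1 / (1 + a * (l:ℝ) ^ 2)))]
  have h1 : ∑' n : ℕ, ENNReal.ofReal (1 / (1 + a * (((n:ℤ) + 1 : ℤ):ℝ) ^ 2))
      ≤ ENNReal.ofReal (2 / Real.sqrt a) := by
    apply half_sum_le hs (by norm_num)
    intro n; push_cast; exact hpt _ (by positivity)
  have h2 : ∑' n : ℕ, ENNReal.ofReal (1 / (1 + a * ((-((n:ℤ) + 1) : ℤ):ℝ) ^ 2))
      ≤ ENNReal.ofReal (2 / Real.sqrt a) := by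
    apply half_sum_le hs (by norm_num)
    intro n; push_cast
    rw [neg_sq]
    exact hpt _ (by positivity)
  calc ENNReal.ofReal (1 / (1 + a * ((0:ℤ):ℝ) ^ 2))
        + ((∑' n : ℕ, ENNReal.ofReal (1 / (1 + a * (((n:ℤ) + 1 : ℤ):ℝ) ^ 2)))
          + ∑' n : ℕ, ENNReal.ofReal (1 / (1 + a * ((-((n:ℤ) + 1) : ℤ):ℝ) ^ 2)))
      ≤ ENNReal.ofReal 1 + (ENNReal.ofReal (2 / Real.sqrt a) + ENNReal.ofReal (2 / Real.sqrt a)) := by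
        apply add_le_add _ (add_le_add h1 h2)
        apply ENNReal.ofReal_le_ofReal; norm_num
    _ = ENNReal.ofReal (1 + 4 / Real.sqrt a) := by
        rw [← ENNReal.ofReal_add (by positivity) (by positivity),
          ← ENNReal.ofReal_add (by norm_num) (by positivity)]
        ring_nf

lemma zquart_sqrt_bound (a : ℝ) (ha : 0 < a) :
    ∑' l : ℤ, ENNReal.ofReal (1 / Real.sqrt (1 + a * (l:ℝ) ^ 4))
      ≤ ENNReal.ofReal (1 + 6 / Real.sqrt (Real.sqrt a)) := by
  set s := Real.sqrt (Real.sqrt a) with hsdef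
  have hs : 0 < s := Real.sqrt_pos.mpr (Real.sqrt_pos.mpr ha)
  have hs2 : s ^ 2 = Real.sqrt a := Real.sq_sqrt (Real.sqrt_nonneg a)
  have hs4 : (s ^ 2) ^ 2 = a := by rw [hs2]; exact Real.sq_sqrt ha.le
  have hpt : ∀ x : ℝ, 0 ≤ x →
      1 / Real.sqrt (1 + a * x ^ 4) ≤ 3 * (1 / (1 + s * x) ^ 2) := by
    intro x hx
    have hsx : 0 ≤ s * x := mul_nonneg hs.le hx
    have hq : (0:ℝ) < 1 + a * x ^ 4 := by positivity
    have h1 : (1 + s * x) ^ 2 ≤ 2 * (1 + s ^ 2 * x ^ 2) := by nlinarith [sq_nonneg (1 - s * x)]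
    have h2 : (1 + s ^ 2 * x ^ 2) ^ 2 ≤ 2 * (1 + a * x ^ 4) := by
      nlinarith [sq_nonneg (1 - s ^ 2 * x ^ 2), hs4]
    have h3 : 1 + s ^ 2 * x ^ 2 ≤ Real.sqrt 2 * Real.sqrt (1 + a * x ^ 4) := by
      rw [← Real.sqrt_mul (by norm_num)]
      have := Real.sqrt_le_sqrt h2
      rwa [Real.sqrt_sq (by positivity)] at this
    have hsqrt2 : Real.sqrt 2 ≤ 1.5 := by
      rw [show (1.5:ℝ) = Real.sqrt (1.5 ^ 2) from (Real.sqrt_sq (by norm_num)).symm]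
      apply Real.sqrt_le_sqrt; norm_num
    have h4 : (1 + s * x) ^ 2 ≤ 3 * Real.sqrt (1 + a * x ^ 4) := by
      have hsq : 0 ≤ Real.sqrt (1 + a * x ^ 4) := Real.sqrt_nonneg _
      nlinarith
    rw [mul_one_div, div_le_div_iff₀ (Real.sqrt_pos.mpr hq) (by positivity)]
    nlinarith
  rw [tsum_int_split (fun l : ℤ => ENNReal.ofReal (1 / Real.sqrt (1 + a * (l:ℝ) ^ 4)))]
  have h1 : ∑' n : ℕ, ENNReal.ofReal (1 / Real.sqrt (1 + a * (((n:ℤ) + 1 : ℤ):ℝ) ^ 4))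
      ≤ ENNReal.ofReal (3 / s) := by
    apply half_sum_le hs (by norm_num)
    intro n; push_cast; exact hpt _ (by positivity)
  have h2 : ∑' n : ℕ, ENNReal.ofReal (1 / Real.sqrt (1 + a * ((-((n:ℤ) + 1) : ℤ):ℝ) ^ 4))
      ≤ ENNReal.ofReal (3 / s) := by
    apply half_sum_le hs (by norm_num)
    intro n; push_cast
    rw [show (-((n:ℝ) + 1)) ^ 4 = ((n:ℝ) + 1) ^ 4 by ring]
    exact hpt _ (by positivity)
  calc ENNReal.ofReal (1 / Real.sqrt (1 + a * ((0:ℤ):ℝ) ^ 4))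
        + ((∑' n : ℕ, ENNReal.ofReal (1 / Real.sqrt (1 + a * (((n:ℤ) + 1 : ℤ):ℝ) ^ 4)))
          + ∑' n : ℕ, ENNReal.ofReal (1 / Real.sqrt (1 + a * ((-((n:ℤ) + 1) : ℤ):ℝ) ^ 4)))
      ≤ ENNReal.ofReal 1 + (ENNReal.ofReal (3 / s) + ENNReal.ofReal (3 / s)) := by
        apply add_le_add _ (add_le_add h1 h2)
        apply ENNReal.ofReal_le_ofReal
        norm_num [Real.sqrt_one]
    _ = ENNReal.ofReal (1 + 6 / s) := by
        rw [← ENNReal.ofReal_add (by positivity) (by positivity),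
          ← ENNReal.ofReal_add (by norm_num) (by positivity)]
        ring_nf

lemma zquart_bound (a : ℝ) (ha : 0 < a) :
    ∑' l : ℤ, ENNReal.ofReal (1 / (1 + a * (l:ℝ) ^ 4))
      ≤ ENNReal.ofReal (1 + 6 / Real.sqrt (Real.sqrt a)) := by
  refine le_trans (ENNReal.tsum_le_tsum fun l => ENNReal.ofReal_le_ofReal ?_)
    (zquart_sqrt_bound a ha)
  have h1 : (0:ℝ) < 1 + a * (l:ℝ) ^ 4 := by positivity
  have h2 : Real.sqrt (1 + a * (l:ℝ) ^ 4) ≤ 1 + a * (l:ℝ) ^ 4 := by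
    nlinarith [Real.sq_sqrt h1.le, Real.sqrt_nonneg (1 + a * (l:ℝ) ^ 4),
      mul_nonneg ha.le (by positivity : (0:ℝ) ≤ (l:ℝ) ^ 4)]
  apply one_div_le_one_div_of_le (Real.sqrt_pos.mpr h1) h2

lemma exp_int_le (c t : ℝ) (hc : 0 < c) (ht : 0 < t) :
    ∫⁻ u in Set.Ioc 0 t, ENNReal.ofReal (Real.exp (-(c * (t - u))))
      ≤ ENNReal.ofReal (min t (1 / c)) := by
  have hmin : ENNReal.ofReal (min t (1/c))
      = min (ENNReal.ofReal t) (ENNReal.ofReal (1/c)) :=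
    Monotone.map_min (fun _ _ h => ENNReal.ofReal_le_ofReal h)
  rw [hmin, le_min_iff]
  constructor
  · calc ∫⁻ u in Set.Ioc 0 t, ENNReal.ofReal (Real.exp (-(c * (t - u))))
        ≤ ∫⁻ _ in Set.Ioc 0 t, 1 := by
          apply MeasureTheory.setLIntegral_mono measurable_const
          intro u hu
          rw [ENNReal.ofReal_le_one, Real.exp_le_one_iff]
          have := hu.2
          nlinarith [hc]
      _ = ENNReal.ofReal t := by
          rw [MeasureTheory.setLIntegral_one, Real.volume_Ioc, sub_zero]
  · have hcont : Continuous fun u : ℝ => Real.exp (-(c * (t - u))) := by fun_prop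
    have hint : MeasureTheory.IntegrableOn (fun u => Real.exp (-(c * (t - u))))
        (Set.Ioc 0 t) := hcont.integrableOn_Ioc
    rw [← MeasureTheory.ofReal_integral_eq_lintegral_ofReal hint
      (Filter.Eventually.of_forall fun u => (Real.exp_pos _).le)]
    apply ENNReal.ofReal_le_ofReal
    rw [← intervalIntegral.integral_of_le ht.le]
    have hrw : ∀ u : ℝ, Real.exp (-(c * (t - u)))
        = Real.exp (c * u) * Real.exp (-(c * t)) := by
      intro u; rw [← Real.exp_add]; ring_nf
    rw [intervalIntegral.integral_congr (fun u _ => hrw u),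
      intervalIntegral.integral_mul_const,
      intervalIntegral.integral_comp_mul_left Real.exp hc.ne']
    simp only [mul_zero, integral_exp, Real.exp_zero, smul_eq_mul]
    have he1 : Real.exp (-(c * t)) * Real.exp (c * t) = 1 := by
      rw [← Real.exp_add]; simp
    have he2 : 0 < Real.exp (-(c * t)) := Real.exp_pos _
    have he3 : 0 < Real.exp (c * t) := Real.exp_pos _
    rw [one_div]
    calc c⁻¹ * (Real.exp (c * t) - 1) * Real.exp (-(c * t))
        = c⁻¹ * (1 - Real.exp (-(c * t))) := by linear_combination c⁻¹ * he1
      _ ≤ c⁻¹ * 1 := by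
          apply mul_le_mul_of_nonneg_left _ (inv_nonneg.mpr hc.le)
          linarith
      _ = c⁻¹ := mul_one _

lemma term_bound (T w t : ℝ) (hw : 1 ≤ w) (ht : 0 < t) (htT : t ≤ T) :
    ∫⁻ u in Set.Ioc 0 t, ENNReal.ofReal (Real.exp (-(2 * (t - u) * (w - 2))))
      ≤ ENNReal.ofReal (Real.exp (4 * T) * (2 * t / (1 + t * w))) := by
  have hw0 : 0 < w := lt_of_lt_of_le one_pos hw
  have step1 : ∫⁻ u in Set.Ioc 0 t, ENNReal.ofReal (Real.exp (-(2 * (t - u) * (w - 2))))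
      ≤ ∫⁻ u in Set.Ioc 0 t,
          ENNReal.ofReal (Real.exp (4 * T)) * ENNReal.ofReal (Real.exp (-(2 * w * (t - u)))) := by
    apply MeasureTheory.setLIntegral_mono
    · apply Measurable.const_mul
      apply Measurable.ennreal_ofReal
      fun_prop
    · intro u hu
      rw [← ENNReal.ofReal_mul (Real.exp_pos _).le, ← Real.exp_add]
      apply ENNReal.ofReal_le_ofReal
      apply Real.exp_le_exp.mpr
      have h1 : 0 ≤ t - u := by linarith [hu.2]
      have h2 : t - u ≤ T := by linarith [hu.1]
      have key : -(2 * (t - u) * (w - 2)) = 4 * (t - u) + -(2 * w * (t - u)) := by ring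
      rw [key]
      linarith
  have step2 : ∫⁻ u in Set.Ioc 0 t,
      ENNReal.ofReal (Real.exp (4 * T)) * ENNReal.ofReal (Real.exp (-(2 * w * (t - u))))
      = ENNReal.ofReal (Real.exp (4 * T))
        * ∫⁻ u in Set.Ioc 0 t, ENNReal.ofReal (Real.exp (-(2 * w * (t - u)))) := by
    apply MeasureTheory.lintegral_const_mul'
    exact ENNReal.ofReal_ne_top
  have step3 : ∫⁻ u in Set.Ioc 0 t, ENNReal.ofReal (Real.exp (-(2 * w * (t - u))))
      ≤ ENNReal.ofReal (min t (1 / (2 * w))) := exp_int_le (2 * w) t (by positivity) ht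
  have step4 : min t (1 / (2 * w)) ≤ 2 * t / (1 + t * w) := by
    rcases le_total (t * w) 1 with h | h
    · apply le_trans (min_le_left _ _)
      rw [le_div_iff₀ (by positivity)]
      nlinarith
    · apply le_trans (min_le_right _ _)
      rw [div_le_div_iff₀ (by positivity) (by positivity)]
      nlinarith
  calc ∫⁻ u in Set.Ioc 0 t, ENNReal.ofReal (Real.exp (-(2 * (t - u) * (w - 2))))
      ≤ ENNReal.ofReal (Real.exp (4 * T))
        * ∫⁻ u in Set.Ioc 0 t, ENNReal.ofReal (Real.exp (-(2 * w * (t - u)))) := by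
        rw [← step2]; exact step1
    _ ≤ ENNReal.ofReal (Real.exp (4 * T)) * ENNReal.ofReal (min t (1 / (2 * w))) :=
        mul_le_mul_right step3 _
    _ ≤ ENNReal.ofReal (Real.exp (4 * T)) * ENNReal.ofReal (2 * t / (1 + t * w)) :=
        mul_le_mul_right (ENNReal.ofReal_le_ofReal step4) _
    _ = ENNReal.ofReal (Real.exp (4 * T) * (2 * t / (1 + t * w))) :=
        (ENNReal.ofReal_mul (Real.exp_pos _).le).symm

lemma aux_real (t β A G : ℝ) (ht : 0 < t) (hβ : 0 < β) (hA : 0 < A) (hG : 0 < G)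
    (hGA : G ≤ A) :
    (t / A) * (1 + 4 / Real.sqrt (t * β / A))
      ≤ t * (1 / G) + (4 * Real.sqrt t / Real.sqrt β) * (1 / Real.sqrt G) := by
  have hsG : Real.sqrt G ≤ Real.sqrt A := Real.sqrt_le_sqrt hGA
  have hsGpos : 0 < Real.sqrt G := Real.sqrt_pos.mpr hG
  obtain ⟨sa, hsa, rfl⟩ : ∃ x, 0 < x ∧ A = x ^ 2 :=
    ⟨Real.sqrt A, Real.sqrt_pos.mpr hA, (Real.sq_sqrt hA.le).symm⟩
  obtain ⟨st, hst, rfl⟩ : ∃ x, 0 < x ∧ t = x ^ 2 :=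
    ⟨Real.sqrt t, Real.sqrt_pos.mpr ht, (Real.sq_sqrt ht.le).symm⟩
  obtain ⟨sb, hsb, rfl⟩ : ∃ x, 0 < x ∧ β = x ^ 2 :=
    ⟨Real.sqrt β, Real.sqrt_pos.mpr hβ, (Real.sq_sqrt hβ.le).symm⟩
  rw [Real.sqrt_sq hsa.le] at hsG
  have h1 : Real.sqrt (st ^ 2 * sb ^ 2 / sa ^ 2) = st * sb / sa := by
    rw [show st ^ 2 * sb ^ 2 / sa ^ 2 = (st * sb / sa) ^ 2 by ring,
      Real.sqrt_sq (by positivity)]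
  rw [h1, Real.sqrt_sq hst.le, Real.sqrt_sq hsb.le]
  have h2 : (st ^ 2 / sa ^ 2) * (1 + 4 / (st * sb / sa))
      = st ^ 2 / sa ^ 2 + (4 * st / sb) * (1 / sa) := by
    field_simp
  rw [h2]
  apply add_le_add
  · rw [mul_one_div]
    gcongr
  · gcongr

lemma main_sum (β t : ℝ) (hβ : 0 < β) (ht : 0 < t) :
    ∑' kl : ℤ × ℤ, ENNReal.ofReal
        (t / (1 + t * ((1 - β * (kl.1:ℝ) ^ 2) ^ 2 + β * (kl.2:ℝ) ^ 2 + 1)))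
      ≤ ENNReal.ofReal ((t + 4 * Real.sqrt t / Real.sqrt β)
          * (1 + 6 / Real.sqrt (Real.sqrt (β ^ 2 * t / 2)))) := by
  have ha : 0 < β ^ 2 * t / 2 := by positivity
  set M := 1 + 6 / Real.sqrt (Real.sqrt (β ^ 2 * t / 2)) with hMdef
  have hM : 0 ≤ M := by positivity
  rw [ENNReal.tsum_prod']
  have inner : ∀ k : ℤ,
      (∑' l : ℤ, ENNReal.ofReal
        (t / (1 + t * ((1 - β * (k:ℝ) ^ 2) ^ 2 + β * (l:ℝ) ^ 2 + 1))))
      ≤ ENNReal.ofReal t * ENNReal.ofReal (1 / (1 + (β ^ 2 * t / 2) * (k:ℝ) ^ 4))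
        + ENNReal.ofReal (4 * Real.sqrt t / Real.sqrt β)
          * ENNReal.ofReal (1 / Real.sqrt (1 + (β ^ 2 * t / 2) * (k:ℝ) ^ 4)) := by
    intro k
    set A := 1 + t + t * (1 - β * (k:ℝ) ^ 2) ^ 2 with hAdef
    have hA : 0 < A := by positivity
    set G := 1 + (β ^ 2 * t / 2) * (k:ℝ) ^ 4 with hGdef
    have hG : 0 < G := by positivity
    have hGA : G ≤ A := by
      rw [hAdef, hGdef]
      nlinarith [mul_nonneg ht.le (sq_nonneg (β * (k:ℝ) ^ 2 - 2))]
    have key : ∀ l : ℤ, t / (1 + t * ((1 - β * (k:ℝ) ^ 2) ^ 2 + β * (l:ℝ) ^ 2 + 1))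
        = (t / A) * (1 / (1 + (t * β / A) * (l:ℝ) ^ 2)) := by
      intro l
      have hA' : (1 + t + t * (1 - β * (k:ℝ) ^ 2) ^ 2) ≠ 0 := by positivity
      rw [div_mul_div_comm, mul_one, div_eq_div_iff (by positivity) (by positivity)]
      field_simp [hAdef, hA']
      rw [hAdef]
      ring
    calc (∑' l : ℤ, ENNReal.ofReal
          (t / (1 + t * ((1 - β * (k:ℝ) ^ 2) ^ 2 + β * (l:ℝ) ^ 2 + 1))))
        = ∑' l : ℤ, ENNReal.ofReal (t / A)
            * ENNReal.ofReal (1 / (1 + (t * β / A) * (l:ℝ) ^ 2)) :=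
          tsum_congr fun l => by rw [key l, ENNReal.ofReal_mul (by positivity)]
      _ = ENNReal.ofReal (t / A)
            * ∑' l : ℤ, ENNReal.ofReal (1 / (1 + (t * β / A) * (l:ℝ) ^ 2)) :=
          ENNReal.tsum_mul_left
      _ ≤ ENNReal.ofReal (t / A) * ENNReal.ofReal (1 + 4 / Real.sqrt (t * β / A)) :=
          mul_le_mul_right (zsq_bound _ (by positivity)) _
      _ = ENNReal.ofReal ((t / A) * (1 + 4 / Real.sqrt (t * β / A))) :=
          (ENNReal.ofReal_mul (by positivity)).symm
      _ ≤ ENNReal.ofReal (t * (1 / G)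
            + (4 * Real.sqrt t / Real.sqrt β) * (1 / Real.sqrt G)) :=
          ENNReal.ofReal_le_ofReal (aux_real t β A G ht hβ hA hG hGA)
      _ = ENNReal.ofReal t * ENNReal.ofReal (1 / G)
            + ENNReal.ofReal (4 * Real.sqrt t / Real.sqrt β)
              * ENNReal.ofReal (1 / Real.sqrt G) := by
          rw [ENNReal.ofReal_add (by positivity) (by positivity),
            ENNReal.ofReal_mul ht.le, ENNReal.ofReal_mul (by positivity)]
  calc (∑' k : ℤ, ∑' l : ℤ, ENNReal.ofReal
        (t / (1 + t * ((1 - β * (k:ℝ) ^ 2) ^ 2 + β * (l:ℝ) ^ 2 + 1))))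
      ≤ ∑' k : ℤ, (ENNReal.ofReal t
            * ENNReal.ofReal (1 / (1 + (β ^ 2 * t / 2) * (k:ℝ) ^ 4))
          + ENNReal.ofReal (4 * Real.sqrt t / Real.sqrt β)
            * ENNReal.ofReal (1 / Real.sqrt (1 + (β ^ 2 * t / 2) * (k:ℝ) ^ 4))) :=
        ENNReal.tsum_le_tsum inner
    _ = ENNReal.ofReal t
          * (∑' k : ℤ, ENNReal.ofReal (1 / (1 + (β ^ 2 * t / 2) * (k:ℝ) ^ 4)))
        + ENNReal.ofReal (4 * Real.sqrt t / Real.sqrt β)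
          * ∑' k : ℤ, ENNReal.ofReal (1 / Real.sqrt (1 + (β ^ 2 * t / 2) * (k:ℝ) ^ 4)) := by
        rw [ENNReal.tsum_add, ENNReal.tsum_mul_left, ENNReal.tsum_mul_left]
    _ ≤ ENNReal.ofReal t * ENNReal.ofReal M
        + ENNReal.ofReal (4 * Real.sqrt t / Real.sqrt β) * ENNReal.ofReal M :=
        add_le_add (mul_le_mul_right (zquart_bound _ ha) _)
          (mul_le_mul_right (zquart_sqrt_bound _ ha) _)
    _ = ENNReal.ofReal ((t + 4 * Real.sqrt t / Real.sqrt β) * M) := by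
        rw [← ENNReal.ofReal_mul ht.le, ← ENNReal.ofReal_mul (by positivity),
          ← ENNReal.ofReal_add (by positivity) (by positivity)]
        congr 1
        ring

set_option maxHeartbeats 1000000 in
/-- The variance of the stochastic convolution is finite: there is `C = C(T,L) > 0` with
`∑_{(k,l)∈ℤ²} ∫_0^t e^{-2(t-u)(w_{k,l}-2)} du ≤ C t^{1/4} < ∞` for all `0 < t ≤ T`. -/
theorem stmt_8 (L T : ℝ) (hL : 0 < L) (hT : 0 < T) :
    ∃ C > (0:ℝ), ∀ t : ℝ, 0 < t → t ≤ T →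
      (∑' kl : ℤ × ℤ, ∫⁻ u in Set.Ioc 0 t,
          ENNReal.ofReal (Real.exp (-(2 * (t - u) * (shWeight L kl - 2)))))
        ≤ ENNReal.ofReal (C * t ^ ((1:ℝ)/4)) ∧
      (∑' kl : ℤ × ℤ, ∫⁻ u in Set.Ioc 0 t,
          ENNReal.ofReal (Real.exp (-(2 * (t - u) * (shWeight L kl - 2))))) < ⊤ := by
  set β := (Real.pi / L) ^ 2 with hβdef
  have hβ : 0 < β := by positivity
  set sb := Real.sqrt β with hsbdef
  have hsb : 0 < sb := Real.sqrt_pos.mpr hβ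
  set d := Real.sqrt (Real.sqrt (β ^ 2 / 2)) with hddef
  have hd : 0 < d := by positivity
  set Q := Real.sqrt (Real.sqrt T) with hQdef
  have hQ : 0 < Q := by positivity
  set C₃ := Q ^ 3 + (6 / d) * Q ^ 2 + (4 / sb) * Q + 24 / (d * sb) with hC3
  have hC3pos : 0 < C₃ := by positivity
  have hCpos : 0 < 2 * Real.exp (4 * T) * C₃ := by positivity
  refine ⟨2 * Real.exp (4 * T) * C₃, hCpos, ?_⟩
  intro t ht htT
  set q := Real.sqrt (Real.sqrt t) with hqdef
  have hq : 0 < q := by positivity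
  have hq2 : q ^ 2 = Real.sqrt t := Real.sq_sqrt (Real.sqrt_nonneg t)
  have hq4 : q ^ 4 = t := by
    rw [show q ^ 4 = (q ^ 2) ^ 2 by ring, hq2]; exact Real.sq_sqrt ht.le
  have hqQ : q ≤ Q := Real.sqrt_le_sqrt (Real.sqrt_le_sqrt htT)
  have hsplit : Real.sqrt (Real.sqrt (β ^ 2 * t / 2)) = d * q := by
    rw [hddef, hqdef, show β ^ 2 * t / 2 = (β ^ 2 / 2) * t by ring,
      Real.sqrt_mul (by positivity), Real.sqrt_mul (Real.sqrt_nonneg _)]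
  have hreal : (t + 4 * Real.sqrt t / sb) * (1 + 6 / Real.sqrt (Real.sqrt (β ^ 2 * t / 2)))
      ≤ C₃ * q := by
    rw [hsplit, ← hq2, ← hq4]
    have b1 : q ^ 4 ≤ Q ^ 3 * q := by nlinarith [pow_le_pow_left₀ hq.le hqQ 3, hq.le]
    have b2 : q ^ 3 ≤ Q ^ 2 * q := by nlinarith [pow_le_pow_left₀ hq.le hqQ 2, hq.le]
    have b3 : q ^ 2 ≤ Q * q := by nlinarith [hqQ, hq.le]
    have expand : (q ^ 4 + 4 * q ^ 2 / sb) * (1 + 6 / (d * q))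
        = q ^ 4 + (6 / d) * q ^ 3 + (4 / sb) * q ^ 2 + (24 / (d * sb)) * q := by
      field_simp
      ring
    calc (q ^ 4 + 4 * q ^ 2 / sb) * (1 + 6 / (d * q))
        = q ^ 4 + (6 / d) * q ^ 3 + (4 / sb) * q ^ 2 + (24 / (d * sb)) * q := expand
      _ ≤ Q ^ 3 * q + (6 / d) * (Q ^ 2 * q) + (4 / sb) * (Q * q) + (24 / (d * sb)) * q := by
          have c1 := mul_le_mul_of_nonneg_left b2 (by positivity : (0:ℝ) ≤ 6 / d)
          have c2 := mul_le_mul_of_nonneg_left b3 (by positivity : (0:ℝ) ≤ 4 / sb)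
          linarith
      _ = C₃ * q := by rw [hC3]; ring
  have hW : ∀ kl : ℤ × ℤ, shWeight L kl
      = (1 - β * (kl.1:ℝ) ^ 2) ^ 2 + β * (kl.2:ℝ) ^ 2 + 1 := by
    intro kl; unfold shWeight; rw [hβdef]; ring
  have hw1 : ∀ kl : ℤ × ℤ, 1 ≤ shWeight L kl := by
    intro kl
    rw [hW kl]
    have h1 := sq_nonneg (1 - β * (kl.1:ℝ) ^ 2)
    have h2 := mul_nonneg hβ.le (sq_nonneg ((kl.2:ℝ)))
    linarith
  have hq14 : q = t ^ ((1:ℝ)/4) := by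
    rw [hqdef, Real.sqrt_eq_rpow, Real.sqrt_eq_rpow, ← Real.rpow_mul ht.le]
    norm_num
  have main : (∑' kl : ℤ × ℤ, ∫⁻ u in Set.Ioc 0 t,
      ENNReal.ofReal (Real.exp (-(2 * (t - u) * (shWeight L kl - 2)))))
      ≤ ENNReal.ofReal (2 * Real.exp (4 * T) * C₃ * t ^ ((1:ℝ)/4)) := by
    calc (∑' kl : ℤ × ℤ, ∫⁻ u in Set.Ioc 0 t,
        ENNReal.ofReal (Real.exp (-(2 * (t - u) * (shWeight L kl - 2)))))
        ≤ ∑' kl : ℤ × ℤ, ENNReal.ofReal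
            (Real.exp (4 * T) * (2 * t / (1 + t * shWeight L kl))) :=
          ENNReal.tsum_le_tsum fun kl => term_bound T _ t (hw1 kl) ht htT
      _ = ∑' kl : ℤ × ℤ, ENNReal.ofReal (2 * Real.exp (4 * T))
            * ENNReal.ofReal (t / (1 + t * ((1 - β * (kl.1:ℝ) ^ 2) ^ 2 + β * (kl.2:ℝ) ^ 2 + 1))) :=
          tsum_congr fun kl => by
            rw [hW kl, ← ENNReal.ofReal_mul (by positivity)]
            congr 1
            ring
      _ = ENNReal.ofReal (2 * Real.exp (4 * T))
            * ∑' kl : ℤ × ℤ, ENNReal.ofReal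
              (t / (1 + t * ((1 - β * (kl.1:ℝ) ^ 2) ^ 2 + β * (kl.2:ℝ) ^ 2 + 1))) :=
          ENNReal.tsum_mul_left
      _ ≤ ENNReal.ofReal (2 * Real.exp (4 * T))
            * ENNReal.ofReal ((t + 4 * Real.sqrt t / sb)
              * (1 + 6 / Real.sqrt (Real.sqrt (β ^ 2 * t / 2)))) :=
          mul_le_mul_right (main_sum β t hβ ht) _
      _ ≤ ENNReal.ofReal (2 * Real.exp (4 * T)) * ENNReal.ofReal (C₃ * q) :=
          mul_le_mul_right (ENNReal.ofReal_le_ofReal hreal) _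
      _ = ENNReal.ofReal (2 * Real.exp (4 * T) * C₃ * t ^ ((1:ℝ)/4)) := by
          rw [← ENNReal.ofReal_mul (by positivity), hq14]
          congr 1
          ring
  exact ⟨main, lt_of_le_of_lt main ENNReal.ofReal_lt_top⟩
end
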